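/- arXiv:1407.0548 — 7 statements merged into one kernel-verified Lean document; each statement's English description precedes it below -/
import Mathlib

section
/- Let G be a finite abelian group with |G| ≥ 3 and let U be a minimal zero-sum sequence over G of length equal to the Davenport constant D(G). If g₁, g₂ are elements of the support of U, then g₁ ≠ 2g₂. -/
open Multiset

/-- A minimal zero-sum sequence over `G`: a nonempty zero-sum sequence with no
proper nonempty zero-sum subsequence. -/
def IsMinZeroSum {G : Type*} [AddCommGroup G] (S : Multiset G) : Prop :=
  S ≠ 0 ∧ S.sum = 0 ∧ ∀ T : Multiset G, T ≤ S → T ≠ 0 → T ≠ S → T.sum ≠ 0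

/-- The Davenport constant of `G`: the maximal length of a minimal zero-sum
sequence over `G`. -/
noncomputable def DavenportConstant (G : Type*) [AddCommGroup G] : ℕ :=
  sSup {n : ℕ | ∃ S : Multiset G, IsMinZeroSum S ∧ Multiset.card S = n}

/-- The set of lengths of a zero-sum sequence `A`: the set of all `k` such that
`A` can be written as a product of `k` minimal zero-sum sequences. -/
def LengthsSet {G : Type*} [AddCommGroup G] (A : Multiset G) : Set ℕ :=
  {k : ℕ | ∃ f : Multiset (Multiset G), Multiset.card f = k ∧
    (∀ S ∈ f, IsMinZeroSum S) ∧ f.sum = A}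

/-- A factorization of a zero-sum sequence `A` into minimal zero-sum sequences. -/
def IsFactorization {G : Type*} [AddCommGroup G] (A : Multiset G)
    (z : Multiset (Multiset G)) : Prop :=
  (∀ S ∈ z, IsMinZeroSum S) ∧ z.sum = A

/-- The distance between two factorizations. -/
def factDist {G : Type*} [AddCommGroup G] [DecidableEq G]
    (z z' : Multiset (Multiset G)) : ℕ :=
  max (Multiset.card (z - z')) (Multiset.card (z' - z))

/-- The catenary degree of the monoid of zero-sum sequences over `G`: the smallest
`N` such that any two factorizations of an element can be connected by a chain of
factorizations in which consecutive members have distance at most `N`. -/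
noncomputable def CatenaryDegree (G : Type*) [AddCommGroup G] [DecidableEq G] : ℕ :=
  sInf {N : ℕ | ∀ (A : Multiset G) (z z' : Multiset (Multiset G)),
    IsFactorization A z → IsFactorization A z' →
    Relation.ReflTransGen (fun x y => IsFactorization A y ∧ factDist x y ≤ N) z z'}

/-- The invariant `ℸ(G) = sup { min (L \ {2}) : 2 ∈ L ∈ 𝓛(G) }`. -/
noncomputable def Daleth (G : Type*) [AddCommGroup G] : ℕ :=
  sSup {m : ℕ | ∃ A : Multiset G, A.sum = 0 ∧ 2 ∈ LengthsSet A ∧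
    (LengthsSet A \ {2}).Nonempty ∧ m = sInf (LengthsSet A \ {2})}


lemma aux_count_le {G : Type*} [AddCommGroup G] [Fintype G] [DecidableEq G]
    {S : Multiset G} (hS : IsMinZeroSum S) (g : G) :
    S.count g ≤ Fintype.card G := by
  by_contra hc
  push_neg at hc
  have hord : addOrderOf g ≤ Fintype.card G := addOrderOf_le_card_univ
  have hn : 0 < addOrderOf g := addOrderOf_pos g
  have hle : Multiset.replicate (addOrderOf g) g ≤ S :=
    Multiset.le_count_iff_replicate_le.mp (hord.trans hc.le)
  have hsum : (Multiset.replicate (addOrderOf g) g).sum = 0 := by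
    rw [Multiset.sum_replicate]; exact addOrderOf_nsmul_eq_zero g
  have hne : Multiset.replicate (addOrderOf g) g ≠ 0 := by
    intro h
    have := congrArg Multiset.card h
    simp only [Multiset.card_replicate, Multiset.card_zero] at this
    omega
  rcases eq_or_ne (Multiset.replicate (addOrderOf g) g) S with h' | h'
  · have := congrArg (Multiset.count g) h'
    simp [Multiset.count_replicate] at this
    omega
  · exact hS.2.2 _ hle hne h' hsum

lemma aux_card_le {G : Type*} [AddCommGroup G] [Fintype G]
    {S : Multiset G} (hS : IsMinZeroSum S) :
    Multiset.card S ≤ Fintype.card G * Fintype.card G := by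
  classical
  rw [← Multiset.toFinset_sum_count_eq S]
  calc ∑ a ∈ S.toFinset, S.count a ≤ ∑ a ∈ (Finset.univ : Finset G), S.count a :=
        Finset.sum_le_sum_of_subset (S.toFinset.subset_univ)
    _ ≤ ∑ _a ∈ (Finset.univ : Finset G), Fintype.card G :=
        Finset.sum_le_sum (fun a _ => aux_count_le hS a)
    _ = Fintype.card G * Fintype.card G := by
        rw [Finset.sum_const, Finset.card_univ, smul_eq_mul]

lemma aux_bdd (G : Type*) [AddCommGroup G] [Fintype G] :
    BddAbove {n : ℕ | ∃ S : Multiset G, IsMinZeroSum S ∧ Multiset.card S = n} := by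
  refine ⟨Fintype.card G * Fintype.card G, fun n hn => ?_⟩
  obtain ⟨S, hS, rfl⟩ := hn
  exact aux_card_le hS

lemma aux_two_le_D {G : Type*} [AddCommGroup G] [Fintype G]
    (hG : 3 ≤ Fintype.card G) : 2 ≤ DavenportConstant G := by
  obtain ⟨g, hg⟩ : ∃ g : G, g ≠ 0 := by
    by_contra hc
    push_neg at hc
    have : Fintype.card G ≤ 1 := Fintype.card_le_one_iff.mpr (fun a b => by rw [hc a, hc b])
    omega
  have hn2 : 2 ≤ addOrderOf g := by
    have h1 : addOrderOf g ≠ 1 := fun h => hg (AddMonoid.addOrderOf_eq_one_iff.mp h)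
    have := addOrderOf_pos g
    omega
  have hmin : IsMinZeroSum (Multiset.replicate (addOrderOf g) g) := by
    have hne0 : addOrderOf g ≠ 0 := by omega
    refine ⟨by
      intro h
      have := congrArg Multiset.card h
      simp only [Multiset.card_replicate, Multiset.card_zero] at this
      exact hne0 this, by
      rw [Multiset.sum_replicate]; exact addOrderOf_nsmul_eq_zero g, ?_⟩
    intro T hT hT0 hTS hsum
    obtain ⟨k, hk, rfl⟩ := Multiset.le_replicate_iff.mp hT
    have hk0 : k ≠ 0 := by
      intro h
      exact hT0 (by simp [h])
    have hklt : k < addOrderOf g := by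
      rcases lt_or_eq_of_le hk with h | h
      · exact h
      · exact absurd (by rw [h]) hTS
    rw [Multiset.sum_replicate] at hsum
    exact nsmul_ne_zero_of_lt_addOrderOf hk0 hklt hsum
  have : addOrderOf g ≤ DavenportConstant G :=
    le_csSup (aux_bdd G) ⟨_, hmin, Multiset.card_replicate _ _⟩
  omega

theorem statement0 {G : Type*} [AddCommGroup G] [Fintype G]
    (hG : 3 ≤ Fintype.card G) (U : Multiset G) (hU : IsMinZeroSum U)
    (hcard : Multiset.card U = DavenportConstant G)
    (g₁ g₂ : G) (h1 : g₁ ∈ U) (h2 : g₂ ∈ U) :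
    g₁ ≠ 2 • g₂ := by
  classical
  intro heq
  have hD2 : 2 ≤ DavenportConstant G := aux_two_le_D hG
  have h0U : (0:G) ∉ U := by
    intro h0
    have hsz : Multiset.sum {(0:G)} = 0 := by simp
    have hle : ({(0:G)} : Multiset G) ≤ U := Multiset.singleton_le.mpr h0
    rcases eq_or_ne ({(0:G)} : Multiset G) U with h' | h'
    · have : Multiset.card U = 1 := by rw [← h']; simp
      omega
    · exact hU.2.2 _ hle (by simp) h' hsz
  have hg2ne : g₂ ≠ 0 := fun h => h0U (h ▸ h2)
  have hg12 : g₁ ≠ g₂ := by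
    intro h
    rw [h, two_nsmul] at heq
    exact hg2ne (left_eq_add.mp heq)
  set W := U.erase g₁ with hW
  have hUW : g₁ ::ₘ W = U := Multiset.cons_erase h1
  set U' := g₂ ::ₘ g₂ ::ₘ W with hU'
  have hsumW : g₁ + W.sum = 0 := by rw [← Multiset.sum_cons, hUW, hU.2.1]
  have hWs : W.sum = -(g₂ + g₂) := by
    rw [heq, two_nsmul] at hsumW
    exact eq_neg_of_add_eq_zero_right hsumW
  have hsumU' : U'.sum = 0 := by
    rw [hU', Multiset.sum_cons, Multiset.sum_cons, hWs]; abel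
  have hminU' : IsMinZeroSum U' := by
    refine ⟨by simp [hU'], hsumU', ?_⟩
    intro T hT hT0 hTU' hTsum
    have hcount : ∀ a, T.count a ≤ U'.count a := fun a => Multiset.le_iff_count.mp hT a
    by_cases hk : 2 ≤ T.count g₂
    · -- T contains two copies of g₂: swap them back for g₁
      have hmem1 : g₂ ∈ T := by rw [← Multiset.count_pos]; omega
      have hmem2 : g₂ ∈ T.erase g₂ := by
        rw [← Multiset.count_pos, Multiset.count_erase_self]; omega
      set X := (T.erase g₂).erase g₂ with hX
      have hTX : g₂ ::ₘ g₂ ::ₘ X = T := by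
        rw [hX, Multiset.cons_erase hmem2, Multiset.cons_erase hmem1]
      set T'' := g₁ ::ₘ X with hT''
      have hXs : X.sum = -(g₂ + g₂) := by
        have h' : (g₂ + g₂) + X.sum = 0 := by
          have hTs : T.sum = g₂ + (g₂ + X.sum) := by
            rw [← hTX, Multiset.sum_cons, Multiset.sum_cons]
          rw [hTs] at hTsum
          rw [add_assoc]; exact hTsum
        exact eq_neg_of_add_eq_zero_right h'
      have hsumT'' : T''.sum = 0 := by
        rw [hT'', Multiset.sum_cons, hXs, heq, two_nsmul]; abel
      have hU1 : 0 < U.count g₁ := Multiset.count_pos.mpr h1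
      have hT''le : T'' ≤ U := by
        rw [Multiset.le_iff_count]; intro a
        have hca := hcount a
        by_cases ha1 : a = g₁
        · rw [ha1]
          have hca1 := hcount g₁
          have hXc : X.count g₁ = T.count g₁ := by
            rw [hX, Multiset.count_erase_of_ne hg12, Multiset.count_erase_of_ne hg12]
          have hU'c : U'.count g₁ = W.count g₁ := by
            rw [hU', Multiset.count_cons_of_ne hg12, Multiset.count_cons_of_ne hg12]
          have hWc : W.count g₁ = U.count g₁ - 1 := by
            rw [hW, Multiset.count_erase_self]
          rw [hT'', Multiset.count_cons_self, hXc]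
          omega
        · by_cases ha2 : a = g₂
          · rw [ha2]
            have hca2 := hcount g₂
            have hXc : X.count g₂ = T.count g₂ - 2 := by
              rw [hX, Multiset.count_erase_self, Multiset.count_erase_self]
              omega
            have hU'c : U'.count g₂ = W.count g₂ + 2 := by
              rw [hU', Multiset.count_cons_self, Multiset.count_cons_self]
            have hWc : W.count g₂ ≤ U.count g₂ := by
              rw [hW]; exact Multiset.count_le_of_le _ (Multiset.erase_le _ _)
            rw [hT'', Multiset.count_cons_of_ne (Ne.symm hg12), hXc]
            omega
          · have hXc : X.count a = T.count a := by
              rw [hX, Multiset.count_erase_of_ne ha2, Multiset.count_erase_of_ne ha2]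
            have hU'c : U'.count a = W.count a := by
              rw [hU', Multiset.count_cons_of_ne ha2, Multiset.count_cons_of_ne ha2]
            have hWc : W.count a ≤ U.count a := by
              rw [hW]; exact Multiset.count_le_of_le _ (Multiset.erase_le _ _)
            rw [hT'', Multiset.count_cons_of_ne ha1, hXc]
            omega
      have hT''ne : T'' ≠ 0 := by simp [hT'']
      have hT''eq : T'' = U := by
        by_contra hne
        exact hU.2.2 _ hT''le hT''ne hne hsumT''
      have hXU : X = W := by
        have h' : g₁ ::ₘ X = g₁ ::ₘ W := by rw [← hT'', hT''eq, ← hUW]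
        exact (Multiset.cons_inj_right g₁).mp h'
      exact hTU' (by rw [← hTX, hXU, hU'])
    · push_neg at hk
      have hTleU : T ≤ U := by
        rw [Multiset.le_iff_count]; intro a
        have hca := hcount a
        by_cases ha2 : a = g₂
        · rw [ha2]
          have h2' : 0 < U.count g₂ := Multiset.count_pos.mpr h2
          have hcg := hcount g₂
          have hU'c : U'.count g₂ = W.count g₂ + 2 := by
            rw [hU', Multiset.count_cons_self, Multiset.count_cons_self]
          rw [ha2] at hca
          omega
        · have hU'c : U'.count a = W.count a := by
            rw [hU', Multiset.count_cons_of_ne ha2, Multiset.count_cons_of_ne ha2]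
          have hWc : W.count a ≤ U.count a := by
            rw [hW]; exact Multiset.count_le_of_le _ (Multiset.erase_le _ _)
          omega
      have hTeq : T = U := by
        by_contra hne
        exact hU.2.2 _ hTleU hT0 hne hTsum
      have hc1 := hcount g₁
      rw [hTeq] at hc1
      have hU'c : U'.count g₁ = U.count g₁ - 1 := by
        rw [hU', Multiset.count_cons_of_ne hg12, Multiset.count_cons_of_ne hg12, hW,
          Multiset.count_erase_self]
      have h1' : 0 < U.count g₁ := Multiset.count_pos.mpr h1
      omega
  have hcardW : Multiset.card W = Multiset.card U - 1 := by
    rw [hW, Multiset.card_erase_of_mem h1]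
    rfl
  have hcU : 0 < Multiset.card U := Multiset.card_pos.mpr hU.1
  have hcardU' : Multiset.card U' = DavenportConstant G + 1 := by
    rw [hU', Multiset.card_cons, Multiset.card_cons, hcardW]
    omega
  have hle : DavenportConstant G + 1 ≤ DavenportConstant G := by
    have := le_csSup (aux_bdd G) ⟨U', hminU', hcardU'⟩
    exact this
  omega
end

section
/- Let G be a finite abelian group with |G| ≥ 3, and let U be a minimal zero-sum sequence over G of length D(G) with |supp(U)| ≥ 2. Let g ∈ G with v_g(U) = k ≥ 1 and ord(g) > 2. Then there exists a minimal zero-sum sequence W dividing (-g)^k · g^{-k} U (the sequence obtained from U by replacing all k copies of g by k copies of -g) with 3 ≤ |W| ≤ D(G) - 1. -/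
open Multiset

section aux
variable {G : Type*} [AddCommGroup G]

lemma sum_sub_of_le (s t : Multiset G) [DecidableEq G] (h : s ≤ t) : (t - s).sum = t.sum - s.sum := by
  have h2 := congrArg Multiset.sum (tsub_add_cancel_of_le h)
  rw [Multiset.sum_add] at h2
  exact eq_sub_of_add_eq h2

/-- pigeonhole: minimal zero-sum sequences have length at most |G| -/
lemma minzs_card_le [Fintype G] (S : Multiset G) (hS : IsMinZeroSum S) :
    Multiset.card S ≤ Fintype.card G := by
  by_contra hlt
  push_neg at hlt
  obtain ⟨l, rfl⟩ : ∃ l : List G, (l : Multiset G) = S := ⟨S.toList, Multiset.coe_toList S⟩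
  have hlen : Fintype.card G < l.length := by simpa using hlt
  -- partial sums s_i = (l.take i).sum for i ∈ Finset.range l.length, all i < length
  have hmaps : ∀ i ∈ Finset.range l.length, (l.take i).sum ∈ (Finset.univ : Finset G) := by
    intro i _; exact Finset.mem_univ _
  have hcard : (Finset.univ : Finset G).card < (Finset.range l.length).card := by
    simpa using hlen
  obtain ⟨i, hi, j, hj, hne, heq⟩ :=
    Finset.exists_ne_map_eq_of_card_lt_of_maps_to hcard hmaps
  simp only [Finset.mem_range] at hi hj
  have key : ∀ i j : ℕ, i < j → j < l.length → (l.take i).sum = (l.take j).sum → False := by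
    intro i j hij hjlen heq2
    set seg : List G := (l.drop i).take (j - i) with hseg
    have htake : l.take j = l.take i ++ seg := by
      rw [hseg, ← List.take_add]
      congr 1
      omega
    have hsegsum : seg.sum = 0 := by
      have := congrArg List.sum htake
      rw [List.sum_append, ← heq2] at this
      exact (left_eq_add).mp this
    have hsegle : (seg : Multiset G) ≤ (l : Multiset G) := by
      refine Multiset.coe_le.mpr (List.Sublist.subperm ?_)
      exact (List.take_sublist _ _).trans (List.drop_sublist _ _)
    have hseglen : seg.length = j - i := by
      rw [hseg, List.length_take, List.length_drop]
      omega
    have hsegne : (seg : Multiset G) ≠ 0 := by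
      simp only [ne_eq, Multiset.coe_eq_zero, ← List.length_eq_zero_iff]
      omega
    have hsegneS : (seg : Multiset G) ≠ (l : Multiset G) := by
      intro hcontra
      have := congrArg Multiset.card hcontra
      simp only [Multiset.coe_card] at this
      omega
    exact hS.2.2 seg hsegle hsegne hsegneS (by simpa using hsegsum)
  rcases lt_or_gt_of_ne hne with hij | hij
  · exact key i j hij hj heq
  · exact key j i hij hi heq.symm

end aux

section aux2
variable {G : Type*} [AddCommGroup G] [Fintype G]

lemma bddD : BddAbove {n : ℕ | ∃ S : Multiset G, IsMinZeroSum S ∧ Multiset.card S = n} := by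
  refine ⟨Fintype.card G, ?_⟩
  rintro n ⟨S, hS, rfl⟩
  exact minzs_card_le S hS

lemma card_le_D (S : Multiset G) (hS : IsMinZeroSum S) :
    Multiset.card S ≤ DavenportConstant G :=
  le_csSup bddD ⟨S, hS, rfl⟩

lemma minzs_replicate (g : G) :
    IsMinZeroSum (replicate (addOrderOf g) g) := by
  set m := addOrderOf g with hm
  have hm1 : 0 < m := addOrderOf_pos g
  refine ⟨?_, ?_, ?_⟩
  · intro h
    have := congrArg Multiset.card h
    simp at this
    omega
  · rw [Multiset.sum_replicate, addOrderOf_nsmul_eq_zero]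
  · intro T hT hT0 hTS hsum
    have hTrep : T = replicate (Multiset.card T) g :=
      (Multiset.eq_replicate_card).mpr (fun b hb => eq_of_mem_replicate (mem_of_le hT hb))
    set j := Multiset.card T with hj
    have hjm : j ≤ m := by
      have := Multiset.card_le_card hT
      simpa using this
    have hj1 : 0 < j := by
      rw [hj]
      exact Multiset.card_pos.mpr hT0
    have hjlt : j < m := by
      rcases Nat.lt_or_ge j m with h | h
      · exact h
      · exact absurd (by rw [hTrep]; congr 1; omega) hTS
    rw [hTrep, Multiset.sum_replicate] at hsum
    have hdvd := addOrderOf_dvd_of_nsmul_eq_zero hsum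
    rw [← hm] at hdvd
    exact absurd (Nat.le_of_dvd (by omega) hdvd) (by omega)

lemma ord_le_D (g : G) : addOrderOf g ≤ DavenportConstant G := by
  have := card_le_D _ (minzs_replicate g)
  simpa using this

omit [Fintype G] in
/-- extending a maximal zero-sum free sequence -/
lemma zsf_cons_min (S : Multiset G) [DecidableEq G]
    (hzsf : ∀ T : Multiset G, T ≤ S → T ≠ 0 → T.sum ≠ 0) :
    IsMinZeroSum ((-S.sum) ::ₘ S) := by
  refine ⟨by simp, by simp, ?_⟩
  intro T hT hT0 hTS hsum
  by_cases hmem : count (-S.sum) T ≤ count (-S.sum) S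
  · refine hzsf T ?_ hT0 hsum
    rw [Multiset.le_iff_count] at hT ⊢
    intro x
    by_cases hx : x = -S.sum
    · rw [hx]; exact hmem
    · have := hT x
      rwa [Multiset.count_cons_of_ne hx] at this
  · push_neg at hmem
    have haT : (-S.sum) ∈ T := by
      by_contra h
      rw [Multiset.count_eq_zero_of_notMem h] at hmem
      omega
    have hTa : T.erase (-S.sum) ≤ S := by
      rw [Multiset.le_iff_count]
      intro x
      by_cases hx : x = -S.sum
      · rw [hx, Multiset.count_erase_self]
        have := Multiset.le_iff_count.mp hT (-S.sum)
        rw [Multiset.count_cons_self] at this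
        omega
      · rw [Multiset.count_erase_of_ne hx]
        have := Multiset.le_iff_count.mp hT x
        rwa [Multiset.count_cons_of_ne hx] at this
    have hTesum : (T.erase (-S.sum)).sum = S.sum := by
      have hcons := Multiset.cons_erase haT
      have h2 := congrArg Multiset.sum hcons
      rw [Multiset.sum_cons, hsum] at h2
      rw [neg_add_eq_zero] at h2
      exact h2.symm
    have hR : (S - T.erase (-S.sum)) ≤ S := tsub_le_self
    have hRsum : (S - T.erase (-S.sum)).sum = 0 := by
      rw [sum_sub_of_le _ _ hTa, hTesum, sub_self]
    have hRne : S - T.erase (-S.sum) ≠ 0 := by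
      intro h
      rw [tsub_eq_zero_iff_le] at h
      have heq : T.erase (-S.sum) = S := le_antisymm hTa h
      apply hTS
      rw [← Multiset.cons_erase haT, heq]
    exact hzsf _ hR hRne hRsum

end aux2

section aux3
variable {G : Type*} [AddCommGroup G] [Fintype G] [DecidableEq G]

lemma zsf_card_lt (S : Multiset G)
    (hzsf : ∀ T : Multiset G, T ≤ S → T ≠ 0 → T.sum ≠ 0) :
    Multiset.card S < DavenportConstant G := by
  have := card_le_D _ (zsf_cons_min S hzsf)
  rw [Multiset.card_cons] at this
  omega

omit [Fintype G] [DecidableEq G] in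
lemma exists_minzs_sub (S : Multiset G) (hS0 : S ≠ 0) (hsum : S.sum = 0) :
    ∃ W : Multiset G, W ≤ S ∧ IsMinZeroSum W := by
  induction S using Multiset.strongInductionOn with
  | ih S ih =>
    by_cases hmin : IsMinZeroSum S
    · exact ⟨S, le_refl S, hmin⟩
    · have : ∃ T : Multiset G, T ≤ S ∧ T ≠ 0 ∧ T ≠ S ∧ T.sum = 0 := by
        by_contra h
        push_neg at h
        exact hmin ⟨hS0, hsum, fun T hT hT0 hTS => h T hT hT0 hTS⟩
      obtain ⟨T, hT, hT0, hTS, hTsum⟩ := this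
      obtain ⟨W, hW, hWmin⟩ := ih T (lt_of_le_of_ne hT hTS) hT0 hTsum
      exact ⟨W, hW.trans hT, hWmin⟩

end aux3

section main
variable {G : Type*} [AddCommGroup G] [Fintype G] [DecidableEq G]

lemma not_both_min (U Tf : Multiset G) (g : G) (k : ℕ)
    (hU : IsMinZeroSum U) (hcard : Multiset.card U = DavenportConstant G)
    (hUeq : U = replicate k g + Tf)
    (hTfg : Tf.count g = 0) (hTfne : Tf ≠ 0) (hk1 : 1 ≤ k)
    (hord : 2 < addOrderOf g)
    (hU'' : IsMinZeroSum (replicate k (-g) + Tf)) : False := by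
  set m := addOrderOf g with hm
  have hm3 : 3 ≤ m := hord
  have hcTf1 : 1 ≤ Multiset.card Tf := Multiset.card_pos.mpr hTfne
  have hcardU : Multiset.card U = k + Multiset.card Tf := by
    rw [hUeq, Multiset.card_add, Multiset.card_replicate]
  -- sums
  have hsumU : k • g + Tf.sum = 0 := by
    have := hU.2.1
    rwa [hUeq, Multiset.sum_add, Multiset.sum_replicate] at this
  have hsumU'' : -(k • g) + Tf.sum = 0 := by
    have := hU''.2.1
    rwa [Multiset.sum_add, Multiset.sum_replicate, smul_neg] at this
  have h2k : (2 * k) • g = 0 := by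
    have h1 : k • g = -(k • g) := by
      have := hsumU.trans hsumU''.symm
      exact add_right_cancel this
    rw [two_mul, add_nsmul]
    nth_rewrite 2 [h1]
    exact add_neg_cancel _
  have hmdvd2k : m ∣ 2 * k := addOrderOf_dvd_of_nsmul_eq_zero h2k
  -- Tf is a proper nonempty subsequence of U
  have hTfleU : Tf ≤ U := by rw [hUeq]; exact le_add_self
  have hcountgU : U.count g = k := by
    rw [hUeq, Multiset.count_add, Multiset.count_replicate, hTfg]
    simp
  have hTfneU : Tf ≠ U := by
    intro h
    rw [h] at hTfg
    omega
  -- k < m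
  have hkm : k < m := by
    by_contra hge
    push_neg at hge
    obtain ⟨h0, hh0⟩ := Multiset.exists_mem_of_ne_zero hTfne
    have hh0g : h0 ≠ g := by
      intro h; rw [h] at hh0
      exact absurd (Multiset.count_pos.mpr hh0) (by omega)
    refine hU.2.2 (replicate m g) ?_ ?_ ?_ ?_
    · exact le_count_iff_replicate_le.mp (by omega)
    · intro h
      have := congrArg Multiset.card h
      simp at this
      omega
    · intro h
      have h1 : count h0 U = 0 := by
        rw [← h, Multiset.count_replicate, if_neg (Ne.symm hh0g)]
      have h2 : h0 ∈ U := Multiset.mem_of_le hTfleU hh0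
      exact absurd (Multiset.count_pos.mpr h2) (by omega)
    · rw [Multiset.sum_replicate]
      exact addOrderOf_nsmul_eq_zero g
  have hm2k : 2 * k = m := by
    obtain ⟨c, hc⟩ := hmdvd2k
    rcases Nat.lt_or_ge c 2 with h | h
    · interval_cases c <;> omega
    · have := Nat.mul_le_mul_left m h
      omega
  have hk1m : k + 1 < m := by omega
  -- Fact A : proper nonempty subsequences of Tf have sum outside ⟨g⟩
  have factA : ∀ T' : Multiset G, T' ≤ Tf → T' ≠ 0 → T' ≠ Tf →
      ∀ j : ℕ, j < m → T'.sum ≠ j • g := by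
    intro T' hle hne hneq j hjm hsum
    have hcardlt : Multiset.card T' < Multiset.card Tf :=
      Multiset.card_lt_card (lt_of_le_of_ne hle hneq)
    have hcardT'pos : 0 < Multiset.card T' := Multiset.card_pos.mpr hne
    rcases le_or_gt j k with hjk | hjk
    · refine hU''.2.2 (replicate j (-g) + T') ?_ ?_ ?_ ?_
      · exact add_le_add ((Multiset.replicate_le_replicate (-g)).mpr hjk) hle
      · intro h
        have := congrArg Multiset.card h
        simp only [Multiset.card_add, Multiset.card_replicate, Multiset.card_zero] at this
        omega
      · intro h
        have := congrArg Multiset.card h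
        simp only [Multiset.card_add, Multiset.card_replicate] at this
        omega
      · rw [Multiset.sum_add, Multiset.sum_replicate, smul_neg, hsum]
        abel
    · refine hU.2.2 (replicate (m - j) g + T') ?_ ?_ ?_ ?_
      · rw [hUeq]
        exact add_le_add ((Multiset.replicate_le_replicate g).mpr (by omega)) hle
      · intro h
        have := congrArg Multiset.card h
        simp only [Multiset.card_add, Multiset.card_replicate, Multiset.card_zero] at this
        omega
      · intro h
        rw [hUeq] at h
        have := congrArg Multiset.card h
        simp only [Multiset.card_add, Multiset.card_replicate] at this
        omega
      · rw [Multiset.sum_add, Multiset.sum_replicate, hsum, ← add_nsmul]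
        have : m - j + j = m := by omega
        rw [this]
        exact addOrderOf_nsmul_eq_zero g
  -- pick h0 ∈ Tf, remove it
  obtain ⟨h0, hh0⟩ := Multiset.exists_mem_of_ne_zero hTfne
  set Th := Tf.erase h0 with hTh
  have hThle : Th ≤ Tf := Multiset.erase_le h0 Tf
  have hcardTh : Multiset.card Th = Multiset.card Tf - 1 := by
    rw [hTh, Multiset.card_erase_of_mem hh0]
    rfl
  set Sh := replicate k g + Th with hSh
  have hShle : Sh ≤ U := by
    rw [hUeq, hSh]
    exact add_le_add le_rfl hThle
  have hcardSh : Multiset.card Sh = k + (Multiset.card Tf - 1) := by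
    rw [hSh, Multiset.card_add, Multiset.card_replicate, hcardTh]
  have hShzsf : ∀ V : Multiset G, V ≤ Sh → V ≠ 0 → V.sum ≠ 0 := by
    intro V hV hV0 hVs
    refine hU.2.2 V (hV.trans hShle) hV0 ?_ hVs
    intro h
    have h2 := Multiset.card_le_card hV
    rw [h] at h2
    omega
  have hx0 : (k + 1) • g ≠ 0 := by
    intro h
    have := addOrderOf_dvd_of_nsmul_eq_zero h
    rw [← hm] at this
    exact absurd (Nat.le_of_dvd (by omega) this) (by omega)
  -- the extended sequence has a zero-sum subsequence
  have hnotzsf : ¬ ∀ V : Multiset G, V ≤ (-((k+1) • g)) ::ₘ Sh → V ≠ 0 → V.sum ≠ 0 := by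
    intro hzsf
    have := zsf_card_lt _ hzsf
    rw [Multiset.card_cons] at this
    omega
  push_neg at hnotzsf
  obtain ⟨V, hV, hV0, hVs⟩ := hnotzsf
  set x' := -((k+1) • g) with hx'
  by_cases hcnt : count x' V ≤ count x' Sh
  · refine hShzsf V ?_ hV0 hVs
    rw [Multiset.le_iff_count]
    intro y
    by_cases hy : y = x'
    · rw [hy]; exact hcnt
    · have := Multiset.le_iff_count.mp hV y
      rwa [Multiset.count_cons_of_ne hy] at this
  · push_neg at hcnt
    have hxV : x' ∈ V := by
      by_contra h
      rw [Multiset.count_eq_zero_of_notMem h] at hcnt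
      omega
    set V' := V.erase x' with hV'
    have hV'le : V' ≤ Sh := by
      rw [Multiset.le_iff_count]
      intro y
      by_cases hy : y = x'
      · rw [hy, hV', Multiset.count_erase_self]
        have := Multiset.le_iff_count.mp hV x'
        rw [Multiset.count_cons_self] at this
        omega
      · rw [hV', Multiset.count_erase_of_ne hy]
        have := Multiset.le_iff_count.mp hV y
        rwa [Multiset.count_cons_of_ne hy] at this
    have hV'sum : V'.sum = (k+1) • g := by
      have hcons := Multiset.cons_erase hxV
      have h2 := congrArg Multiset.sum hcons
      rw [Multiset.sum_cons, hVs, ← hV'] at h2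
      rw [hx'] at h2
      have := neg_add_eq_zero.mp h2
      exact this.symm
    set a := count g V' with haa
    have hcountgSh : count g Sh = k := by
      rw [hSh, Multiset.count_add, Multiset.count_replicate, if_pos rfl]
      have h1 : count g Th ≤ count g Tf := Multiset.count_le_of_le g hThle
      omega
    have hak : a ≤ k := by
      have := Multiset.count_le_of_le g hV'le
      rw [hcountgSh] at this
      omega
    have hrep : replicate a g ≤ V' := le_count_iff_replicate_le.mp le_rfl
    set T'' := V' - replicate a g with hT''
    have hT''sum : T''.sum = (k + 1 - a) • g := by
      rw [hT'', sum_sub_of_le _ _ hrep, hV'sum, Multiset.sum_replicate]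
      have : (k + 1) • g = a • g + (k + 1 - a) • g := by
        rw [← add_nsmul]
        congr 1
        omega
      rw [this]
      abel
    have hT''le : T'' ≤ Th := by
      rw [Multiset.le_iff_count]
      intro y
      by_cases hy : y = g
      · rw [hy, hT'', Multiset.count_sub, Multiset.count_replicate, if_pos rfl, ← haa]
        omega
      · rw [hT'', Multiset.count_sub, Multiset.count_replicate, if_neg (Ne.symm hy)]
        have h1 := Multiset.count_le_of_le y hV'le
        rw [hSh, Multiset.count_add, Multiset.count_replicate, if_neg (Ne.symm hy)] at h1
        omega
    have hT''ne : T'' ≠ 0 := by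
      intro h
      rw [h] at hT''sum
      have h2 : (k + 1 - a) • g = 0 := hT''sum.symm
      have h3 := addOrderOf_dvd_of_nsmul_eq_zero h2
      rw [← hm] at h3
      exact absurd (Nat.le_of_dvd (by omega) h3) (by omega)
    have hT''neTf : T'' ≠ Tf := by
      intro h
      have h1 := Multiset.card_le_card hT''le
      rw [h, hcardTh] at h1
      omega
    exact factA T'' (hT''le.trans hThle) hT''ne hT''neTf (k + 1 - a) (by omega) hT''sum

end main

theorem statement2 {G : Type*} [AddCommGroup G] [Fintype G] [DecidableEq G]
    (hG : 3 ≤ Fintype.card G) (U : Multiset G) (hU : IsMinZeroSum U)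
    (hcard : Multiset.card U = DavenportConstant G)
    (hsupp : 2 ≤ U.toFinset.card)
    (g : G) (k : ℕ) (hk : U.count g = k) (hk1 : 1 ≤ k)
    (hord : 2 < addOrderOf g) :
    ∃ W : Multiset G, IsMinZeroSum W ∧
      W ≤ (U - Multiset.replicate k g) + Multiset.replicate k (-g) ∧
      3 ≤ Multiset.card W ∧ Multiset.card W ≤ DavenportConstant G - 1 := by
  have hgne : g ≠ 0 := by
    intro h
    rw [h] at hord
    simp at hord
  have hmD : addOrderOf g ≤ DavenportConstant G := ord_le_D g
  have hD3 : 3 ≤ DavenportConstant G := by omega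
  have hnegne : (-g) ≠ 0 := by simpa using hgne
  have hgneg : g ≠ -g := by
    intro h
    have h2 : (2 : ℕ) • g = 0 := by
      rw [two_nsmul]
      nth_rewrite 2 [h]
      exact add_neg_cancel g
    have := addOrderOf_dvd_of_nsmul_eq_zero h2
    exact absurd (Nat.le_of_dvd (by omega) this) (by omega)
  have hrep : replicate k g ≤ U := le_count_iff_replicate_le.mp (le_of_eq hk.symm)
  set Tf := U - replicate k g with hTf
  have hTfleU : Tf ≤ U := tsub_le_self
  have h1 : Tf + replicate k g = U := tsub_add_cancel_of_le hrep
  have hUeq : U = replicate k g + Tf := by rw [← h1, add_comm]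
  have hTfg : count g Tf = 0 := by
    rw [hTf, Multiset.count_sub, Multiset.count_replicate, if_pos rfl, hk]
    omega
  have hTfne : Tf ≠ 0 := by
    intro h
    rw [h, add_zero] at hUeq
    have htF : U.toFinset = {g} := by
      rw [hUeq, Multiset.toFinset_replicate, if_neg (by omega)]
    rw [htF] at hsupp
    simp at hsupp
  set U' := Tf + replicate k (-g) with hU'
  have hcardTf : Multiset.card U = k + Multiset.card Tf := by
    rw [hUeq, Multiset.card_add, Multiset.card_replicate]
  have hcardU' : Multiset.card U' = Multiset.card U := by
    rw [hU', Multiset.card_add, Multiset.card_replicate]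
    omega
  have hcountgU' : count g U' = 0 := by
    rw [hU', Multiset.count_add, Multiset.count_replicate, if_neg (Ne.symm hgneg), hTfg]
  have hzeroU' : (0 : G) ∉ U' := by
    intro hmem
    have h0Tf : (0 : G) ∈ Tf := by
      rcases Multiset.mem_add.mp hmem with h' | h'
      · exact h'
      · exact absurd (Multiset.eq_of_mem_replicate h') (Ne.symm hnegne)
    refine hU.2.2 {(0 : G)} (Multiset.singleton_le.mpr (Multiset.mem_of_le hTfleU h0Tf)) ?_ ?_ ?_
    · simp
    · intro h
      have := congrArg Multiset.card h
      simp only [Multiset.card_singleton] at this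
      omega
    · simp
  -- existence of a zero-sum subsequence of U'
  have hV : ∃ V : Multiset G, V ≤ U' ∧ V ≠ 0 ∧ V.sum = 0 := by
    by_contra h
    push_neg at h
    have hzsf : ∀ T : Multiset G, T ≤ U' → T ≠ 0 → T.sum ≠ 0 :=
      fun T hT hT0 => h T hT hT0
    have := zsf_card_lt U' hzsf
    omega
  obtain ⟨V, hVle, hV0, hVs⟩ := hV
  obtain ⟨W, hWle, hWmin⟩ := exists_minzs_sub V hV0 hVs
  have hWleU' : W ≤ U' := hWle.trans hVle
  refine ⟨W, hWmin, hWleU', ?_, ?_⟩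
  · -- 3 ≤ card W
    have hc0 : Multiset.card W ≠ 0 := by
      intro h
      exact hWmin.1 (Multiset.card_eq_zero.mp h)
    have hc1 : Multiset.card W ≠ 1 := by
      intro h
      obtain ⟨a, ha⟩ := Multiset.card_eq_one.mp h
      have : a = 0 := by
        have := hWmin.2.1
        rwa [ha, Multiset.sum_singleton] at this
      rw [this] at ha
      exact hzeroU' (Multiset.mem_of_le hWleU' (ha ▸ Multiset.mem_singleton_self 0))
    have hc2 : Multiset.card W ≠ 2 := by
      intro h
      obtain ⟨a, b, hab⟩ := Multiset.card_eq_two.mp h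
      have hsum : a + b = 0 := by
        have := hWmin.2.1
        rwa [hab, Multiset.insert_eq_cons, Multiset.sum_cons, Multiset.sum_singleton] at this
      by_cases hmemg : (-g) ∈ W
      · -- then g ∈ W, but count g U' = 0
        have hgW : g ∈ W := by
          rw [hab] at hmemg ⊢
          simp only [Multiset.insert_eq_cons, Multiset.mem_cons,
            Multiset.mem_singleton] at hmemg
          rcases hmemg with h' | h'
          · have hb : b = g := by
              rw [← h'] at hsum
              exact (neg_add_eq_zero.mp hsum).symm
            rw [hb]
            simp [Multiset.insert_eq_cons]
          · have ha' : a = g := by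
              rw [← h'] at hsum
              have h3 : a = -(-g) := eq_neg_of_add_eq_zero_left hsum
              rwa [neg_neg] at h3
            rw [ha']
            simp [Multiset.insert_eq_cons]
        have := Multiset.count_le_of_le g hWleU'
        rw [hcountgU'] at this
        exact absurd (Multiset.count_pos.mpr hgW) (by omega)
      · -- W ≤ Tf ≤ U, contradiction with minimality of U
        have hWTf : W ≤ Tf := by
          rw [Multiset.le_iff_count]
          intro y
          by_cases hy : y = -g
          · rw [hy, Multiset.count_eq_zero_of_notMem hmemg]
            omega
          · have := Multiset.count_le_of_le y hWleU'
            rwa [hU', Multiset.count_add, Multiset.count_replicate, if_neg (Ne.symm hy),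
              add_zero] at this
        refine hU.2.2 W (hWTf.trans hTfleU) hWmin.1 ?_ hWmin.2.1
        intro hWU
        have := congrArg Multiset.card hWU
        rw [h] at this
        omega
    omega
  · -- card W ≤ D - 1
    have hWD : Multiset.card W ≤ DavenportConstant G := card_le_D W hWmin
    have hne : Multiset.card W ≠ DavenportConstant G := by
      intro h
      have hWU' : W = U' := Multiset.eq_of_le_of_card_le hWleU' (by omega)
      refine not_both_min U Tf g k hU hcard hUeq hTfg hTfne hk1 hord ?_
      have : U' = replicate k (-g) + Tf := by rw [hU', add_comm]
      rw [← this, ← hWU']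
      exact hWmin
    omega
end

section
/- Let G be an abelian group with |G| ≥ 3 and let U, V be minimal zero-sum sequences over G with max L(UV) ≥ 3. If for some g ∈ G there is no factorization of UV into k minimal zero-sum sequences with 3 ≤ k ≤ ord(g), then v_g(U) + v_{-g}(V) ≤ ord(g). -/
open Multiset

set_option linter.unusedSectionVars false
set_option linter.unreachableTactic false
set_option linter.unusedTactic false
set_option linter.unusedVariables false

section Aux
variable {G : Type*} [AddCommGroup G] [DecidableEq G]

variable {G : Type*} [AddCommGroup G] [DecidableEq G]

lemma countSum (x : G) (z : Multiset (Multiset G)) :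
    count x z.sum = (z.map (count x)).sum := by
  induction z using Multiset.induction_on with
  | empty => simp
  | cons W z ih => simp [ih]

lemma le_sum_of_mem' {W : Multiset G} {z : Multiset (Multiset G)} (h : W ∈ z) : W ≤ z.sum := by
  obtain ⟨t, rfl⟩ := exists_cons_of_mem h
  simp [Multiset.le_iff_exists_add]

lemma sum_le_sum_of_le' {z t : Multiset (Multiset G)} (h : t ≤ z) : t.sum ≤ z.sum := by
  obtain ⟨u, rfl⟩ := Multiset.le_iff_exists_add.mp h
  simp [Multiset.le_iff_exists_add]

lemma mul_card_le_sum_map (c : ℕ) (z : Multiset (Multiset G)) (f : Multiset G → ℕ)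
    (h : ∀ W ∈ z, c ≤ f W) : c * card z ≤ (z.map f).sum := by
  induction z using Multiset.induction_on with
  | empty => simp
  | cons W z ih =>
    simp only [map_cons, Multiset.sum_cons, card_cons, Nat.mul_succ]
    have h1 := h W (mem_cons_self _ _)
    have h2 := ih fun W hW => h W (mem_cons_of_mem hW)
    omega

lemma card_le_count_of_forall_mem {z : Multiset (Multiset G)} (x : G)
    (h : ∀ W ∈ z, 1 ≤ count x W) : card z ≤ count x z.sum := by
  have := mul_card_le_sum_map 1 z (count x) h
  rw [countSum]
  omega

lemma card_le_card_sum {z : Multiset (Multiset G)} (h : ∀ W ∈ z, W ≠ 0) :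
    card z ≤ card z.sum := by
  induction z using Multiset.induction_on with
  | empty => simp
  | cons W z ih =>
    simp only [Multiset.sum_cons, card_cons, Multiset.card_add]
    have h1 : 0 < card W := Multiset.card_pos.mpr (h W (mem_cons_self _ _))
    have h2 := ih fun W hW => h W (mem_cons_of_mem hW)
    omega

/-- replicate of the addOrderOf is a minimal zero-sum sequence. -/
lemma atom_replicate [Fintype G] (g : G) : IsMinZeroSum (replicate (addOrderOf g) g) := by
  have hn : 0 < addOrderOf g := addOrderOf_pos g
  refine ⟨by simp [← Multiset.card_pos, hn], by simp [addOrderOf_nsmul_eq_zero], ?_⟩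
  intro T hT hT0 hTne hsum
  have hall : ∀ b ∈ T, b = g := fun b hb =>
    eq_of_mem_replicate (Multiset.mem_of_le hT hb)
  have hTrep : T = replicate (card T) g := Multiset.eq_replicate_card.mpr hall
  have hsum' : (card T) • g = 0 := by rw [hTrep] at hsum; simpa using hsum
  have hdvd : addOrderOf g ∣ card T := addOrderOf_dvd_of_nsmul_eq_zero hsum'
  have hlt : card T < addOrderOf g := by
    have := Multiset.card_lt_card (lt_of_le_of_ne hT hTne)
    simpa using this
  have hz : card T = 0 := Nat.eq_zero_of_dvd_of_lt hdvd hlt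
  exact hT0 (by rw [hTrep, hz]; simp)

/-- {g, -g} is a minimal zero-sum sequence when g ≠ 0. -/
lemma atom_pair {g : G} (hg : g ≠ 0) : IsMinZeroSum ({g, -g} : Multiset G) := by
  refine ⟨by simp, by simp, ?_⟩
  intro T hT hT0 hTne hsum
  have hlt : card T < 2 := by
    have := Multiset.card_lt_card (lt_of_le_of_ne hT hTne)
    simpa using this
  have h1 : card T = 1 := by
    have : 0 < card T := Multiset.card_pos.mpr hT0
    omega
  obtain ⟨x, rfl⟩ := Multiset.card_eq_one.mp h1
  have hx : x ∈ ({g, -g} : Multiset G) := Multiset.mem_of_le hT (by simp)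
  simp only [Multiset.sum_singleton] at hsum
  rcases (by simpa using hx) with rfl | rfl
  · exact hg hsum
  · exact hg (by simpa using hsum)

/-- In a minimal zero-sum sequence, the count of g is at most ord(g), with equality iff
    the sequence is g^(ord g). -/
lemma eq_replicate_of_ord_le_count [Fintype G] {U : Multiset G} (hU : IsMinZeroSum U) (g : G)
    (h : addOrderOf g ≤ U.count g) : U = replicate (addOrderOf g) g := by
  have hle : replicate (addOrderOf g) g ≤ U := by
    rw [Multiset.le_iff_count]
    intro a
    rw [Multiset.count_replicate]
    split <;> simp_all
  have hn : 0 < addOrderOf g := addOrderOf_pos g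
  by_contra hne
  exact hU.2.2 _ hle (by simp [← Multiset.card_pos, hn]) (Ne.symm hne) (by simp [addOrderOf_nsmul_eq_zero])

lemma count_le_ord [Fintype G] {U : Multiset G} (hU : IsMinZeroSum U) (g : G) :
    U.count g ≤ addOrderOf g := by
  by_contra h
  push_neg at h
  have := eq_replicate_of_ord_le_count hU g h.le
  rw [this] at h
  simp at h

variable {G : Type*} [AddCommGroup G] [DecidableEq G]

lemma exists_atom_le (A : Multiset G) (hA0 : A ≠ 0) (hAs : A.sum = 0) :
    ∃ B, B ≤ A ∧ IsMinZeroSum B := by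
  induction A using Multiset.strongInductionOn with
  | ih A ih =>
    by_cases h : IsMinZeroSum A
    · exact ⟨A, le_refl A, h⟩
    · simp only [IsMinZeroSum, not_and, not_forall] at h
      obtain ⟨T, hTA, hT0, hTne, hTs⟩ := h hA0 hAs
      have hlt : T < A := lt_of_le_of_ne hTA hTne
      obtain ⟨B, hB1, hB2⟩ := ih T hlt hT0 (not_not.mp hTs)
      exact ⟨B, hB1.trans hTA, hB2⟩

lemma exists_fact (A : Multiset G) (hAs : A.sum = 0) :
    ∃ z, IsFactorization A z ∧ (A ≠ 0 → 1 ≤ card z) := by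
  induction A using Multiset.strongInductionOn with
  | ih A ih =>
    by_cases hA0 : A = 0
    · subst hA0
      exact ⟨0, ⟨by simp, by simp⟩, by simp⟩
    · obtain ⟨B, hBA, hB⟩ := exists_atom_le A hA0 hAs
      obtain ⟨C, hC⟩ := Multiset.le_iff_exists_add.mp hBA
      have hCle : C ≤ A := Multiset.le_iff_exists_add.mpr ⟨B, by rw [hC, add_comm]⟩
      have hCs : C.sum = 0 := by
        have : A.sum = B.sum + C.sum := by rw [hC, Multiset.sum_add]
        rw [hAs, hB.2.1] at this
        simpa using this.symm
      have hCne : C ≠ A := by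
        intro hEq
        have : card A = card B + card C := by rw [hC, Multiset.card_add]
        have hBpos : 0 < card B := Multiset.card_pos.mpr hB.1
        rw [hEq] at this
        omega
      obtain ⟨z', hz', _⟩ := ih C (lt_of_le_of_ne hCle hCne) hCs
      refine ⟨B ::ₘ z', ⟨?_, ?_⟩, ?_⟩
      · intro S hS
        rcases Multiset.mem_cons.mp hS with rfl | hS
        · exact hB
        · exact hz'.1 S hS
      · rw [Multiset.sum_cons, hz'.2, hC]
      · simp

lemma exists_fact_two (A : Multiset G) (hAs : A.sum = 0) (hA0 : A ≠ 0)
    (hna : ¬ IsMinZeroSum A) : ∃ z, IsFactorization A z ∧ 2 ≤ card z := by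
  simp only [IsMinZeroSum, not_and, not_forall] at hna
  obtain ⟨T, hTA, hT0, hTne, hTs⟩ := hna hA0 hAs
  have hTs : T.sum = 0 := not_not.mp hTs
  obtain ⟨C, hC⟩ := Multiset.le_iff_exists_add.mp hTA
  have hC0 : C ≠ 0 := by
    intro h
    rw [h, add_zero] at hC
    exact hTne hC.symm
  have hCs : C.sum = 0 := by
    have : A.sum = T.sum + C.sum := by rw [hC, Multiset.sum_add]
    rw [hAs, hTs] at this
    simpa using this.symm
  obtain ⟨z1, hz1, hc1⟩ := exists_fact T hTs
  obtain ⟨z2, hz2, hc2⟩ := exists_fact C hCs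
  refine ⟨z1 + z2, ⟨?_, by rw [Multiset.sum_add, hz1.2, hz2.2, hC]⟩, ?_⟩
  · intro S hS
    rcases Multiset.mem_add.mp hS with hS | hS
    · exact hz1.1 S hS
    · exact hz2.1 S hS
  · have := hc1 hT0
    have := hc2 hC0
    simp only [Multiset.card_add]
    omega

lemma fact_add {A B : Multiset G} {z1 z2 : Multiset (Multiset G)}
    (h1 : IsFactorization A z1) (h2 : IsFactorization B z2) :
    IsFactorization (A + B) (z1 + z2) := by
  refine ⟨?_, by rw [Multiset.sum_add, h1.2, h2.2]⟩
  intro S hS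
  rcases Multiset.mem_add.mp hS with hS | hS
  · exact h1.1 S hS
  · exact h2.1 S hS

variable {G : Type*} [AddCommGroup G] [DecidableEq G]



lemma exists_mem_of_mem_sum {a : G} {z : Multiset (Multiset G)} (h : a ∈ z.sum) :
    ∃ W ∈ z, a ∈ W := by
  induction z using Multiset.induction_on with
  | empty => simp at h
  | cons W z ih =>
    rw [Multiset.sum_cons, Multiset.mem_add] at h
    rcases h with h | h
    · exact ⟨W, mem_cons_self _ _, h⟩
    · obtain ⟨W', h1, h2⟩ := ih h
      exact ⟨W', mem_cons_of_mem h1, h2⟩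

lemma ne_neg_of_three_le {g : G} (hn : 3 ≤ addOrderOf g) : g ≠ -g := by
  intro h
  have h2 : (2 : ℕ) • g = 0 := by
    rw [two_nsmul]
    nth_rewrite 2 [h]
    simp
  have := Nat.le_of_dvd (by norm_num) (addOrderOf_dvd_of_nsmul_eq_zero h2)
  omega

lemma zero_ne_of_three_le {g : G} (hn : 3 ≤ addOrderOf g) : g ≠ 0 := by
  intro h
  rw [h] at hn
  simp [addOrderOf_zero] at hn

lemma neg_ord_smul_zero (g : G) : (addOrderOf g) • (-g) = 0 := by
  rw [smul_neg, addOrderOf_nsmul_eq_zero, neg_zero]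

/-- Dichotomy of factors for the sequence g * (-g)^(n+1). -/
lemma m2_dichotomy [Fintype G] {g : G} (hn : 3 ≤ addOrderOf g) {W : Multiset G}
    (hW : IsMinZeroSum W) (hle : W ≤ g ::ₘ replicate (addOrderOf g + 1) (-g)) :
    W = {g, -g} ∨ W = replicate (addOrderOf g) (-g) := by
  have hgneg : g ≠ -g := ne_neg_of_three_le hn
  have hg0 : g ≠ 0 := zero_ne_of_three_le hn
  have hcountgA : count g (g ::ₘ replicate (addOrderOf g + 1) (-g)) = 1 := by
    rw [Multiset.count_cons_self, Multiset.count_replicate, if_neg (Ne.symm hgneg)]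
  have hcountngA : count (-g) (g ::ₘ replicate (addOrderOf g + 1) (-g)) = addOrderOf g + 1 := by
    rw [Multiset.count_cons_of_ne (Ne.symm hgneg), Multiset.count_replicate, if_pos rfl]
  obtain ⟨x, hx⟩ : ∃ x, count g W = x := ⟨_, rfl⟩
  obtain ⟨y, hy⟩ : ∃ y, count (-g) W = y := ⟨_, rfl⟩
  have hx1 : x ≤ 1 := by
    rw [← hx, ← hcountgA]
    exact Multiset.count_le_of_le _ hle
  have hyn : y ≤ addOrderOf g + 1 := by
    rw [← hy, ← hcountngA]
    exact Multiset.count_le_of_le _ hle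
  have hWeq : W = replicate x g + replicate y (-g) := by
    ext e
    rw [Multiset.count_add, Multiset.count_replicate, Multiset.count_replicate]
    by_cases heg : e = g
    · subst heg
      rw [if_pos rfl, if_neg (Ne.symm hgneg), hx]
      omega
    · by_cases heng : e = -g
      · subst heng
        rw [if_neg hgneg, if_pos rfl, hy]
        omega
      · have hcA : count e (g ::ₘ replicate (addOrderOf g + 1) (-g)) = 0 := by
          rw [Multiset.count_cons_of_ne heg, Multiset.count_replicate,
            if_neg (fun h => heng h.symm)]
        have hcW : count e W = 0 := Nat.le_zero.mp (hcA ▸ Multiset.count_le_of_le e hle)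
        rw [hcW, if_neg (fun h => heg h.symm), if_neg (fun h => heng h.symm)]
  have hsum : x • g + y • (-g) = 0 := by
    have := hW.2.1
    rw [hWeq, Multiset.sum_add, Multiset.sum_replicate, Multiset.sum_replicate] at this
    exact this
  interval_cases x
  · -- x = 0
    right
    have hys : y • g = 0 := by
      rw [zero_nsmul, zero_add, smul_neg] at hsum
      exact neg_eq_zero.mp hsum
    have hdvd : addOrderOf g ∣ y := addOrderOf_dvd_of_nsmul_eq_zero hys
    have hy1 : 1 ≤ y := by
      by_contra h
      push_neg at h
      have hy0 : y = 0 := by omega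
      rw [hy0] at hWeq
      simp only [replicate_zero, zero_add, add_zero] at hWeq
      exact hW.1 hWeq
    have hyeq : y = addOrderOf g := by
      obtain ⟨k, hk⟩ := hdvd
      have hk2 : k < 2 := by
        by_contra h
        push_neg at h
        have : addOrderOf g * 2 ≤ addOrderOf g * k := Nat.mul_le_mul_left _ h
        omega
      interval_cases k <;> omega
    rw [hWeq, hyeq]
    simp
  · -- x = 1
    have hy1 : 1 ≤ y := by
      by_contra h
      push_neg at h
      have hy0 : y = 0 := by omega
      rw [hy0] at hsum
      simp only [replicate_zero, one_nsmul, zero_nsmul, add_zero] at hsum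
      exact hg0 hsum
    obtain ⟨m, rfl⟩ : ∃ m, y = m + 1 := ⟨y - 1, by omega⟩
    have hms : m • g = 0 := by
      have h1 : g + -((m + 1) • g) = 0 := by
        rw [one_nsmul, smul_neg] at hsum
        exact hsum
      have h2 : g = (m + 1) • g := (add_neg_eq_zero.mp h1)
      rw [succ_nsmul] at h2
      have : (0 : G) + g = m • g + g := by rw [zero_add]; exact h2
      exact (add_right_cancel this).symm
    have hdvd : addOrderOf g ∣ m := addOrderOf_dvd_of_nsmul_eq_zero hms
    rcases Nat.eq_zero_or_pos m with hm0 | hmpos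
    · left
      rw [hWeq, hm0]
      rfl
    · exfalso
      have hnm : addOrderOf g ≤ m := Nat.le_of_dvd hmpos hdvd
      have hmeq : m = addOrderOf g := by omega
      -- W = the whole sequence; but replicate n (-g) is a proper zero-sum subsequence
      refine hW.2.2 (replicate (addOrderOf g) (-g)) ?_ ?_ ?_ (by
        rw [Multiset.sum_replicate]; exact neg_ord_smul_zero g)
      · rw [hWeq]
        rw [Multiset.le_iff_count]
        intro e
        rw [Multiset.count_replicate, Multiset.count_add, Multiset.count_replicate,
          Multiset.count_replicate]
        split_ifs with h1 h2 h3 <;> omega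
      · intro h
        have := congrArg card h
        rw [Multiset.card_replicate] at this
        have hpos : 0 < addOrderOf g := addOrderOf_pos g
        rw [Multiset.card_zero] at this
        omega
      · intro h
        have := congrArg (count g) h
        rw [Multiset.count_replicate, if_neg (Ne.symm hgneg), hWeq, Multiset.count_add,
          Multiset.count_replicate, Multiset.count_replicate, if_pos rfl,
          if_neg (Ne.symm hgneg)] at this
        omega

/-- Main degenerate-case lemma: any factorization of g * (-g)^(n+1) has at most 2 factors. -/
lemma m2 [Fintype G] {g : G} (hn : 3 ≤ addOrderOf g) (z : Multiset (Multiset G))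
    (hz : IsFactorization (g ::ₘ replicate (addOrderOf g + 1) (-g)) z) : card z ≤ 2 := by
  have hgneg : g ≠ -g := ne_neg_of_three_le hn
  have hgmem : g ∈ z.sum := by rw [hz.2]; exact Multiset.mem_cons_self _ _
  obtain ⟨W0, hW0z, hgW0⟩ := exists_mem_of_mem_sum hgmem
  have hW0 : W0 = {g, -g} := by
    rcases m2_dichotomy hn (hz.1 W0 hW0z) (hz.2 ▸ le_sum_of_mem' hW0z) with h | h
    · exact h
    · exfalso
      rw [h] at hgW0
      exact hgneg (eq_of_mem_replicate hgW0)
  obtain ⟨z', rfl⟩ := exists_cons_of_mem hW0z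
  have hz'sum : z'.sum = replicate (addOrderOf g) (-g) := by
    have h1 : W0 + z'.sum = g ::ₘ replicate (addOrderOf g + 1) (-g) := by
      rw [← Multiset.sum_cons, hz.2]
    rw [hW0] at h1
    have h2 : ({g, -g} : Multiset G) + replicate (addOrderOf g) (-g)
        = g ::ₘ replicate (addOrderOf g + 1) (-g) := by
      rw [Multiset.insert_eq_cons, Multiset.cons_add, Multiset.singleton_add,
        ← Multiset.replicate_succ]
    rw [← h2] at h1
    exact add_left_cancel h1
  have hall : ∀ W ∈ z', W = replicate (addOrderOf g) (-g) := by
    intro W hWz'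
    rcases m2_dichotomy hn (hz.1 W (mem_cons_of_mem hWz'))
        (hz.2 ▸ le_sum_of_mem' (mem_cons_of_mem hWz')) with h | h
    · exfalso
      have : count g W ≤ count g z'.sum := Multiset.count_le_of_le g (le_sum_of_mem' hWz')
      rw [hz'sum, Multiset.count_replicate, if_neg (Ne.symm hgneg), h] at this
      simp [Multiset.insert_eq_cons, Multiset.count_cons_self] at this
    · exact h
  have hcard : card z' = 1 := by
    have hcnt : count (-g) z'.sum = addOrderOf g := by
      rw [hz'sum, Multiset.count_replicate, if_pos rfl]
    have hmap : z'.map (count (-g)) = replicate (card z') (addOrderOf g) := by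
      have : ∀ b ∈ z'.map (count (-g)), b = addOrderOf g := by
        intro b hb
        obtain ⟨W, hW, rfl⟩ := Multiset.mem_map.mp hb
        rw [hall W hW, Multiset.count_replicate, if_pos rfl]
      have h2 := Multiset.eq_replicate_card.mpr this
      rwa [Multiset.card_map] at h2
    have hmul : count (-g) z'.sum = card z' * addOrderOf g := by
      rw [countSum, hmap, Multiset.sum_replicate, smul_eq_mul]
    have hpos : 0 < addOrderOf g := addOrderOf_pos g
    rw [hcnt] at hmul
    have : card z' * addOrderOf g = 1 * addOrderOf g := by omega
    exact Nat.eq_of_mul_eq_mul_right hpos this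
  simp [hcard]

lemma exists_two_of_two_le_card {α : Type*} {m : Multiset α} (h : 2 ≤ card m) :
    ∃ x y r, m = x ::ₘ y ::ₘ r := by
  obtain ⟨x, hx⟩ := (Multiset.card_pos_iff_exists_mem (s := m)).mp (by omega)
  obtain ⟨r1, rfl⟩ := exists_cons_of_mem hx
  rw [Multiset.card_cons] at h
  obtain ⟨y, hy⟩ := (Multiset.card_pos_iff_exists_mem (s := r1)).mp (by omega)
  obtain ⟨r, rfl⟩ := exists_cons_of_mem hy
  exact ⟨x, y, r, rfl⟩

/-- The order-two case: if ord(g) = 2, v_g(V) = 2, v_g(U) ≥ 1, then any factorization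
of UV has at most 2 factors. -/
lemma n2' [Fintype G] {g : G} (hn : addOrderOf g = 2) {U V : Multiset G}
    (hU : IsMinZeroSum U) (hV : IsMinZeroSum V)
    (haU : 1 ≤ count g U) (hbV : 2 ≤ count g V)
    (z0 : Multiset (Multiset G)) (hz0 : IsFactorization (U + V) z0) :
    card z0 ≤ 2 := by
  have hg2 : g + g = 0 := by
    have := addOrderOf_nsmul_eq_zero g
    rwa [hn, two_nsmul] at this
  have hg0 : g ≠ 0 := by
    intro h
    rw [h, addOrderOf_zero] at hn
    omega
  have hVrep : V = replicate 2 g := by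
    have := eq_replicate_of_ord_le_count hV g (by omega)
    rwa [hn] at this
  obtain ⟨a, ha⟩ : ∃ a, count g U = a := ⟨_, rfl⟩
  have ha2 : a ≤ 2 := by
    have := count_le_ord hU g
    omega
  set S := U.filter (· ≠ g) with hSdef
  have hUdec : replicate a g + S = U := by
    have h1 := Multiset.filter_add_not (fun x => x = g) U
    rw [Multiset.filter_eq'] at h1
    rw [ha] at h1
    exact h1
  have hSg : count g S = 0 := by
    rw [hSdef]
    exact Multiset.count_filter_of_neg (by simp)
  have hSU : S ≤ U := Multiset.filter_le _ U
  have hcardS : card S < card U := by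
    have := congrArg card hUdec
    rw [Multiset.card_add, Multiset.card_replicate] at this
    omega
  have hUVx : ∀ x, x ≠ g → count x (U + V) = count x S := by
    intro x hx
    rw [Multiset.count_add, hVrep, Multiset.count_replicate, if_neg (Ne.symm hx),
      ← hUdec, Multiset.count_add, Multiset.count_replicate, if_neg (Ne.symm hx)]
    omega
  have hUVg : count g (U + V) = a + 2 := by
    rw [Multiset.count_add, hVrep, Multiset.count_replicate, if_pos rfl, ha]
  -- every factor contains g
  have hfac : ∀ W ∈ z0, 1 ≤ count g W := by
    intro W hW
    by_contra h
    push_neg at h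
    have hcg : count g W = 0 := by omega
    have hWS : W ≤ S := by
      rw [Multiset.le_iff_count]
      intro x
      by_cases hx : x = g
      · subst hx; omega
      · rw [← hUVx x hx, ← hz0.2]
        exact Multiset.count_le_of_le x (le_sum_of_mem' hW)
    have hWatom := hz0.1 W hW
    refine hU.2.2 W (hWS.trans hSU) hWatom.1 ?_ hWatom.2.1
    intro h
    rw [h] at hWS
    have := Multiset.card_le_card hWS
    omega
  set t := z0.filter (fun W => count g W = 1) with htdef
  have htle : t ≤ z0 := Multiset.filter_le _ z0
  by_cases htcard : 2 ≤ card t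
  · exfalso
    obtain ⟨W1, W2, r, hr⟩ := exists_two_of_two_le_card htcard
    have hW1t : W1 ∈ t := by rw [hr]; exact mem_cons_self _ _
    have hW2t : W2 ∈ t := by rw [hr]; exact mem_cons_of_mem (mem_cons_self _ _)
    have hW1z : W1 ∈ z0 := Multiset.mem_of_le htle hW1t
    have hW2z : W2 ∈ z0 := Multiset.mem_of_le htle hW2t
    have hc1 : count g W1 = 1 :=
      (Multiset.mem_filter.mp (show W1 ∈ z0.filter (fun W => count g W = 1) from
        htdef ▸ hW1t)).2
    have hc2 : count g W2 = 1 :=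
      (Multiset.mem_filter.mp (show W2 ∈ z0.filter (fun W => count g W = 1) from
        htdef ▸ hW2t)).2
    have hle12 : W1 + W2 ≤ U + V := by
      rw [← hz0.2]
      calc W1 + W2 ≤ (W1 ::ₘ W2 ::ₘ r).sum := by
            rw [Multiset.sum_cons, Multiset.sum_cons, ← add_assoc]
            exact Multiset.le_add_right _ _
      _ ≤ z0.sum := sum_le_sum_of_le' (hr ▸ htle)
    -- decompose W1 and W2
    have key : ∀ W : Multiset G, W ∈ z0 → count g W = 1 →
        (W.filter (· ≠ g)).sum = g ∧ W.filter (· ≠ g) ≠ 0 := by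
      intro W hW hc
      have hdec : replicate 1 g + W.filter (· ≠ g) = W := by
        have h1 := Multiset.filter_add_not (fun x => x = g) W
        rw [Multiset.filter_eq', hc] at h1
        exact h1
      have hsum := (hz0.1 W hW).2.1
      rw [← hdec, Multiset.sum_add, Multiset.sum_replicate, one_nsmul] at hsum
      constructor
      · -- sum = -g = g
        have : (W.filter (· ≠ g)).sum = -g := by
          have := eq_neg_of_add_eq_zero_right hsum
          exact this
        rw [this]
        have : -g = g := by
          have := hg2
          exact neg_eq_of_add_eq_zero_left hg2
        rw [this]
      · intro h
        rw [h, Multiset.sum_zero, add_zero] at hsum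
        exact hg0 hsum
    obtain ⟨hs1, hne1⟩ := key W1 hW1z hc1
    obtain ⟨hs2, _⟩ := key W2 hW2z hc2
    set C := W1.filter (· ≠ g) + W2.filter (· ≠ g) with hCdef
    have hCsum : C.sum = 0 := by
      rw [hCdef, Multiset.sum_add, hs1, hs2, hg2]
    have hCS : C ≤ S := by
      rw [Multiset.le_iff_count]
      intro x
      by_cases hx : x = g
      · subst hx
        rw [hCdef, Multiset.count_add]
        rw [Multiset.count_filter_of_neg (by simp), Multiset.count_filter_of_neg (by simp)]
        omega
      · rw [← hUVx x hx]
        have h1 : count x (W1.filter (· ≠ g)) ≤ count x W1 :=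
          Multiset.count_le_of_le x (Multiset.filter_le _ _)
        have h2 : count x (W2.filter (· ≠ g)) ≤ count x W2 :=
          Multiset.count_le_of_le x (Multiset.filter_le _ _)
        have h3 := Multiset.count_le_of_le x hle12
        rw [Multiset.count_add] at h3
        rw [hCdef, Multiset.count_add]
        omega
    refine hU.2.2 C (hCS.trans hSU) ?_ ?_ hCsum
    · intro h
      have hc : card C = 0 := by rw [h]; simp
      rw [hCdef, Multiset.card_add] at hc
      exact hne1 (Multiset.card_eq_zero.mp (by omega))
    · intro h
      rw [h] at hCS
      have := Multiset.card_le_card hCS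
      omega
  · -- at most one factor with count 1: counting contradiction
    push_neg at htcard
    have hsplit := Multiset.filter_add_not (fun W => count g W = 1) z0
    have hcount : count g (z0.sum) = a + 2 := by rw [hz0.2]; exact hUVg
    rw [countSum] at hcount
    have hmapsplit : z0.map (count g)
        = t.map (count g) + (z0.filter (fun W => ¬ count g W = 1)).map (count g) := by
      rw [htdef, ← Multiset.map_add, hsplit]
    have h1 : 1 * card t ≤ (t.map (count g)).sum :=
      mul_card_le_sum_map 1 t (count g) (fun W hW => by
        rw [(Multiset.mem_filter.mp (show W ∈ z0.filter (fun W => count g W = 1) from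
          htdef ▸ hW)).2])
    have h2 : 2 * card (z0.filter (fun W => ¬ count g W = 1))
        ≤ ((z0.filter (fun W => ¬ count g W = 1)).map (count g)).sum := by
      refine mul_card_le_sum_map 2 _ (count g) (fun W hW => ?_)
      have hW1 := (Multiset.mem_filter.mp hW).2
      have hWz : W ∈ z0 := Multiset.mem_of_le (Multiset.filter_le _ _) hW
      have := hfac W hWz
      omega
    have hcards : card t + card (z0.filter (fun W => ¬ count g W = 1)) = card z0 := by
      rw [htdef, ← Multiset.card_add, hsplit]
    rw [hmapsplit, Multiset.sum_add] at hcount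
    omega

/-- Key hard case: U = g·S with single g, V = (-g)^n, and S + (-g)^(n-1) an atom.
Then every factorization of UV has at most 2 factors. -/
lemma claimB [Fintype G] {g : G} (hn : 3 ≤ addOrderOf g) {U V S : Multiset G}
    (hU : IsMinZeroSum U) (hUdec : U = g ::ₘ S)
    (hSg : count g S = 0) (hSng : count (-g) S = 0)
    (hA1 : IsMinZeroSum (S + replicate (addOrderOf g - 1) (-g)))
    (hV : V = replicate (addOrderOf g) (-g))
    (z0 : Multiset (Multiset G)) (hz0 : IsFactorization (U + V) z0) :
    card z0 ≤ 2 := by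
  have hgneg : g ≠ -g := ne_neg_of_three_le hn
  have hg0 : g ≠ 0 := zero_ne_of_three_le hn
  by_contra hcard
  push_neg at hcard
  -- counts in U + V
  have hUVg : count g (U + V) = 1 := by
    rw [Multiset.count_add, hUdec, hV, Multiset.count_cons_self, hSg,
      Multiset.count_replicate, if_neg (Ne.symm hgneg)]
  have hUVng : count (-g) (U + V) = addOrderOf g := by
    rw [Multiset.count_add, hUdec, hV, Multiset.count_cons_of_ne (Ne.symm hgneg), hSng,
      Multiset.count_replicate, if_pos rfl]
    omega
  have hUVx : ∀ x, x ≠ g → x ≠ -g → count x (U + V) = count x S := by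
    intro x hx1 hx2
    rw [Multiset.count_add, hUdec, hV, Multiset.count_cons_of_ne hx1,
      Multiset.count_replicate, if_neg (Ne.symm hx2), add_zero]
  have hSU : S ≤ U := by rw [hUdec]; exact Multiset.le_cons_self _ _
  have hScard : card S < card U := by rw [hUdec, Multiset.card_cons]; omega
  -- the factor containing g
  have hgmem : g ∈ z0.sum := by
    rw [hz0.2, hUdec]
    exact Multiset.mem_add.mpr (Or.inl (Multiset.mem_cons_self _ _))
  obtain ⟨W0, hW0z, hgW0⟩ := exists_mem_of_mem_sum hgmem
  obtain ⟨z', rfl⟩ := exists_cons_of_mem hW0z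
  have hW0atom : IsMinZeroSum W0 := hz0.1 W0 (Multiset.mem_cons_self _ _)
  have hcz' : 2 ≤ card z' := by
    rw [Multiset.card_cons] at hcard
    omega
  have hsum0 : W0 + z'.sum = U + V := by rw [← Multiset.sum_cons, hz0.2]
  by_cases hc : 1 ≤ count (-g) W0
  · -- W0 = {g, -g}, and then z' is a ≥2 factorization of the atom A1
    have hpairle : ({g, -g} : Multiset G) ≤ W0 := by
      rw [Multiset.le_iff_count]
      intro x
      have hmemc := Multiset.one_le_count_iff_mem.mpr hgW0
      by_cases h1 : x = g
      · subst h1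
        simp [Multiset.insert_eq_cons, Multiset.count_cons, Multiset.count_singleton, hgneg]
        omega
      · by_cases h2 : x = -g
        · subst h2
          simp [Multiset.insert_eq_cons, Multiset.count_cons, Ne.symm hgneg]
          omega
        · simp [Multiset.insert_eq_cons, Multiset.count_cons, h1, h2]
    have hW0eq : W0 = {g, -g} := by
      by_contra hne
      exact hW0atom.2.2 _ hpairle (by simp) (fun h => hne h.symm) (by simp)
    -- z'.sum = A1
    have hz'A1 : z'.sum = S + replicate (addOrderOf g - 1) (-g) := by
      have hkey : ({g, -g} : Multiset G) + (S + replicate (addOrderOf g - 1) (-g)) = U + V := by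
        rw [hUdec, hV]
        ext x
        rw [Multiset.count_add, Multiset.count_add, Multiset.count_add,
          Multiset.insert_eq_cons]
        by_cases h1 : x = g
        · subst h1
          simp [Multiset.count_cons, Multiset.count_singleton, hgneg, Ne.symm hgneg,
            Multiset.count_replicate, hSg]
        · by_cases h2 : x = -g
          · subst h2
            simp [Multiset.count_cons, Multiset.count_singleton, hgneg, Ne.symm hgneg,
              Multiset.count_replicate, hSng]
            omega
          · have h1' : ¬ (g = x) := fun h => h1 h.symm
            have h2' : ¬ (-g = x) := fun h => h2 h.symm
            simp [Multiset.count_cons, Multiset.count_singleton, h1, h2, h1', h2',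
              Multiset.count_replicate]
      rw [hW0eq] at hsum0
      rw [← hkey] at hsum0
      exact add_left_cancel hsum0
    obtain ⟨W1, W2, r, hr⟩ := exists_two_of_two_le_card hcz'
    have hW1z' : W1 ∈ z' := by rw [hr]; exact Multiset.mem_cons_self _ _
    have hW1atom : IsMinZeroSum W1 := hz0.1 W1 (Multiset.mem_cons_of_mem hW1z')
    have hW2z'x : W2 ∈ z' := by
      rw [hr]
      exact Multiset.mem_cons_of_mem (Multiset.mem_cons_self _ _)
    have hW2atom : IsMinZeroSum W2 := hz0.1 W2 (Multiset.mem_cons_of_mem hW2z'x)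
    have hW1le : W1 ≤ z'.sum := le_sum_of_mem' hW1z'
    have hW1card : card W1 < card z'.sum := by
      rw [hr, Multiset.sum_cons, Multiset.sum_cons, Multiset.card_add, Multiset.card_add]
      have := Multiset.card_pos.mpr hW2atom.1
      omega
    refine hA1.2.2 W1 (hz'A1 ▸ hW1le) hW1atom.1 ?_ hW1atom.2.1
    intro h
    rw [← hz'A1] at h
    rw [h] at hW1card
    omega
  · -- count (-g) W0 = 0
    push_neg at hc
    have hcng0 : count (-g) W0 = 0 := by omega
    have hcgW0 : count g W0 = 1 := by
      have h1 := Multiset.one_le_count_iff_mem.mpr hgW0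
      have h2 : count g W0 ≤ count g (U + V) := by
        rw [← hz0.2]
        exact Multiset.count_le_of_le g (le_sum_of_mem' (Multiset.mem_cons_self _ _))
      omega
    -- counts in z'.sum
    have hz'g : count g z'.sum = 0 := by
      have := congrArg (count g) hsum0
      rw [Multiset.count_add, hcgW0, hUVg] at this
      omega
    have hz'ng : count (-g) z'.sum = addOrderOf g := by
      have := congrArg (count (-g)) hsum0
      rw [Multiset.count_add, hcng0, hUVng] at this
      omega
    obtain ⟨W1, W2, r, hr⟩ := exists_two_of_two_le_card hcz'
    have hW1z' : W1 ∈ z' := by rw [hr]; exact Multiset.mem_cons_self _ _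
    have hW2z' : W2 ∈ z' := by rw [hr]; exact Multiset.mem_cons_of_mem (Multiset.mem_cons_self _ _)
    have hW1atom : IsMinZeroSum W1 := hz0.1 W1 (Multiset.mem_cons_of_mem hW1z')
    have hW2atom : IsMinZeroSum W2 := hz0.1 W2 (Multiset.mem_cons_of_mem hW2z')
    have hW1g : count g W1 = 0 := by
      have := Multiset.count_le_of_le g (le_sum_of_mem' hW1z')
      omega
    have hW2g : count g W2 = 0 := by
      have := Multiset.count_le_of_le g (le_sum_of_mem' hW2z')
      omega
    have h12le : W1 + W2 ≤ z'.sum := by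
      rw [hr, Multiset.sum_cons, Multiset.sum_cons, ← add_assoc]
      exact Multiset.le_add_right _ _
    -- each of W1, W2 contains -g
    have hy : ∀ W, W ∈ z' → IsMinZeroSum W → count g W = 0 → 1 ≤ count (-g) W := by
      intro W hWz' hWatom hWg
      by_contra h
      push_neg at h
      have hWS : W ≤ S := by
        rw [Multiset.le_iff_count]
        intro x
        by_cases h1 : x = g
        · subst h1; omega
        · by_cases h2 : x = -g
          · subst h2; omega
          · rw [← hUVx x h1 h2, ← hz0.2]
            exact Multiset.count_le_of_le x (le_sum_of_mem' (Multiset.mem_cons_of_mem hWz'))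
      refine hU.2.2 W (hWS.trans hSU) hWatom.1 ?_ hWatom.2.1
      intro h
      rw [h] at hWS
      have := Multiset.card_le_card hWS
      omega
    have hy1 := hy W1 hW1z' hW1atom hW1g
    have hy2 := hy W2 hW2z' hW2atom hW2g
    have hy12 : count (-g) W1 + count (-g) W2 ≤ addOrderOf g := by
      have := Multiset.count_le_of_le (-g) h12le
      rw [Multiset.count_add] at this
      omega
    obtain ⟨m, hm⟩ : ∃ m, count (-g) W1 = m + 1 := ⟨count (-g) W1 - 1, by omega⟩
    have hmn : m + 2 ≤ addOrderOf g := by omega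
    -- decompose W0 = g ::ₘ S0 and W1 = (-g)^(m+1) + S1
    set S0 := W0.filter (· ≠ g) with hS0def
    have hW0dec : replicate 1 g + S0 = W0 := by
      have h1 := Multiset.filter_add_not (fun x => x = g) W0
      rw [Multiset.filter_eq', hcgW0] at h1
      exact h1
    have hS0g : count g S0 = 0 := Multiset.count_filter_of_neg (by simp)
    have hS0ng : count (-g) S0 = 0 := by
      have h := Multiset.count_le_of_le (-g) (Multiset.filter_le (· ≠ g) W0)
      rw [← hS0def] at h
      omega
    have hS0sum : S0.sum = -g := by
      have := hW0atom.2.1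
      rw [← hW0dec, Multiset.sum_add, Multiset.sum_replicate, one_nsmul] at this
      exact eq_neg_of_add_eq_zero_right this
    have hS0ne : S0 ≠ 0 := by
      intro h
      rw [h] at hS0sum
      simp at hS0sum
      exact hg0 hS0sum
    set S1 := W1.filter (· ≠ -g) with hS1def
    have hW1dec : replicate (m + 1) (-g) + S1 = W1 := by
      have h1 := Multiset.filter_add_not (fun x => x = -g) W1
      rw [Multiset.filter_eq', hm] at h1
      exact h1
    have hS1ng : count (-g) S1 = 0 := Multiset.count_filter_of_neg (by simp)
    have hS1g : count g S1 = 0 := by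
      have h := Multiset.count_le_of_le g (Multiset.filter_le (· ≠ -g) W1)
      rw [← hS1def] at h
      omega
    have hS1sum : S1.sum = (m + 1) • g := by
      have := hW1atom.2.1
      rw [← hW1dec, Multiset.sum_add, Multiset.sum_replicate] at this
      have h2 := eq_neg_of_add_eq_zero_right this
      rw [h2, smul_neg, neg_neg]
    -- the contradiction sequence C
    set C := S0 + S1 + replicate m (-g) with hCdef
    have hCsum : C.sum = 0 := by
      rw [hCdef, Multiset.sum_add, Multiset.sum_add, hS0sum, hS1sum,
        Multiset.sum_replicate, succ_nsmul, smul_neg]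
      abel
    have hCne : C ≠ 0 := by
      intro h
      have hcc := congrArg card h
      rw [hCdef, Multiset.card_add, Multiset.card_add, Multiset.card_replicate,
        Multiset.card_zero] at hcc
      exact hS0ne (Multiset.card_eq_zero.mp (by omega))
    -- S0 + S1 ≤ S via counts
    have hW01le : W0 + W1 ≤ U + V := by
      rw [← hz0.2, Multiset.sum_cons]
      exact add_le_add le_rfl (le_sum_of_mem' hW1z')
    have hS01 : ∀ x, x ≠ g → x ≠ -g → count x S0 + count x S1 ≤ count x S := by
      intro x h1 h2
      have ha := Multiset.count_le_of_le x hW01le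
      rw [Multiset.count_add, hUVx x h1 h2] at ha
      have hb : count x S0 ≤ count x W0 := Multiset.count_le_of_le x (Multiset.filter_le _ _)
      have hc2 : count x S1 ≤ count x W1 := Multiset.count_le_of_le x (Multiset.filter_le _ _)
      omega
    have hCle : C ≤ S + replicate (addOrderOf g - 1) (-g) := by
      rw [Multiset.le_iff_count]
      intro x
      rw [hCdef, Multiset.count_add, Multiset.count_add, Multiset.count_add,
        Multiset.count_replicate, Multiset.count_replicate]
      by_cases h1 : x = g
      · subst h1
        rw [if_neg (Ne.symm hgneg), if_neg (Ne.symm hgneg)]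
        omega
      · by_cases h2 : x = -g
        · subst h2
          rw [if_pos rfl, if_pos rfl]
          omega
        · rw [if_neg (fun h => h2 h.symm), if_neg (fun h => h2 h.symm)]
          have := hS01 x h1 h2
          omega
    have hCneA1 : C ≠ S + replicate (addOrderOf g - 1) (-g) := by
      intro h
      have hcc := congrArg (count (-g)) h
      rw [hCdef, Multiset.count_add, Multiset.count_add, Multiset.count_add,
        Multiset.count_replicate, Multiset.count_replicate, if_pos rfl, if_pos rfl,
        hS0ng, hS1ng, hSng] at hcc
      omega
    exact hA1.2.2 C hCle hCne hCneA1 hCsum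

/-- If U is an atom containing both g and -g (g ≠ -g), then U = {g, -g}. -/
lemma eq_pair_of_counts {g : G} {U : Multiset G} (hU : IsMinZeroSum U) (hgneg : g ≠ -g)
    (h1 : 1 ≤ count g U) (h2 : 1 ≤ count (-g) U) : U = {g, -g} := by
  have hpairle : ({g, -g} : Multiset G) ≤ U := by
    rw [Multiset.le_iff_count]
    intro x
    by_cases hx1 : x = g
    · subst hx1
      simp [Multiset.insert_eq_cons, Multiset.count_cons, Multiset.count_singleton, hgneg]
      omega
    · by_cases hx2 : x = -g
      · subst hx2
        simp [Multiset.insert_eq_cons, Multiset.count_cons, Ne.symm hgneg]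
        omega
      · simp [Multiset.insert_eq_cons, Multiset.count_cons, hx1, hx2]
  by_contra hne
  exact hU.2.2 _ hpairle (by simp) (fun h => hne h.symm) (by simp)

/-- Factor-count bound: if A is close to a proper portion S of an atom U except at c,
then any factorization of A has every factor containing c, so at most count c A factors. -/
lemma factor_bound {c : G} {U S A : Multiset G} (hU : IsMinZeroSum U)
    (hSU : S ≤ U) (hScard : card S < card U)
    (hAx : ∀ x, x ≠ c → count x A ≤ count x S)
    {z : Multiset (Multiset G)} (hz : IsFactorization A z) :
    card z ≤ count c A := by
  have hall : ∀ W ∈ z, 1 ≤ count c W := by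
    intro W hW
    by_contra h
    push_neg at h
    have hWatom := hz.1 W hW
    have hWS : W ≤ S := by
      rw [Multiset.le_iff_count]
      intro x
      by_cases hx : x = c
      · subst hx; omega
      · have h1 : count x W ≤ count x A := by
          rw [← hz.2]
          exact Multiset.count_le_of_le x (le_sum_of_mem' hW)
        have := hAx x hx
        omega
    refine hU.2.2 W (hWS.trans hSU) hWatom.1 ?_ hWatom.2.1
    intro heq
    rw [heq] at hWS
    have := Multiset.card_le_card hWS
    omega
  rw [← hz.2]
  exact card_le_count_of_forall_mem c hall

lemma sum_replicate_pair (s : ℕ) (g : G) :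
    (replicate s ({g, -g} : Multiset G)).sum = replicate s g + replicate s (-g) := by
  induction s with
  | zero => simp
  | succ k ih =>
    rw [Multiset.replicate_succ, Multiset.sum_cons, ih]
    have h1 : ({g, -g} : Multiset G) = {g} + {-g} := by
      rw [Multiset.insert_eq_cons, ← Multiset.singleton_add]
    rw [h1, add_add_add_comm]
    congr 1 <;> rw [Multiset.replicate_succ, ← Multiset.singleton_add]

end Aux

theorem statement3 {G : Type*} [AddCommGroup G] [Fintype G] [DecidableEq G]
    (hG : 3 ≤ Fintype.card G)
    (U V : Multiset G) (hU : IsMinZeroSum U) (hV : IsMinZeroSum V)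
    (hmax : ∃ k ∈ LengthsSet (U + V), 3 ≤ k)
    (g : G)
    (hno : ∀ k ∈ LengthsSet (U + V), ¬ (3 ≤ k ∧ k ≤ addOrderOf g)) :
    U.count g + V.count (-g) ≤ addOrderOf g := by
  by_contra hcon
  push_neg at hcon
  obtain ⟨k0, ⟨z0, hz0card, hz0atoms, hz0sum⟩, hk03⟩ := hmax
  have hz0 : IsFactorization (U + V) z0 := ⟨hz0atoms, hz0sum⟩
  have hcard3 : 3 ≤ Multiset.card z0 := by omega
  have hnpos : 0 < addOrderOf g := addOrderOf_pos g
  have haU : count g U ≤ addOrderOf g := count_le_ord hU g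
  have hbV : count (-g) V ≤ addOrderOf g := by
    have := count_le_ord hV (-g)
    rwa [addOrderOf_neg] at this
  rcases show addOrderOf g = 1 ∨ addOrderOf g = 2 ∨ 3 ≤ addOrderOf g by omega with h1 | h2 | h3
  · -- order 1
    have hUrep : U = replicate (addOrderOf g) g := eq_replicate_of_ord_le_count hU g (by omega)
    have hVrep : V = replicate (addOrderOf (-g)) (-g) :=
      eq_replicate_of_ord_le_count hV (-g) (by rw [addOrderOf_neg]; omega)
    have hcardz := card_le_card_sum (fun W hW => (hz0atoms W hW).1)
    rw [hz0sum, Multiset.card_add, hUrep, hVrep, Multiset.card_replicate,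
      Multiset.card_replicate, addOrderOf_neg] at hcardz
    omega
  · -- order 2
    have hg2 : -g = g := by
      have h := addOrderOf_nsmul_eq_zero g
      rw [h2, two_nsmul] at h
      exact neg_eq_of_add_eq_zero_left h
    rw [hg2] at hcon hbV
    by_cases hb2 : 2 ≤ count g V
    · have := n2' h2 hU hV (by omega) hb2 z0 hz0
      omega
    · have hz0' : IsFactorization (V + U) z0 := by rwa [add_comm]
      have := n2' h2 hV hU (by omega) (by omega) z0 hz0'
      omega
  · -- order ≥ 3, the master case
    have hgneg : g ≠ -g := ne_neg_of_three_le h3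
    have hg0 : g ≠ 0 := zero_ne_of_three_le h3
    have ha1 : 1 ≤ count g U := by omega
    have hb1 : 1 ≤ count (-g) V := by omega
    -- exclusion: U contains -g
    by_cases hexc1 : 1 ≤ count (-g) U
    · have hUpair : U = {g, -g} := eq_pair_of_counts hU hgneg ha1 hexc1
      have haeq : count g U = 1 := by
        rw [hUpair]
        simp [Multiset.insert_eq_cons, Multiset.count_cons, Multiset.count_singleton, hgneg]
      have hVrep : V = replicate (addOrderOf g) (-g) := by
        have := eq_replicate_of_ord_le_count hV (-g) (by rw [addOrderOf_neg]; omega)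
        rwa [addOrderOf_neg] at this
      have hUV : U + V = g ::ₘ replicate (addOrderOf g + 1) (-g) := by
        rw [hUpair, hVrep, Multiset.insert_eq_cons, Multiset.cons_add,
          Multiset.singleton_add, ← Multiset.replicate_succ]
      have := m2 h3 z0 (by rw [← hUV]; exact hz0)
      omega
    push_neg at hexc1
    -- exclusion: V contains g
    by_cases hexc2 : 1 ≤ count g V
    · have hVpair : V = {g, -g} := eq_pair_of_counts hV hgneg hexc2 hb1
      have hbeq : count (-g) V = 1 := by
        rw [hVpair]
        simp [Multiset.insert_eq_cons, Multiset.count_cons, Multiset.count_singleton,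
          Ne.symm hgneg]
      have hUrep : U = replicate (addOrderOf g) g := eq_replicate_of_ord_le_count hU g (by omega)
      have hUV : V + U = (-g) ::ₘ replicate (addOrderOf g + 1) g := by
        rw [hVpair, hUrep, Multiset.insert_eq_cons, Multiset.cons_add,
          Multiset.singleton_add, Multiset.replicate_succ, Multiset.cons_swap]
      have := m2 (g := -g) (by rwa [addOrderOf_neg]) z0 (by
        rw [addOrderOf_neg, neg_neg, ← hUV, add_comm]
        exact hz0)
      omega
    push_neg at hexc2
    have hUng : count (-g) U = 0 := by omega
    have hVg : count g V = 0 := by omega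
    -- notation
    obtain ⟨a, ha⟩ : ∃ a, count g U = a := ⟨_, rfl⟩
    obtain ⟨b, hb⟩ : ∃ b, count (-g) V = b := ⟨_, rfl⟩
    obtain ⟨n, hn⟩ : ∃ n, addOrderOf g = n := ⟨_, rfl⟩
    have hab : n < a + b := by rw [← ha, ← hb, ← hn]; exact hcon
    have han : a ≤ n := by omega
    have hbn : b ≤ n := by omega
    have ha1' : 1 ≤ a := by omega
    have hb1' : 1 ≤ b := by omega
    have hn3 : 3 ≤ n := by omega
    -- decompositions
    set S := U.filter (· ≠ g) with hSdef
    have hUdec : replicate a g + S = U := by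
      have h := Multiset.filter_add_not (fun x => x = g) U
      rw [Multiset.filter_eq', ha] at h
      exact h
    have hSg : count g S = 0 := Multiset.count_filter_of_neg (by simp)
    have hSng : count (-g) S = 0 := by
      have h := Multiset.count_le_of_le (-g) (Multiset.filter_le (· ≠ g) U)
      rw [← hSdef] at h
      omega
    set T := V.filter (· ≠ -g) with hTdef
    have hVdec : replicate b (-g) + T = V := by
      have h := Multiset.filter_add_not (fun x => x = -g) V
      rw [Multiset.filter_eq', hb] at h
      exact h
    have hTng : count (-g) T = 0 := Multiset.count_filter_of_neg (by simp)
    have hTg : count g T = 0 := by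
      have h := Multiset.count_le_of_le g (Multiset.filter_le (· ≠ -g) V)
      rw [← hTdef] at h
      omega
    have hSU : S ≤ U := Multiset.filter_le _ U
    have hTV : T ≤ V := Multiset.filter_le _ V
    have hScard : card S < card U := by
      have := congrArg card hUdec
      rw [Multiset.card_add, Multiset.card_replicate] at this
      omega
    have hTcard : card T < card V := by
      have := congrArg card hVdec
      rw [Multiset.card_add, Multiset.card_replicate] at this
      omega
    set s := a + b - n with hsdef
    have hs1 : 1 ≤ s := by omega
    set A1 := S + replicate (n - a) (-g) with hA1def
    set A2 := T + replicate (n - b) g with hA2def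
    -- the key decomposition of U + V
    have hUV : U + V = (replicate s g + replicate s (-g)) + A1 + A2 := by
      rw [hA1def, hA2def, ← hUdec, ← hVdec]
      ext x
      simp only [Multiset.count_add, Multiset.count_replicate]
      by_cases h1 : g = x
      · by_cases h2 : -g = x
        · exact absurd (h1.trans h2.symm) hgneg
        · rw [if_pos h1, if_pos h1, if_pos h1, if_neg h2, if_neg h2, if_neg h2]
          omega
      · by_cases h2 : -g = x
        · rw [if_neg h1, if_neg h1, if_neg h1, if_pos h2, if_pos h2, if_pos h2]
          omega
        · rw [if_neg h1, if_neg h1, if_neg h1, if_neg h2, if_neg h2, if_neg h2]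
          omega
    -- zero sums of A1 and A2
    have hSsum : S.sum = -(a • g) := by
      have h := hU.2.1
      rw [← hUdec, Multiset.sum_add, Multiset.sum_replicate] at h
      exact eq_neg_of_add_eq_zero_right h
    have hTsum : T.sum = b • g := by
      have h := hV.2.1
      rw [← hVdec, Multiset.sum_add, Multiset.sum_replicate] at h
      have h2 := eq_neg_of_add_eq_zero_right h
      rw [h2, smul_neg, neg_neg]
    have hA1sum : A1.sum = 0 := by
      rw [hA1def, Multiset.sum_add, Multiset.sum_replicate, hSsum, smul_neg, ← neg_add,
        ← add_nsmul]
      have hh : a + (n - a) = n := by omega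
      rw [hh, ← hn, addOrderOf_nsmul_eq_zero, neg_zero]
    have hA2sum : A2.sum = 0 := by
      rw [hA2def, Multiset.sum_add, Multiset.sum_replicate, hTsum, ← add_nsmul]
      have hh : b + (n - b) = n := by omega
      rw [hh, ← hn, addOrderOf_nsmul_eq_zero]
    -- factorization length bounds
    have hbound1 : ∀ z, IsFactorization A1 z → card z ≤ n - a := by
      intro z hz
      have hAx : ∀ x, x ≠ -g → count x A1 ≤ count x S := by
        intro x hx
        rw [hA1def, Multiset.count_add, Multiset.count_replicate,
          if_neg (fun hh => hx hh.symm)]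
        omega
      have h := factor_bound hU hSU hScard hAx hz
      rw [hA1def, Multiset.count_add, Multiset.count_replicate, if_pos rfl, hSng] at h
      omega
    have hbound2 : ∀ z, IsFactorization A2 z → card z ≤ n - b := by
      intro z hz
      have hAx : ∀ x, x ≠ g → count x A2 ≤ count x T := by
        intro x hx
        rw [hA2def, Multiset.count_add, Multiset.count_replicate,
          if_neg (fun hh => hx hh.symm)]
        omega
      have h := factor_bound hV hTV hTcard hAx hz
      rw [hA2def, Multiset.count_add, Multiset.count_replicate, if_pos rfl, hTg] at h
      omega
    -- key: any pair of factorizations of A1 and A2 yields a length s + l1 + l2 ∈ L(UV)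
    have hk1 : ∀ z1 z2, IsFactorization A1 z1 → IsFactorization A2 z2 →
        ¬ (3 ≤ s + card z1 + card z2) := by
      intro z1 z2 hz1 hz2 hge3
      have hle_n : s + card z1 + card z2 ≤ n := by
        have := hbound1 z1 hz1
        have := hbound2 z2 hz2
        omega
      refine hno (s + card z1 + card z2) ⟨replicate s ({g, -g}) + z1 + z2, ?_, ?_, ?_⟩
        ⟨hge3, by omega⟩
      · rw [Multiset.card_add, Multiset.card_add, Multiset.card_replicate]
      · intro W hW
        rcases Multiset.mem_add.mp hW with hW | hW
        · rcases Multiset.mem_add.mp hW with hW | hW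
          · rw [eq_of_mem_replicate hW]
            exact atom_pair hg0
          · exact hz1.1 W hW
        · exact hz2.1 W hW
      · rw [Multiset.sum_add, Multiset.sum_add, sum_replicate_pair, hz1.2, hz2.2, hUV]
    -- case analysis
    by_cases hA1z : A1 = 0
    · have hcc := congrArg card hA1z
      rw [hA1def, Multiset.card_add, Multiset.card_replicate, Multiset.card_zero] at hcc
      have hSz : S = 0 := Multiset.card_eq_zero.mp (by omega)
      have haeqn : a = n := by omega
      have hf0 : IsFactorization A1 0 := ⟨by simp, by rw [Multiset.sum_zero, hA1z]⟩
      have hUrep : U = replicate n g := by rw [← hUdec, haeqn, hSz, add_zero]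
      by_cases hA2z : A2 = 0
      · have hcc2 := congrArg card hA2z
        rw [hA2def, Multiset.card_add, Multiset.card_replicate, Multiset.card_zero] at hcc2
        have hbeqn : b = n := by omega
        have hf0' : IsFactorization A2 0 := ⟨by simp, by rw [Multiset.sum_zero, hA2z]⟩
        exact hk1 0 0 hf0 hf0' (by simp only [Multiset.card_zero]; omega)
      · by_cases hA2atom : IsMinZeroSum A2
        · have hf1 : IsFactorization A2 {A2} :=
            ⟨fun W hW => by rw [Multiset.mem_singleton.mp hW]; exact hA2atom, by simp⟩
          have hsle : s + 0 + 1 ≤ 2 := by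
            by_contra hcc2
            exact hk1 0 {A2} hf0 hf1 (by
              simp only [Multiset.card_zero, Multiset.card_singleton]
              omega)
          have hseq : s = 1 := by omega
          have hbeq1 : b = 1 := by omega
          -- symmetric claimB application
          have hVdec' : V = (-g) ::ₘ T := by
            rw [← hVdec, hbeq1]
            rw [Multiset.replicate_one, Multiset.singleton_add]
          have hA2' : IsMinZeroSum (T + replicate (addOrderOf (-g) - 1) (-(-g))) := by
            rw [addOrderOf_neg, neg_neg, hn]
            have : A2 = T + replicate (n - 1) g := by rw [hA2def, hbeq1]
            rwa [this] at hA2atom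
          have hUrep' : U = replicate (addOrderOf (-g)) (-(-g)) := by
            rw [addOrderOf_neg, neg_neg, hn]
            exact hUrep
          have := claimB (g := -g) (by rw [addOrderOf_neg]; omega) hV hVdec' hTng
            (by rw [neg_neg]; exact hTg) hA2' hUrep' z0 (by rwa [add_comm])
          omega
        · obtain ⟨z2', hz2', hc2'⟩ := exists_fact_two A2 hA2sum hA2z hA2atom
          exact hk1 0 z2' hf0 hz2' (by simp only [Multiset.card_zero]; omega)
    · by_cases hA2z : A2 = 0
      · have hcc := congrArg card hA2z
        rw [hA2def, Multiset.card_add, Multiset.card_replicate, Multiset.card_zero] at hcc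
        have hTz : T = 0 := Multiset.card_eq_zero.mp (by omega)
        have hbeqn : b = n := by omega
        have hf0 : IsFactorization A2 0 := ⟨by simp, by rw [Multiset.sum_zero, hA2z]⟩
        have hVrep : V = replicate n (-g) := by rw [← hVdec, hbeqn, hTz, add_zero]
        by_cases hA1atom : IsMinZeroSum A1
        · have hf1 : IsFactorization A1 {A1} :=
            ⟨fun W hW => by rw [Multiset.mem_singleton.mp hW]; exact hA1atom, by simp⟩
          have hsle : s + 1 + 0 ≤ 2 := by
            by_contra hcc2
            exact hk1 {A1} 0 hf1 hf0 (by
              simp only [Multiset.card_zero, Multiset.card_singleton]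
              omega)
          have hseq : s = 1 := by omega
          have haeq1 : a = 1 := by omega
          have hUdec' : U = g ::ₘ S := by
            rw [← hUdec, haeq1]
            rw [Multiset.replicate_one, Multiset.singleton_add]
          have hA1' : IsMinZeroSum (S + replicate (addOrderOf g - 1) (-g)) := by
            rw [hn]
            have : A1 = S + replicate (n - 1) (-g) := by rw [hA1def, haeq1]
            rwa [this] at hA1atom
          have hVrep' : V = replicate (addOrderOf g) (-g) := by rw [hn]; exact hVrep
          have := claimB h3 hU hUdec' hSg hSng hA1' hVrep' z0 hz0
          omega
        · obtain ⟨z1', hz1', hc1'⟩ := exists_fact_two A1 hA1sum hA1z hA1atom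
          exact hk1 z1' 0 hz1' hf0 (by simp only [Multiset.card_zero]; omega)
      · obtain ⟨z1, hz1, hz1c⟩ := exists_fact A1 hA1sum
        obtain ⟨z2, hz2, hz2c⟩ := exists_fact A2 hA2sum
        have h1 := hz1c hA1z
        have h2 := hz2c hA2z
        exact hk1 z1 z2 hz1 hz2 (by omega)
end

section
/- Let G = C₄ ⊕ C₄ and let U, V be minimal zero-sum sequences over G such that L(UV) ∩ [2,5] = {2,5}. Then the support of UV generates G. -/
open Multiset

set_option maxRecDepth 20000
set_option maxHeartbeats 4000000
set_option synthInstance.maxSize 2000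
set_option synthInstance.maxHeartbeats 1000000

namespace Statement5Aux

instance (priority := high) decExistsMultiset {α : Type*} (m : Multiset α) (p : α → Prop)
    [DecidablePred p] : Decidable (∃ x ∈ m, p x) := Multiset.decidableExistsMultiset

abbrev G4 := ZMod 4 × ZMod 4
abbrev MG := Multiset G4

def AtomDec (S : MG) : Prop :=
  S ≠ 0 ∧ S.sum = 0 ∧ ∀ T ∈ S.powerset, T ≠ 0 → T ≠ S → T.sum ≠ 0

instance : DecidablePred AtomDec := fun S => by unfold AtomDec; infer_instance

lemma isMin_iff (S : MG) : IsMinZeroSum S ↔ AtomDec S := by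
  unfold IsMinZeroSum AtomDec
  simp only [Multiset.mem_powerset]

def l1 : List MG := [{(0,1), (0,1), (0,1), (2,0), (2,1)}, {(0,1), (0,1), (0,1), (2,2), (2,3)}, {(0,1), (2,0), (2,1), (2,1), (2,1)}, {(0,1), (2,2), (2,3), (2,3), (2,3)}, {(0,3), (0,3), (0,3), (2,0), (2,3)}, {(0,3), (0,3), (0,3), (2,1), (2,2)}, {(0,3), (2,0), (2,3), (2,3), (2,3)}, {(0,3), (2,1), (2,1), (2,1), (2,2)}]
def l2 : List MG := [{(0,2), (1,0), (1,0), (1,0), (1,2)}, {(0,2), (1,0), (1,2), (1,2), (1,2)}, {(0,2), (3,0), (3,0), (3,0), (3,2)}, {(0,2), (3,0), (3,2), (3,2), (3,2)}, {(1,0), (1,0), (1,0), (2,2), (3,2)}, {(1,0), (2,2), (3,2), (3,2), (3,2)}, {(1,2), (1,2), (1,2), (2,2), (3,0)}, {(1,2), (2,2), (3,0), (3,0), (3,0)}]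
def l3 : List MG := [{(0,2), (1,1), (1,1), (1,1), (1,3)}, {(0,2), (1,1), (1,3), (1,3), (1,3)}, {(0,2), (3,1), (3,1), (3,1), (3,3)}, {(0,2), (3,1), (3,3), (3,3), (3,3)}, {(1,1), (1,1), (1,1), (2,0), (3,1)}, {(1,1), (2,0), (3,1), (3,1), (3,1)}, {(1,3), (1,3), (1,3), (2,0), (3,3)}, {(1,3), (2,0), (3,3), (3,3), (3,3)}]
def masterlist : List ((MG × MG) × Multiset MG) := [
  (({(0,1), (0,1), (0,1), (2,0), (2,1)}, {(0,3), (0,3), (0,3), (2,0), (2,3)}), {{(0,1), (0,3)}, {(0,1), (0,3)}, {(0,1), (2,0), (2,3)}, {(0,3), (2,0), (2,1)}}),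
  (({(0,1), (0,1), (0,1), (2,2), (2,3)}, {(0,3), (0,3), (0,3), (2,1), (2,2)}), {{(0,1), (0,3)}, {(0,1), (0,3)}, {(0,1), (2,1), (2,2)}, {(0,3), (2,2), (2,3)}}),
  (({(0,1), (2,0), (2,1), (2,1), (2,1)}, {(0,3), (2,0), (2,3), (2,3), (2,3)}), {{(0,1), (2,0), (2,3)}, {(0,3), (2,0), (2,1)}, {(2,1), (2,3)}, {(2,1), (2,3)}}),
  (({(0,1), (2,2), (2,3), (2,3), (2,3)}, {(0,3), (2,1), (2,1), (2,1), (2,2)}), {{(0,1), (2,1), (2,2)}, {(0,3), (2,2), (2,3)}, {(2,1), (2,3)}, {(2,1), (2,3)}}),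
  (({(0,3), (0,3), (0,3), (2,0), (2,3)}, {(0,1), (0,1), (0,1), (2,0), (2,1)}), {{(0,1), (0,3)}, {(0,1), (0,3)}, {(0,1), (2,0), (2,3)}, {(0,3), (2,0), (2,1)}}),
  (({(0,3), (0,3), (0,3), (2,1), (2,2)}, {(0,1), (0,1), (0,1), (2,2), (2,3)}), {{(0,1), (0,3)}, {(0,1), (0,3)}, {(0,1), (2,1), (2,2)}, {(0,3), (2,2), (2,3)}}),
  (({(0,3), (2,0), (2,3), (2,3), (2,3)}, {(0,1), (2,0), (2,1), (2,1), (2,1)}), {{(0,1), (2,0), (2,3)}, {(0,3), (2,0), (2,1)}, {(2,1), (2,3)}, {(2,1), (2,3)}}),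
  (({(0,3), (2,1), (2,1), (2,1), (2,2)}, {(0,1), (2,2), (2,3), (2,3), (2,3)}), {{(0,1), (2,1), (2,2)}, {(0,3), (2,2), (2,3)}, {(2,1), (2,3)}, {(2,1), (2,3)}}),
  (({(0,2), (1,0), (1,0), (1,0), (1,2)}, {(0,2), (3,0), (3,0), (3,0), (3,2)}), {{(0,2), (1,0), (3,2)}, {(0,2), (1,2), (3,0)}, {(1,0), (3,0)}, {(1,0), (3,0)}}),
  (({(0,2), (1,0), (1,2), (1,2), (1,2)}, {(0,2), (3,0), (3,2), (3,2), (3,2)}), {{(0,2), (1,0), (3,2)}, {(0,2), (1,2), (3,0)}, {(1,2), (3,2)}, {(1,2), (3,2)}}),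
  (({(0,2), (3,0), (3,0), (3,0), (3,2)}, {(0,2), (1,0), (1,0), (1,0), (1,2)}), {{(0,2), (1,0), (3,2)}, {(0,2), (1,2), (3,0)}, {(1,0), (3,0)}, {(1,0), (3,0)}}),
  (({(0,2), (3,0), (3,2), (3,2), (3,2)}, {(0,2), (1,0), (1,2), (1,2), (1,2)}), {{(0,2), (1,0), (3,2)}, {(0,2), (1,2), (3,0)}, {(1,2), (3,2)}, {(1,2), (3,2)}}),
  (({(1,0), (1,0), (1,0), (2,2), (3,2)}, {(1,2), (2,2), (3,0), (3,0), (3,0)}), {{(1,0), (3,0)}, {(1,0), (3,0)}, {(1,0), (1,2), (2,2)}, {(2,2), (3,0), (3,2)}}),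
  (({(1,0), (2,2), (3,2), (3,2), (3,2)}, {(1,2), (1,2), (1,2), (2,2), (3,0)}), {{(1,0), (1,2), (2,2)}, {(1,2), (3,2)}, {(1,2), (3,2)}, {(2,2), (3,0), (3,2)}}),
  (({(1,2), (1,2), (1,2), (2,2), (3,0)}, {(1,0), (2,2), (3,2), (3,2), (3,2)}), {{(1,0), (1,2), (2,2)}, {(1,2), (3,2)}, {(1,2), (3,2)}, {(2,2), (3,0), (3,2)}}),
  (({(1,2), (2,2), (3,0), (3,0), (3,0)}, {(1,0), (1,0), (1,0), (2,2), (3,2)}), {{(1,0), (3,0)}, {(1,0), (3,0)}, {(1,0), (1,2), (2,2)}, {(2,2), (3,0), (3,2)}}),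
  (({(0,2), (1,1), (1,1), (1,1), (1,3)}, {(0,2), (3,1), (3,3), (3,3), (3,3)}), {{(0,2), (1,3), (3,3)}, {(0,2), (1,1), (3,1)}, {(1,1), (3,3)}, {(1,1), (3,3)}}),
  (({(0,2), (1,1), (1,3), (1,3), (1,3)}, {(0,2), (3,1), (3,1), (3,1), (3,3)}), {{(0,2), (1,3), (3,3)}, {(0,2), (1,1), (3,1)}, {(1,3), (3,1)}, {(1,3), (3,1)}}),
  (({(0,2), (3,1), (3,1), (3,1), (3,3)}, {(0,2), (1,1), (1,3), (1,3), (1,3)}), {{(0,2), (1,3), (3,3)}, {(0,2), (1,1), (3,1)}, {(1,3), (3,1)}, {(1,3), (3,1)}}),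
  (({(0,2), (3,1), (3,3), (3,3), (3,3)}, {(0,2), (1,1), (1,1), (1,1), (1,3)}), {{(0,2), (1,3), (3,3)}, {(0,2), (1,1), (3,1)}, {(1,1), (3,3)}, {(1,1), (3,3)}}),
  (({(1,1), (1,1), (1,1), (2,0), (3,1)}, {(1,3), (2,0), (3,3), (3,3), (3,3)}), {{(1,1), (3,3)}, {(1,1), (3,3)}, {(1,1), (1,3), (2,0)}, {(2,0), (3,1), (3,3)}}),
  (({(1,1), (2,0), (3,1), (3,1), (3,1)}, {(1,3), (1,3), (1,3), (2,0), (3,3)}), {{(1,1), (1,3), (2,0)}, {(1,3), (3,1)}, {(1,3), (3,1)}, {(2,0), (3,1), (3,3)}}),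
  (({(1,3), (1,3), (1,3), (2,0), (3,3)}, {(1,1), (2,0), (3,1), (3,1), (3,1)}), {{(1,1), (1,3), (2,0)}, {(1,3), (3,1)}, {(1,3), (3,1)}, {(2,0), (3,1), (3,3)}}),
  (({(1,3), (2,0), (3,3), (3,3), (3,3)}, {(1,1), (1,1), (1,1), (2,0), (3,1)}), {{(1,1), (3,3)}, {(1,1), (3,3)}, {(1,1), (1,3), (2,0)}, {(2,0), (3,1), (3,3)}})]

def e1 : Fin 8 → G4 := ![(0,0),(0,1),(0,2),(0,3),(2,0),(2,1),(2,2),(2,3)]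
def e2 : Fin 8 → G4 := ![(0,0),(1,0),(2,0),(3,0),(0,2),(1,2),(2,2),(3,2)]
def e3 : Fin 8 → G4 := ![(0,0),(0,2),(2,0),(2,2),(1,1),(1,3),(3,1),(3,3)]

lemma cov1 : ∀ g : G4, 2 * g.1 = 0 → ∃ i, e1 i = g := by decide
lemma cov2 : ∀ g : G4, 2 * g.2 = 0 → ∃ i, e2 i = g := by decide
lemma cov3 : ∀ g : G4, 2 * (g.1 + g.2) = 0 → ∃ i, e3 i = g := by decide

lemma par : ∀ a : ZMod 4, 2 * a ≠ 0 → 2 * a = 2 := by decide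

lemma dd : ∀ d : ZMod 4, 2 * d = 2 → d * d = 1 := by decide

lemma detOdd : ∀ x : G4, 2 * x.1 = 2 → ∀ y : G4, 2 * y.2 = 2 → ∀ z : G4, 2 * (z.1 + z.2) = 2 →
    2 * (x.1 * y.2 - x.2 * y.1) = 2 ∨ 2 * (x.1 * z.2 - x.2 * z.1) = 2 := by decide

lemma M1 : ∀ q ∈ masterlist, Multiset.card q.2 = 4 ∧ (∀ S ∈ q.2, AtomDec S) ∧
    q.2.sum = q.1.1 + q.1.2 := by decide

lemma P1 : ∀ U' ∈ l1, ∀ V' ∈ l1, Multiset.map (fun g : G4 => -g) (U' + V') = U' + V' →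
    (U', V') ∈ masterlist.map Prod.fst := by decide
lemma P2 : ∀ U' ∈ l2, ∀ V' ∈ l2, Multiset.map (fun g : G4 => -g) (U' + V') = U' + V' →
    (U', V') ∈ masterlist.map Prod.fst := by decide
lemma P3 : ∀ U' ∈ l3, ∀ V' ∈ l3, Multiset.map (fun g : G4 => -g) (U' + V') = U' + V' →
    (U', V') ∈ masterlist.map Prod.fst := by decide

lemma Z1 : ∀ i1 i2 : Fin 8, i1 ≤ i2 → ∀ i3, i2 ≤ i3 → ∀ i4, i3 ≤ i4 → ∀ i5, i4 ≤ i5 →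
    ∃ T ∈ (Multiset.map e1 ({i1,i2,i3,i4,i5} : Multiset (Fin 8))).powerset, T ≠ 0 ∧ T.sum = 0 := by
  decide
lemma Z2 : ∀ i1 i2 : Fin 8, i1 ≤ i2 → ∀ i3, i2 ≤ i3 → ∀ i4, i3 ≤ i4 → ∀ i5, i4 ≤ i5 →
    ∃ T ∈ (Multiset.map e2 ({i1,i2,i3,i4,i5} : Multiset (Fin 8))).powerset, T ≠ 0 ∧ T.sum = 0 := by
  decide
lemma Z3 : ∀ i1 i2 : Fin 8, i1 ≤ i2 → ∀ i3, i2 ≤ i3 → ∀ i4, i3 ≤ i4 → ∀ i5, i4 ≤ i5 →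
    ∃ T ∈ (Multiset.map e3 ({i1,i2,i3,i4,i5} : Multiset (Fin 8))).powerset, T ≠ 0 ∧ T.sum = 0 := by
  decide

lemma C1 : ∀ i1 i2 : Fin 8, i1 ≤ i2 → ∀ i3, i2 ≤ i3 → ∀ i4, i3 ≤ i4 → ∀ i5, i4 ≤ i5 →
    AtomDec (Multiset.map e1 ({i1,i2,i3,i4,i5} : Multiset (Fin 8))) →
    Multiset.map e1 ({i1,i2,i3,i4,i5} : Multiset (Fin 8)) ∈ l1 := by decide
lemma C2 : ∀ i1 i2 : Fin 8, i1 ≤ i2 → ∀ i3, i2 ≤ i3 → ∀ i4, i3 ≤ i4 → ∀ i5, i4 ≤ i5 →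
    AtomDec (Multiset.map e2 ({i1,i2,i3,i4,i5} : Multiset (Fin 8))) →
    Multiset.map e2 ({i1,i2,i3,i4,i5} : Multiset (Fin 8)) ∈ l2 := by decide
lemma C3 : ∀ i1 i2 : Fin 8, i1 ≤ i2 → ∀ i3, i2 ≤ i3 → ∀ i4, i3 ≤ i4 → ∀ i5, i4 ≤ i5 →
    AtomDec (Multiset.map e3 ({i1,i2,i3,i4,i5} : Multiset (Fin 8))) →
    Multiset.map e3 ({i1,i2,i3,i4,i5} : Multiset (Fin 8)) ∈ l3 := by decide

/-! ### Generic multiset helpers -/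

lemma le_join {α : Type*} {f : Multiset (Multiset α)} {S : Multiset α} (h : S ∈ f) :
    S ≤ f.sum := by
  obtain ⟨t, rfl⟩ := Multiset.exists_cons_of_mem h
  rw [Multiset.sum_cons]
  exact Multiset.le_add_right _ _

lemma mem_join {α : Type*} {a : α} : ∀ {f : Multiset (Multiset α)}, a ∈ f.sum → ∃ S ∈ f, a ∈ S := by
  intro f
  induction f using Multiset.induction_on with
  | empty => intro h; simp at h
  | cons S f ih =>
    intro h
    rw [Multiset.sum_cons, Multiset.mem_add] at h
    rcases h with h | h
    · exact ⟨S, Multiset.mem_cons_self _ _, h⟩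
    · obtain ⟨T, hT, ha⟩ := ih h
      exact ⟨T, Multiset.mem_cons_of_mem hT, ha⟩

lemma card_join {α : Type*} (f : Multiset (Multiset α)) :
    Multiset.card f.sum = (f.map Multiset.card).sum := by
  induction f using Multiset.induction_on with
  | empty => simp
  | cons S f ih => simp [ih]

lemma map_join {α : Type*} (g : α → α) (f : Multiset (Multiset α)) :
    f.sum.map g = (f.map (Multiset.map g)).sum := by
  induction f using Multiset.induction_on with
  | empty => simp
  | cons S f ih => simp [ih]

lemma exists_le_card {α : Type*} (n : ℕ) (S : Multiset α) (h : n ≤ Multiset.card S) :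
    ∃ T, T ≤ S ∧ Multiset.card T = n := by
  induction S using Multiset.induction_on generalizing n with
  | empty =>
    simp only [Multiset.card_zero, Nat.le_zero] at h
    exact ⟨0, le_rfl, by simp [h]⟩
  | cons a s ih =>
    rcases n with _ | m
    · exact ⟨0, Multiset.zero_le _, rfl⟩
    · obtain ⟨T, hT, hc⟩ := ih m (by simpa using h)
      exact ⟨a ::ₘ T, Multiset.cons_le_cons a hT, by simp [hc]⟩

lemma lift (e : Fin 8 → G4) (S : MG) (h : ∀ g ∈ S, ∃ i, e i = g) :
    ∃ u : Multiset (Fin 8), Multiset.map e u = S ∧ Multiset.card u = Multiset.card S := by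
  induction S using Multiset.induction_on with
  | empty => exact ⟨0, by simp, by simp⟩
  | cons a s ih =>
    obtain ⟨u, hue, huc⟩ := ih (fun g hg => h g (Multiset.mem_cons_of_mem hg))
    obtain ⟨i, hi⟩ := h a (Multiset.mem_cons_self a s)
    exact ⟨i ::ₘ u, by simp [hue, hi], by simp [huc]⟩

lemma quint (Q : Multiset (Fin 8) → Prop)
    (h : ∀ i1 i2 : Fin 8, i1 ≤ i2 → ∀ i3, i2 ≤ i3 → ∀ i4, i3 ≤ i4 → ∀ i5, i4 ≤ i5 →
      Q ({i1,i2,i3,i4,i5} : Multiset (Fin 8)))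
    (u : Multiset (Fin 8)) (hu : Multiset.card u = 5) : Q u := by
  obtain ⟨l, hs, he, hl⟩ : ∃ l : List (Fin 8), l.Pairwise (· ≤ ·) ∧
      (l : Multiset (Fin 8)) = u ∧ l.length = 5 :=
    ⟨Multiset.sort u (· ≤ ·), Multiset.pairwise_sort u _, Multiset.sort_eq u _, by
      have := congrArg Multiset.card (Multiset.sort_eq u (· ≤ ·))
      simpa [hu] using this⟩
  rcases l with _ | ⟨a, _ | ⟨b, _ | ⟨c, _ | ⟨d, _ | ⟨e', _ | ⟨x, t⟩⟩⟩⟩⟩⟩ <;> simp at hl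
  have s1 := fun x hx => List.rel_of_pairwise_cons hs (a' := x) hx
  have s2 := fun x hx => List.rel_of_pairwise_cons hs.of_cons (a' := x) hx
  have s3 := fun x hx => List.rel_of_pairwise_cons hs.of_cons.of_cons (a' := x) hx
  have s4 := fun x hx => List.rel_of_pairwise_cons hs.of_cons.of_cons.of_cons (a' := x) hx
  have key := h a b (s1 b (by simp)) c (s2 c (by simp)) d (s3 d (by simp)) e' (s4 e' (by simp))
  have : ({a, b, c, d, e'} : Multiset (Fin 8)) = (↑[a, b, c, d, e'] : Multiset (Fin 8)) := rfl
  rw [this, he] at key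
  exact key

/-! ### Structural lemmas -/

lemma smul_eq (n : ℕ) (x : G4) : n • x = ((n : ZMod 4) * x.1, (n : ZMod 4) * x.2) := by
  induction n with
  | zero => simp [Prod.ext_iff]
  | succ k ih =>
    rw [succ_nsmul, ih]
    simp [Prod.ext_iff, add_mul]

lemma gen2 (H : AddSubgroup G4) (w1 w2 : G4) (h1 : w1 ∈ H) (h2 : w2 ∈ H)
    (hd : 2 * (w1.1 * w2.2 - w1.2 * w2.1) = 2) : H = ⊤ := by
  obtain ⟨n1, hn1⟩ := ZMod.natCast_zmod_surjective w2.2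
  obtain ⟨n2, hn2⟩ := ZMod.natCast_zmod_surjective w1.2
  have hd0 : ((w1.1 * w2.2 - w1.2 * w2.1, 0) : G4) ∈ H := by
    have hm := H.sub_mem (H.nsmul_mem h1 n1) (H.nsmul_mem h2 n2)
    have heq : n1 • w1 - n2 • w2 = ((w1.1 * w2.2 - w1.2 * w2.1, 0) : G4) := by
      rw [smul_eq, smul_eq, hn1, hn2, Prod.ext_iff]
      constructor
      · simp [Prod.fst_sub]; ring
      · simp [Prod.snd_sub]; ring
    rwa [heq] at hm
  obtain ⟨m1, hm1⟩ := ZMod.natCast_zmod_surjective w1.1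
  obtain ⟨m2, hm2⟩ := ZMod.natCast_zmod_surjective w2.1
  have h0d : ((0, w1.1 * w2.2 - w1.2 * w2.1) : G4) ∈ H := by
    have hm := H.sub_mem (H.nsmul_mem h2 m1) (H.nsmul_mem h1 m2)
    have heq : m1 • w2 - m2 • w1 = ((0, w1.1 * w2.2 - w1.2 * w2.1) : G4) := by
      rw [smul_eq, smul_eq, hm1, hm2, Prod.ext_iff]
      constructor
      · simp [Prod.fst_sub]; ring
      · simp [Prod.snd_sub]; ring
    rwa [heq] at hm
  set d : ZMod 4 := w1.1 * w2.2 - w1.2 * w2.1 with hdef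
  have hdd : d * d = 1 := dd d hd
  obtain ⟨k, hk⟩ := ZMod.natCast_zmod_surjective d
  have h10 : ((1, 0) : G4) ∈ H := by
    have := H.nsmul_mem hd0 k
    rwa [smul_eq, hk, show (d * (d, (0:ZMod 4)).1, d * (d, (0:ZMod 4)).2) = ((1,0) : G4) by
      simp [Prod.ext_iff, hdd]] at this
  have h01 : ((0, 1) : G4) ∈ H := by
    have := H.nsmul_mem h0d k
    rwa [smul_eq, hk, show (d * ((0:ZMod 4), d).1, d * ((0:ZMod 4), d).2) = ((0,1) : G4) by
      simp [Prod.ext_iff, hdd]] at this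
  rw [AddSubgroup.eq_top_iff']
  intro g
  obtain ⟨a, ha⟩ := ZMod.natCast_zmod_surjective g.1
  obtain ⟨b, hb⟩ := ZMod.natCast_zmod_surjective g.2
  have hg : g = a • ((1, 0) : G4) + b • ((0, 1) : G4) := by
    rw [smul_eq, smul_eq, Prod.ext_iff]
    simp [ha, hb]
  rw [hg]
  exact H.add_mem (H.nsmul_mem h10 a) (H.nsmul_mem h01 b)

lemma zero_case (U V : MG) (hV : IsMinZeroSum V) (hU0 : U = {0})
    (h5 : 5 ∈ LengthsSet (U + V)) : False := by
  obtain ⟨f, hfc, hfa, hfs⟩ := h5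
  subst hU0
  have h0f : (0 : G4) ∈ f.sum := by rw [hfs]; simp
  obtain ⟨S, hSf, h0S⟩ := mem_join h0f
  have hS0 : S = {0} := by
    obtain ⟨hne, hsum, hmin⟩ := hfa S hSf
    by_contra hne2
    exact hmin {0} (Multiset.singleton_le.mpr h0S) (by simp) (fun hh => hne2 hh.symm) (by simp)
  obtain ⟨f', rfl⟩ := Multiset.exists_cons_of_mem hSf
  subst hS0
  have hf' : f'.sum = V := by
    have h1 : ({0} : MG) + f'.sum = ({0} : MG) + V := by
      rw [← Multiset.sum_cons, hfs]
    exact add_left_cancel h1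
  have hc' : Multiset.card f' = 4 := by simpa using hfc
  have hf'ne : f' ≠ 0 := by intro h; rw [h] at hc'; simp at hc'
  obtain ⟨S₀, hS₀⟩ := Multiset.exists_mem_of_ne_zero hf'ne
  have hS₀f : S₀ ∈ ({0} : MG) ::ₘ f' := Multiset.mem_cons_of_mem hS₀
  have hS₀V : S₀ = V := by
    obtain ⟨_, _, hmin⟩ := hV
    by_contra hne
    exact hmin S₀ (hf' ▸ le_join hS₀) (hfa S₀ hS₀f).1 hne (hfa S₀ hS₀f).2.1
  obtain ⟨f'', rfl⟩ := Multiset.exists_cons_of_mem hS₀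
  rw [Multiset.sum_cons, hS₀V] at hf'
  have hf'' : f''.sum = 0 := by
    have := hf'
    nth_rewrite 2 [← add_zero V] at this
    exact add_left_cancel this
  have hc'' : Multiset.card f'' = 3 := by simpa using hc'
  have hf''ne : f'' ≠ 0 := by intro h; rw [h] at hc''; simp at hc''
  obtain ⟨S₁, hS₁⟩ := Multiset.exists_mem_of_ne_zero hf''ne
  have hS₁f : S₁ ∈ ({0} : MG) ::ₘ S₀ ::ₘ f'' :=
    Multiset.mem_cons_of_mem (Multiset.mem_cons_of_mem hS₁)
  have hle : S₁ ≤ 0 := hf'' ▸ le_join hS₁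
  exact (hfa S₁ hS₁f).1 (Multiset.le_zero.mp hle)

lemma zero_notin (U V : MG) (hU : IsMinZeroSum U) (hV : IsMinZeroSum V)
    (h5 : 5 ∈ LengthsSet (U + V)) : (0 : G4) ∉ U + V := by
  intro h0
  have key : ∀ W : MG, IsMinZeroSum W → (0 : G4) ∈ W → W = {0} := by
    intro W hW h
    obtain ⟨_, _, hmin⟩ := hW
    by_contra hne
    exact hmin {0} (Multiset.singleton_le.mpr h) (by simp) (fun hh => hne hh.symm) (by simp)
  rcases Multiset.mem_add.mp h0 with h | h
  · exact zero_case U V hV (key U hU h) h5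
  · refine zero_case V U hU (key V hV h) ?_
    rwa [add_comm]

lemma class_contra (U V : MG) (hU : IsMinZeroSum U) (hV : IsMinZeroSum V)
    (f : Multiset MG) (hfc : Multiset.card f = 5) (hfa : ∀ S ∈ f, IsMinZeroSum S)
    (hfs : f.sum = U + V)
    (h0 : (0 : G4) ∉ U + V) (h4 : 4 ∉ LengthsSet (U + V))
    (e : Fin 8 → G4) (l : List MG)
    (cov : ∀ g ∈ U + V, ∃ i, e i = g)
    (Z : ∀ i1 i2 : Fin 8, i1 ≤ i2 → ∀ i3, i2 ≤ i3 → ∀ i4, i3 ≤ i4 → ∀ i5, i4 ≤ i5 →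
      ∃ T ∈ (Multiset.map e ({i1,i2,i3,i4,i5} : Multiset (Fin 8))).powerset, T ≠ 0 ∧ T.sum = 0)
    (C : ∀ i1 i2 : Fin 8, i1 ≤ i2 → ∀ i3, i2 ≤ i3 → ∀ i4, i3 ≤ i4 → ∀ i5, i4 ≤ i5 →
      AtomDec (Multiset.map e ({i1,i2,i3,i4,i5} : Multiset (Fin 8))) →
      Multiset.map e ({i1,i2,i3,i4,i5} : Multiset (Fin 8)) ∈ l)
    (P : ∀ U' ∈ l, ∀ V' ∈ l, Multiset.map (fun g : G4 => -g) (U' + V') = U' + V' →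
      (U', V') ∈ masterlist.map Prod.fst) : False := by
  have Z' : ∀ u : Multiset (Fin 8), Multiset.card u = 5 →
      ∃ T ∈ (Multiset.map e u).powerset, T ≠ 0 ∧ T.sum = 0 :=
    quint (fun u => ∃ T ∈ (Multiset.map e u).powerset, T ≠ 0 ∧ T.sum = 0) Z
  have C' : ∀ u : Multiset (Fin 8), Multiset.card u = 5 →
      AtomDec (Multiset.map e u) → Multiset.map e u ∈ l :=
    quint (fun u => AtomDec (Multiset.map e u) → Multiset.map e u ∈ l) C
  -- no atom with support in the class has more than 5 elements
  have bound : ∀ W : MG, IsMinZeroSum W → W ≤ U + V → Multiset.card W ≤ 5 := by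
    intro W hW hWle
    by_contra hgt
    push_neg at hgt
    obtain ⟨T, hTW, hT5⟩ := exists_le_card 5 W (by omega)
    have hcov : ∀ g ∈ T, ∃ i, e i = g :=
      fun g hg => cov g (Multiset.mem_of_le hWle (Multiset.mem_of_le hTW hg))
    obtain ⟨u, hue, huc⟩ := lift e T hcov
    obtain ⟨T', hT'mem, hT'0, hT's⟩ := Z' u (by rw [huc, hT5])
    rw [hue] at hT'mem
    have hT'T : T' ≤ T := Multiset.mem_powerset.mp hT'mem
    have hT'card : Multiset.card T' ≤ 5 := le_of_le_of_eq (Multiset.card_le_card hT'T) hT5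
    refine hW.2.2 T' (hT'T.trans hTW) hT'0 ?_ hT's
    intro hEq
    rw [hEq] at hT'card
    omega
  have hcU : Multiset.card U ≤ 5 := bound U hU (Multiset.le_add_right _ _)
  have hcV : Multiset.card V ≤ 5 := bound V hV (Multiset.le_add_left _ _)
  have hS2 : ∀ S ∈ f, 2 ≤ Multiset.card S := by
    intro S hS
    have hmin := hfa S hS
    have h1 : S ≠ 0 := hmin.1
    have hc1 : 1 ≤ Multiset.card S := by
      rcases Nat.eq_zero_or_pos (Multiset.card S) with h | h
      · exact absurd (Multiset.card_eq_zero.mp h) h1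
      · exact h
    rcases Nat.lt_or_ge (Multiset.card S) 2 with h | h
    · exfalso
      have hcS : Multiset.card S = 1 := by omega
      obtain ⟨a, rfl⟩ := Multiset.card_eq_one.mp hcS
      have ha : a = 0 := by simpa using hmin.2.1
      have : a ∈ U + V := Multiset.mem_of_le (hfs ▸ le_join hS) (Multiset.mem_singleton_self a)
      rw [ha] at this
      exact h0 this
    · exact h
  have hcA : Multiset.card (U + V) = Multiset.card U + Multiset.card V := Multiset.card_add U V
  have h10 : 10 ≤ Multiset.card (U + V) := by
    rw [← hfs, card_join]
    have hmap : ∀ x ∈ f.map Multiset.card, 2 ≤ x := by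
      intro x hx
      obtain ⟨S, hS, rfl⟩ := Multiset.mem_map.mp hx
      exact hS2 S hS
    have := Multiset.card_nsmul_le_sum hmap
    rw [Multiset.card_map, hfc] at this
    simpa using this
  have hcU5 : Multiset.card U = 5 := by omega
  have hcV5 : Multiset.card V = 5 := by omega
  have hcA10 : Multiset.card (U + V) = 10 := by omega
  -- every atom in the factorization has exactly two elements
  have hS2' : ∀ S ∈ f, Multiset.card S = 2 := by
    intro S hS
    obtain ⟨f', rfl⟩ := Multiset.exists_cons_of_mem hS
    have hsum : Multiset.card S + (f'.map Multiset.card).sum = 10 := by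
      have := card_join (S ::ₘ f')
      rw [hfs, hcA10] at this
      simpa using this.symm
    have hf'map : ∀ x ∈ f'.map Multiset.card, 2 ≤ x := by
      intro x hx
      obtain ⟨S', hS', rfl⟩ := Multiset.mem_map.mp hx
      exact hS2 S' (Multiset.mem_cons_of_mem hS')
    have h8 : 8 ≤ (f'.map Multiset.card).sum := by
      have := Multiset.card_nsmul_le_sum hf'map
      have hc4 : Multiset.card f' = 4 := by simpa using hfc
      rw [Multiset.card_map, hc4] at this
      simpa using this
    have := hS2 S hS
    omega
  -- the product is symmetric
  have hsym : Multiset.map (fun g : G4 => -g) (U + V) = U + V := by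
    rw [← hfs, map_join]
    have hfix : ∀ S ∈ f, Multiset.map (fun g : G4 => -g) S = S := by
      intro S hS
      obtain ⟨x, y, rfl⟩ := Multiset.card_eq_two.mp (hS2' S hS)
      have hxy : x + y = 0 := by simpa using (hfa _ hS).2.1
      have hy : y = -x := eq_neg_of_add_eq_zero_right hxy
      subst hy
      show Multiset.map (fun g : G4 => -g) (x ::ₘ {-x}) = x ::ₘ {-x}
      rw [Multiset.map_cons, Multiset.map_singleton, neg_neg]
      exact Multiset.cons_swap x (-x) 0 ▸ rfl
    rw [show f.map (Multiset.map (fun g : G4 => -g)) = f.map id from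
      Multiset.map_congr rfl (fun S hS => by rw [hfix S hS]; rfl), Multiset.map_id]
  -- U and V are in the atom list
  have memlist : ∀ W : MG, IsMinZeroSum W → W ≤ U + V → Multiset.card W = 5 → W ∈ l := by
    intro W hW hWle hW5
    obtain ⟨u, hue, huc⟩ := lift e W (fun g hg => cov g (Multiset.mem_of_le hWle hg))
    have := C' u (by rw [huc, hW5])
    rw [hue] at this
    exact this ((isMin_iff W).mp hW)
  have hUl : U ∈ l := memlist U hU (Multiset.le_add_right _ _) hcU5
  have hVl : V ∈ l := memlist V hV (Multiset.le_add_left _ _) hcV5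
  have hpair := P U hUl V hVl hsym
  rw [List.mem_map] at hpair
  obtain ⟨q, hq, hq2⟩ := hpair
  obtain ⟨hqc, hqa, hqs⟩ := M1 q hq
  refine h4 ⟨q.2, hqc, fun S hS => (isMin_iff S).mpr (hqa S hS), ?_⟩
  rw [hqs, hq2]

end Statement5Aux

open Statement5Aux in
theorem statement5 (U V : Multiset (ZMod 4 × ZMod 4))
    (hU : IsMinZeroSum U) (hV : IsMinZeroSum V)
    (hL : LengthsSet (U + V) ∩ Set.Icc 2 5 = {2, 5}) :
    AddSubgroup.closure ((U + V).toFinset : Set (ZMod 4 × ZMod 4)) = ⊤ := by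
  have h5 : 5 ∈ LengthsSet (U + V) := by
    have h : (5 : ℕ) ∈ LengthsSet (U + V) ∩ Set.Icc 2 5 := by
      rw [hL]; right; rfl
    exact h.1
  have h4 : 4 ∉ LengthsSet (U + V) := by
    intro h
    have h' : (4 : ℕ) ∈ LengthsSet (U + V) ∩ Set.Icc 2 5 := ⟨h, by norm_num⟩
    rw [hL] at h'
    simp [Set.mem_insert_iff, Set.mem_singleton_iff] at h'
  have h0 : (0 : G4) ∉ U + V := zero_notin U V hU hV h5
  obtain ⟨f, hfc, hfa, hfs⟩ := h5
  have hmem : ∀ g ∈ U + V, g ∈ AddSubgroup.closure ((U + V).toFinset : Set (ZMod 4 × ZMod 4)) :=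
    fun g hg => AddSubgroup.subset_closure (by simpa using hg)
  by_cases c1 : ∀ g ∈ U + V, 2 * g.1 = 0
  · exact (class_contra U V hU hV f hfc hfa hfs h0 h4 e1 l1
      (fun g hg => cov1 g (c1 g hg)) Z1 C1 P1).elim
  by_cases c2 : ∀ g ∈ U + V, 2 * g.2 = 0
  · exact (class_contra U V hU hV f hfc hfa hfs h0 h4 e2 l2
      (fun g hg => cov2 g (c2 g hg)) Z2 C2 P2).elim
  by_cases c3 : ∀ g ∈ U + V, 2 * (g.1 + g.2) = 0
  · exact (class_contra U V hU hV f hfc hfa hfs h0 h4 e3 l3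
      (fun g hg => cov3 g (c3 g hg)) Z3 C3 P3).elim
  push_neg at c1 c2 c3
  obtain ⟨x, hxA, hx⟩ := c1
  obtain ⟨y, hyA, hy⟩ := c2
  obtain ⟨z, hzA, hz⟩ := c3
  have hx2 : 2 * x.1 = 2 := par _ hx
  have hy2 : 2 * y.2 = 2 := par _ hy
  have hz2 : 2 * (z.1 + z.2) = 2 := par _ hz
  rcases detOdd x hx2 y hy2 z hz2 with hd | hd
  · exact gen2 _ x y (hmem x hxA) (hmem y hyA) hd
  · exact gen2 _ x z (hmem x hxA) (hmem z hzA) hd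
end

section
/- Let G be a finite abelian group of the form C₂ ⊕ C_{2n} with n ≥ 2, with basis (e₁, e₂) where ord(e₁) = 2 and ord(e₂) = 2n. Then U = e₁ · e₂^{2n-1} · (e₁ + e₂) is a minimal zero-sum sequence over G and L(U · (-U)) = {2, 2n, 2n+1}. -/
open Multiset

namespace St12
variable (n : ℕ)

def M (p q r s t : ℕ) : Multiset (ZMod 2 × ZMod (2*n)) :=
  replicate p (0,1) + replicate q (0,-1) + replicate r (1,0) +
    replicate s (1,1) + replicate t (1,-1)

lemma M_add (p q r s t p' q' r' s' t' : ℕ) :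
    M n p q r s t + M n p' q' r' s' t' = M n (p+p') (q+q') (r+r') (s+s') (t+t') := by
  simp [M, Multiset.replicate_add]; abel

lemma card_M (p q r s t : ℕ) : Multiset.card (M n p q r s t) = p+q+r+s+t := by
  simp [M]

variable {n} (hn : 2 ≤ n)
include hn

lemma one_ne_zero' : (1 : ZMod (2*n)) ≠ 0 := by
  have h : ¬ (2*n ∣ 1) := by
    intro h; have := Nat.le_of_dvd one_pos h; omega
  simpa using (not_iff_not.mpr (ZMod.natCast_eq_zero_iff 1 (2*n))).mpr h

lemma one_ne_neg_one' : (1 : ZMod (2*n)) ≠ -1 := by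
  intro h
  have h2 : (2 : ZMod (2*n)) = 0 := by linear_combination h
  rw [show ((2:ZMod (2*n)) = ((2:ℕ) : ZMod (2*n))) by push_cast; ring,
    ZMod.natCast_eq_zero_iff] at h2
  have := Nat.le_of_dvd two_pos h2; omega

lemma neg_one_ne_zero' : (-1 : ZMod (2*n)) ≠ 0 := by
  intro h
  exact one_ne_zero' hn (by linear_combination -h)

omit hn in
lemma sum_M (p q r s t : ℕ) :
    (M n p q r s t).sum = (((r+s+t : ℕ) : ZMod 2), ((p+s : ℕ) : ZMod (2*n)) - ((q+t : ℕ) : ZMod (2*n))) := by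
  simp [M, Multiset.sum_replicate, Prod.ext_iff, nsmul_eq_mul]
  push_cast
  ring


lemma counts_M (p q r s t : ℕ) :
    count ((0,1) : ZMod 2 × ZMod (2*n)) (M n p q r s t) = p ∧
    count ((0,-1) : ZMod 2 × ZMod (2*n)) (M n p q r s t) = q ∧
    count ((1,0) : ZMod 2 × ZMod (2*n)) (M n p q r s t) = r ∧
    count ((1,1) : ZMod 2 × ZMod (2*n)) (M n p q r s t) = s ∧
    count ((1,-1) : ZMod 2 × ZMod (2*n)) (M n p q r s t) = t := by
  have h1 := one_ne_zero' hn
  have h2 := one_ne_neg_one' hn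
  have h3 := neg_one_ne_zero' hn
  have hz : ((0:ZMod 2)) ≠ 1 := by decide
  refine ⟨?_, ?_, ?_, ?_, ?_⟩ <;>
    simp [M, Multiset.count_replicate, Prod.ext_iff, h1, h2, h3, hz,
      Ne.symm h1, Ne.symm h2, Ne.symm h3, h1.symm, h2.symm, h3.symm]

lemma M_inj {p q r s t p' q' r' s' t' : ℕ}
    (h : M n p q r s t = M n p' q' r' s' t') :
    p = p' ∧ q = q' ∧ r = r' ∧ s = s' ∧ t = t' := by
  obtain ⟨a1,a2,a3,a4,a5⟩ := counts_M hn p q r s t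
  obtain ⟨b1,b2,b3,b4,b5⟩ := counts_M hn p' q' r' s' t'
  rw [h] at a1 a2 a3 a4 a5
  exact ⟨a1.symm.trans b1, a2.symm.trans b2, a3.symm.trans b3, a4.symm.trans b4, a5.symm.trans b5⟩

lemma mem_M {x : ZMod 2 × ZMod (2*n)} {p q r s t : ℕ} (hx : x ∈ M n p q r s t) :
    x = (0,1) ∨ x = (0,-1) ∨ x = (1,0) ∨ x = (1,1) ∨ x = (1,-1) := by
  simp only [M, Multiset.mem_add] at hx
  rcases hx with (((h|h)|h)|h)|h <;>
    first
      | exact Or.inl (Multiset.eq_of_mem_replicate h)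
      | exact Or.inr (Or.inl (Multiset.eq_of_mem_replicate h))
      | exact Or.inr (Or.inr (Or.inl (Multiset.eq_of_mem_replicate h)))
      | exact Or.inr (Or.inr (Or.inr (Or.inl (Multiset.eq_of_mem_replicate h))))
      | exact Or.inr (Or.inr (Or.inr (Or.inr (Multiset.eq_of_mem_replicate h))))

lemma eq_M_of_mem {T : Multiset (ZMod 2 × ZMod (2*n))}
    (h : ∀ x ∈ T, x = ((0,1) : ZMod 2 × ZMod (2*n)) ∨ x = (0,-1) ∨ x = (1,0) ∨ x = (1,1) ∨ x = (1,-1)) :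
    T = M n (count (0,1) T) (count (0,-1) T) (count (1,0) T) (count (1,1) T) (count (1,-1) T) := by
  obtain ⟨a1,a2,a3,a4,a5⟩ := counts_M hn (count ((0,1) : ZMod 2 × ZMod (2*n)) T)
    (count (0,-1) T) (count (1,0) T) (count (1,1) T) (count (1,-1) T)
  ext y
  by_cases hy1 : y = ((0,1) : ZMod 2 × ZMod (2*n)); · rw [hy1, a1]
  by_cases hy2 : y = ((0,-1) : ZMod 2 × ZMod (2*n)); · rw [hy2, a2]
  by_cases hy3 : y = ((1,0) : ZMod 2 × ZMod (2*n)); · rw [hy3, a3]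
  by_cases hy4 : y = ((1,1) : ZMod 2 × ZMod (2*n)); · rw [hy4, a4]
  by_cases hy5 : y = ((1,-1) : ZMod 2 × ZMod (2*n)); · rw [hy5, a5]
  rw [Multiset.count_eq_zero.mpr, Multiset.count_eq_zero.mpr]
  · intro hy; rcases mem_M hn hy with h|h|h|h|h <;> tauto
  · intro hy; rcases h y hy with h|h|h|h|h <;> tauto

/-- decompose a submultiset of an `M`. -/
lemma le_M {T : Multiset (ZMod 2 × ZMod (2*n))} {p q r s t : ℕ}
    (hT : T ≤ M n p q r s t) :
    ∃ p' q' r' s' t', T = M n p' q' r' s' t' ∧ p' ≤ p ∧ q' ≤ q ∧ r' ≤ r ∧ s' ≤ s ∧ t' ≤ t := by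
  obtain ⟨a1,a2,a3,a4,a5⟩ := counts_M hn p q r s t
  refine ⟨_, _, _, _, _, eq_M_of_mem hn (fun x hx => mem_M hn (Multiset.mem_of_le hT hx)), ?_, ?_, ?_, ?_, ?_⟩
  · exact a1 ▸ Multiset.count_le_of_le _ hT
  · exact a2 ▸ Multiset.count_le_of_le _ hT
  · exact a3 ▸ Multiset.count_le_of_le _ hT
  · exact a4 ▸ Multiset.count_le_of_le _ hT
  · exact a5 ▸ Multiset.count_le_of_le _ hT

omit hn in
lemma mod_helper {m a b : ℕ} (hm : 0 < m) (ha : a ≤ m) (hb : b ≤ m)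
    (h : a % m = b % m) : a = b ∨ (a = 0 ∧ b = m) ∨ (a = m ∧ b = 0) := by
  rcases lt_or_eq_of_le ha with ha' | ha' <;> rcases lt_or_eq_of_le hb with hb' | hb'
  · rw [Nat.mod_eq_of_lt ha', Nat.mod_eq_of_lt hb'] at h; exact Or.inl h
  · subst hb'; rw [Nat.mod_self, Nat.mod_eq_of_lt ha'] at h; exact Or.inr (Or.inl ⟨h, rfl⟩)
  · subst ha'; rw [Nat.mod_self, Nat.mod_eq_of_lt hb'] at h; exact Or.inr (Or.inr ⟨rfl, h.symm⟩)
  · omega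

omit hn in
lemma sum_M_zero_iff (p q r s t : ℕ) :
    (M n p q r s t).sum = 0 ↔ (r+s+t) % 2 = 0 ∧ (p+s) % (2*n) = (q+t) % (2*n) := by
  rw [sum_M, show ((0:ZMod 2 × ZMod (2*n))) = (0,0) from rfl, Prod.mk.injEq]
  constructor
  · rintro ⟨h1, h2⟩
    constructor
    · have := (ZMod.natCast_eq_zero_iff (r+s+t) 2).mp h1
      omega
    · have : ((p+s : ℕ) : ZMod (2*n)) = ((q+t : ℕ) : ZMod (2*n)) := by
        have := sub_eq_zero.mp h2; exact_mod_cast this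
      rw [ZMod.natCast_eq_natCast_iff'] at this; exact this
  · rintro ⟨h1, h2⟩
    constructor
    · exact (ZMod.natCast_eq_zero_iff (r+s+t) 2).mpr (by omega)
    · rw [sub_eq_zero]; exact (ZMod.natCast_eq_natCast_iff' _ _ _).mpr h2


omit hn in
lemma M_zero : M n 0 0 0 0 0 = 0 := by simp [M]

omit hn in
lemma M_ne_zero {p q r s t : ℕ} (h : 0 < p+q+r+s+t) : M n p q r s t ≠ 0 := by
  intro h0
  have hc := card_M n p q r s t
  rw [h0] at hc
  simp at hc
  omega

omit hn in
lemma M_le_M {p q r s t p' q' r' s' t' : ℕ} (h1 : p ≤ p') (h2 : q ≤ q') (h3 : r ≤ r')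
    (h4 : s ≤ s') (h5 : t ≤ t') : M n p q r s t ≤ M n p' q' r' s' t' := by
  unfold M
  gcongr <;> exact (Multiset.replicate_le_replicate _).2 ‹_›

omit hn in
lemma M_congr {p q r s t p' q' r' s' t' : ℕ} (h1 : p = p') (h2 : q = q') (h3 : r = r')
    (h4 : s = s') (h5 : t = t') : M n p q r s t = M n p' q' r' s' t' := by
  rw [h1, h2, h3, h4, h5]

omit hn in
lemma sumP : (M n 1 1 0 0 0).sum = 0 := by
  rw [sum_M_zero_iff]; exact ⟨by norm_num, rfl⟩

omit hn in
lemma sumE : (M n 0 0 2 0 0).sum = 0 := by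
  rw [sum_M_zero_iff]; exact ⟨by norm_num, rfl⟩

omit hn in
lemma sumAB : (M n 0 0 0 1 1).sum = 0 := by
  rw [sum_M_zero_iff]; exact ⟨by norm_num, rfl⟩

omit hn in
lemma sumX1 : (M n 0 1 1 1 0).sum = 0 := by
  rw [sum_M_zero_iff]; exact ⟨by norm_num, by norm_num⟩

omit hn in
lemma sumX2 : (M n 1 0 1 0 1).sum = 0 := by
  rw [sum_M_zero_iff]; exact ⟨by norm_num, by norm_num⟩

lemma sumY1 : (M n (2*n-1) 0 1 1 0).sum = 0 := by
  rw [sum_M_zero_iff]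
  refine ⟨by norm_num, ?_⟩
  rw [show 2*n-1+1 = 2*n by omega, Nat.mod_self]; simp

lemma sumY2 : (M n 0 (2*n-1) 1 0 1).sum = 0 := by
  rw [sum_M_zero_iff]
  refine ⟨by norm_num, ?_⟩
  rw [show 2*n-1+1 = 2*n by omega, Nat.mod_self]; simp

lemma isMin_P : IsMinZeroSum (M n 1 1 0 0 0) := by
  refine ⟨M_ne_zero (by omega), sumP, fun T hT hT0 hTS => ?_⟩
  obtain ⟨p,q,r,s,t,rfl,hp,hq,hr,hs,ht⟩ := le_M hn hT
  rw [Ne, sum_M_zero_iff]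
  rintro ⟨hpar, hmod⟩
  have h0 : ¬(p = 0 ∧ q = 0 ∧ r = 0 ∧ s = 0 ∧ t = 0) := by
    rintro ⟨rfl,rfl,rfl,rfl,rfl⟩; exact hT0 (M_zero (n := n))
  have hm := mod_helper (m := 2*n) (by omega) (by omega) (by omega) hmod
  have : p = 1 ∧ q = 1 ∧ r = 0 ∧ s = 0 ∧ t = 0 := by omega
  obtain ⟨rfl,rfl,rfl,rfl,rfl⟩ := this
  exact hTS rfl

lemma isMin_E : IsMinZeroSum (M n 0 0 2 0 0) := by
  refine ⟨M_ne_zero (by omega), sumE, fun T hT hT0 hTS => ?_⟩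
  obtain ⟨p,q,r,s,t,rfl,hp,hq,hr,hs,ht⟩ := le_M hn hT
  rw [Ne, sum_M_zero_iff]
  rintro ⟨hpar, hmod⟩
  have h0 : ¬(p = 0 ∧ q = 0 ∧ r = 0 ∧ s = 0 ∧ t = 0) := by
    rintro ⟨rfl,rfl,rfl,rfl,rfl⟩; exact hT0 (M_zero (n := n))
  have hm := mod_helper (m := 2*n) (by omega) (by omega) (by omega) hmod
  have : p = 0 ∧ q = 0 ∧ r = 2 ∧ s = 0 ∧ t = 0 := by omega
  obtain ⟨rfl,rfl,rfl,rfl,rfl⟩ := this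
  exact hTS rfl

lemma isMin_AB : IsMinZeroSum (M n 0 0 0 1 1) := by
  refine ⟨M_ne_zero (by omega), sumAB, fun T hT hT0 hTS => ?_⟩
  obtain ⟨p,q,r,s,t,rfl,hp,hq,hr,hs,ht⟩ := le_M hn hT
  rw [Ne, sum_M_zero_iff]
  rintro ⟨hpar, hmod⟩
  have h0 : ¬(p = 0 ∧ q = 0 ∧ r = 0 ∧ s = 0 ∧ t = 0) := by
    rintro ⟨rfl,rfl,rfl,rfl,rfl⟩; exact hT0 (M_zero (n := n))
  have hm := mod_helper (m := 2*n) (by omega) (by omega) (by omega) hmod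
  have : p = 0 ∧ q = 0 ∧ r = 0 ∧ s = 1 ∧ t = 1 := by omega
  obtain ⟨rfl,rfl,rfl,rfl,rfl⟩ := this
  exact hTS rfl

lemma isMin_X1 : IsMinZeroSum (M n 0 1 1 1 0) := by
  refine ⟨M_ne_zero (by omega), sumX1, fun T hT hT0 hTS => ?_⟩
  obtain ⟨p,q,r,s,t,rfl,hp,hq,hr,hs,ht⟩ := le_M hn hT
  rw [Ne, sum_M_zero_iff]
  rintro ⟨hpar, hmod⟩
  have h0 : ¬(p = 0 ∧ q = 0 ∧ r = 0 ∧ s = 0 ∧ t = 0) := by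
    rintro ⟨rfl,rfl,rfl,rfl,rfl⟩; exact hT0 (M_zero (n := n))
  have hm := mod_helper (m := 2*n) (by omega) (by omega) (by omega) hmod
  have : p = 0 ∧ q = 1 ∧ r = 1 ∧ s = 1 ∧ t = 0 := by omega
  obtain ⟨rfl,rfl,rfl,rfl,rfl⟩ := this
  exact hTS rfl

lemma isMin_X2 : IsMinZeroSum (M n 1 0 1 0 1) := by
  refine ⟨M_ne_zero (by omega), sumX2, fun T hT hT0 hTS => ?_⟩
  obtain ⟨p,q,r,s,t,rfl,hp,hq,hr,hs,ht⟩ := le_M hn hT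
  rw [Ne, sum_M_zero_iff]
  rintro ⟨hpar, hmod⟩
  have h0 : ¬(p = 0 ∧ q = 0 ∧ r = 0 ∧ s = 0 ∧ t = 0) := by
    rintro ⟨rfl,rfl,rfl,rfl,rfl⟩; exact hT0 (M_zero (n := n))
  have hm := mod_helper (m := 2*n) (by omega) (by omega) (by omega) hmod
  have : p = 1 ∧ q = 0 ∧ r = 1 ∧ s = 0 ∧ t = 1 := by omega
  obtain ⟨rfl,rfl,rfl,rfl,rfl⟩ := this
  exact hTS rfl

lemma isMin_Y1 : IsMinZeroSum (M n (2*n-1) 0 1 1 0) := by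
  refine ⟨M_ne_zero (by omega), sumY1 hn, fun T hT hT0 hTS => ?_⟩
  obtain ⟨p,q,r,s,t,rfl,hp,hq,hr,hs,ht⟩ := le_M hn hT
  rw [Ne, sum_M_zero_iff]
  rintro ⟨hpar, hmod⟩
  have h0 : ¬(p = 0 ∧ q = 0 ∧ r = 0 ∧ s = 0 ∧ t = 0) := by
    rintro ⟨rfl,rfl,rfl,rfl,rfl⟩; exact hT0 (M_zero (n := n))
  have hm := mod_helper (m := 2*n) (by omega) (by omega) (by omega) hmod
  have : p = 2*n-1 ∧ q = 0 ∧ r = 1 ∧ s = 1 ∧ t = 0 := by omega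
  obtain ⟨rfl,rfl,rfl,rfl,rfl⟩ := this
  exact hTS rfl

lemma isMin_Y2 : IsMinZeroSum (M n 0 (2*n-1) 1 0 1) := by
  refine ⟨M_ne_zero (by omega), sumY2 hn, fun T hT hT0 hTS => ?_⟩
  obtain ⟨p,q,r,s,t,rfl,hp,hq,hr,hs,ht⟩ := le_M hn hT
  rw [Ne, sum_M_zero_iff]
  rintro ⟨hpar, hmod⟩
  have h0 : ¬(p = 0 ∧ q = 0 ∧ r = 0 ∧ s = 0 ∧ t = 0) := by
    rintro ⟨rfl,rfl,rfl,rfl,rfl⟩; exact hT0 (M_zero (n := n))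
  have hm := mod_helper (m := 2*n) (by omega) (by omega) (by omega) hmod
  have : p = 0 ∧ q = 2*n-1 ∧ r = 1 ∧ s = 0 ∧ t = 1 := by omega
  obtain ⟨rfl,rfl,rfl,rfl,rfl⟩ := this
  exact hTS rfl


set_option maxHeartbeats 2000000 in
lemma classify {S : Multiset (ZMod 2 × ZMod (2*n))} (hle : S ≤ M n (2*n-1) (2*n-1) 2 1 1)
    (hmin : IsMinZeroSum S) :
    S = M n 1 1 0 0 0 ∨ S = M n 0 0 2 0 0 ∨ S = M n 0 0 0 1 1 ∨ S = M n 0 1 1 1 0 ∨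
      S = M n 1 0 1 0 1 ∨ S = M n (2*n-1) 0 1 1 0 ∨ S = M n 0 (2*n-1) 1 0 1 := by
  obtain ⟨p,q,r,s,t,rfl,hp,hq,hr,hs,ht⟩ := le_M hn hle
  obtain ⟨hS0, hsum, hminT⟩ := hmin
  rw [sum_M_zero_iff] at hsum
  obtain ⟨hpar, hmod⟩ := hsum
  have h0 : ¬(p=0∧q=0∧r=0∧s=0∧t=0) := by
    rintro ⟨rfl,rfl,rfl,rfl,rfl⟩; exact hS0 (M_zero (n := n))
  have hm := mod_helper (m := 2*n) (by omega) (by omega) (by omega) hmod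
  have hPQ : p = 0 ∨ q = 0 ∨ (p=1∧q=1∧r=0∧s=0∧t=0) := by
    by_cases hc : 1 ≤ p ∧ 1 ≤ q
    · right; right
      by_contra hcon
      refine hminT (M n 1 1 0 0 0)
        (M_le_M (by omega) (by omega) (by omega) (by omega) (by omega))
        (M_ne_zero (by omega)) (fun h => hcon ?_) (sumP (n := n))
      obtain ⟨a,b,c,d,e⟩ := M_inj hn h; omega
    · omega
  have hE : r ≤ 1 ∨ (p=0∧q=0∧r=2∧s=0∧t=0) := by
    by_cases hc : 2 ≤ r
    · right
      by_contra hcon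
      refine hminT (M n 0 0 2 0 0)
        (M_le_M (by omega) (by omega) (by omega) (by omega) (by omega))
        (M_ne_zero (by omega)) (fun h => hcon ?_) (sumE (n := n))
      obtain ⟨a,b,c,d,e⟩ := M_inj hn h; omega
    · omega
  have hAB : s = 0 ∨ t = 0 ∨ (p=0∧q=0∧r=0∧s=1∧t=1) := by
    by_cases hc : 1 ≤ s ∧ 1 ≤ t
    · right; right
      by_contra hcon
      refine hminT (M n 0 0 0 1 1)
        (M_le_M (by omega) (by omega) (by omega) (by omega) (by omega))
        (M_ne_zero (by omega)) (fun h => hcon ?_) (sumAB (n := n))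
      obtain ⟨a,b,c,d,e⟩ := M_inj hn h; omega
    · omega
  have hrst : (r=0∧s=0∧t=0) ∨ (r=2∧s=0∧t=0) ∨ (r=0∧s=1∧t=1) ∨ (r=1∧s=1∧t=0) ∨
      (r=1∧s=0∧t=1) := by omega
  rcases hrst with ⟨rfl,rfl,rfl⟩|⟨rfl,rfl,rfl⟩|⟨rfl,rfl,rfl⟩|⟨rfl,rfl,rfl⟩|⟨rfl,rfl,rfl⟩
  · have hpq : p = 1 ∧ q = 1 := by omega
    exact Or.inl (M_congr hpq.1 hpq.2 rfl rfl rfl)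
  · have hpq : p = 0 ∧ q = 0 := by omega
    exact Or.inr (Or.inl (M_congr hpq.1 hpq.2 rfl rfl rfl))
  · have hpq : p = 0 ∧ q = 0 := by omega
    exact Or.inr (Or.inr (Or.inl (M_congr hpq.1 hpq.2 rfl rfl rfl)))
  · have hpq : (p = 0 ∧ q = 1) ∨ (p = 2*n-1 ∧ q = 0) := by omega
    rcases hpq with ⟨rfl, rfl⟩ | ⟨rfl, rfl⟩
    · exact Or.inr (Or.inr (Or.inr (Or.inl rfl)))
    · exact Or.inr (Or.inr (Or.inr (Or.inr (Or.inr (Or.inl rfl)))))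
  · have hpq : (p = 1 ∧ q = 0) ∨ (p = 0 ∧ q = 2*n-1) := by omega
    rcases hpq with ⟨rfl, rfl⟩ | ⟨rfl, rfl⟩
    · exact Or.inr (Or.inr (Or.inr (Or.inr (Or.inl rfl))))
    · exact Or.inr (Or.inr (Or.inr (Or.inr (Or.inr (Or.inr rfl)))))

omit hn in
lemma f_struct (f : Multiset (Multiset (ZMod 2 × ZMod (2*n))))
    (hf : ∀ S ∈ f, S = M n 1 1 0 0 0 ∨ S = M n 0 0 2 0 0 ∨ S = M n 0 0 0 1 1 ∨
      S = M n 0 1 1 1 0 ∨ S = M n 1 0 1 0 1 ∨ S = M n (2*n-1) 0 1 1 0 ∨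
      S = M n 0 (2*n-1) 1 0 1) :
    ∃ a b c d e g w, Multiset.card f = a+b+c+d+e+g+w ∧
      f.sum = M n (a+e+(2*n-1)*g) (a+d+(2*n-1)*w) (2*b+d+e+g+w) (c+d+g) (c+e+w) := by
  induction f using Multiset.induction with
  | empty =>
    exact ⟨0,0,0,0,0,0,0, by simp, by simpa using (M_zero (n := n)).symm⟩
  | cons S f ih =>
    obtain ⟨a,b,c,d,e,g,w, hcard, hsum⟩ := ih (fun T hT => hf T (Multiset.mem_cons_of_mem hT))
    have hS := hf S (Multiset.mem_cons_self S f)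
    have hc := Multiset.card_cons S f
    rcases hS with rfl|rfl|rfl|rfl|rfl|rfl|rfl
    · exact ⟨a+1,b,c,d,e,g,w, by omega,
        by rw [Multiset.sum_cons, hsum, M_add]
           exact M_congr (by ring) (by ring) (by ring) (by ring) (by ring)⟩
    · exact ⟨a,b+1,c,d,e,g,w, by omega,
        by rw [Multiset.sum_cons, hsum, M_add]
           exact M_congr (by ring) (by ring) (by ring) (by ring) (by ring)⟩
    · exact ⟨a,b,c+1,d,e,g,w, by omega,
        by rw [Multiset.sum_cons, hsum, M_add]
           exact M_congr (by ring) (by ring) (by ring) (by ring) (by ring)⟩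
    · exact ⟨a,b,c,d+1,e,g,w, by omega,
        by rw [Multiset.sum_cons, hsum, M_add]
           exact M_congr (by ring) (by ring) (by ring) (by ring) (by ring)⟩
    · exact ⟨a,b,c,d,e+1,g,w, by omega,
        by rw [Multiset.sum_cons, hsum, M_add]
           exact M_congr (by ring) (by ring) (by ring) (by ring) (by ring)⟩
    · exact ⟨a,b,c,d,e,g+1,w, by omega,
        by rw [Multiset.sum_cons, hsum, M_add]
           exact M_congr (by ring) (by ring) (by ring) (by ring) (by ring)⟩
    · exact ⟨a,b,c,d,e,g,w+1, by omega,
        by rw [Multiset.sum_cons, hsum, M_add]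
           exact M_congr (by ring) (by ring) (by ring) (by ring) (by ring)⟩

omit hn in
lemma rep_P_sum (m : ℕ) : (Multiset.replicate m (M n 1 1 0 0 0)).sum = M n m m 0 0 0 := by
  induction m with
  | zero => simpa using (M_zero (n := n)).symm
  | succ m ih =>
    rw [Multiset.replicate_succ, Multiset.sum_cons, ih, M_add]
    exact M_congr (by ring) (by ring) (by ring) (by ring) (by ring)

end St12


theorem statement12 (n : ℕ) (hn : 2 ≤ n)
    (e₁ e₂ : ZMod 2 × ZMod (2 * n)) (he₁ : e₁ = (1, 0)) (he₂ : e₂ = (0, 1))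
    (U : Multiset (ZMod 2 × ZMod (2 * n)))
    (hU : U = Multiset.replicate (2 * n - 1) e₂ + {e₁, e₁ + e₂}) :
    IsMinZeroSum U ∧
      LengthsSet (U + U.map (fun x => -x)) = {2, 2 * n, 2 * n + 1} := by
  subst he₁ he₂ hU
  have hadd : ((1,0) : ZMod 2 × ZMod (2*n)) + (0,1) = (1,1) := by simp
  rw [hadd]
  have hU1 : Multiset.replicate (2*n-1) ((0,1) : ZMod 2 × ZMod (2*n)) + {(1,0), (1,1)} =
      St12.M n (2*n-1) 0 1 1 0 := by
    simp [St12.M, ← Multiset.singleton_add]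
    rw [add_assoc]
  have hU2 : (Multiset.replicate (2*n-1) ((0,1) : ZMod 2 × ZMod (2*n)) +
      {(1,0), (1,1)}).map (fun x => -x) = St12.M n 0 (2*n-1) 1 0 1 := by
    have hneg : (-1 : ZMod 2) = 1 := by decide
    have hneg2 : (-1 : ZMod 2 × ZMod (2*n)) = (1,-1) := by
      rw [show (-1 : ZMod 2 × ZMod (2*n)) = -(1,1) from rfl, Prod.neg_mk, hneg]
    simp [St12.M, Multiset.map_replicate, Prod.neg_mk, hneg, hneg2, ← Multiset.singleton_add]
    rw [add_assoc]
  have hA : Multiset.replicate (2*n-1) ((0,1) : ZMod 2 × ZMod (2*n)) + {(1,0), (1,1)} +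
      (Multiset.replicate (2*n-1) ((0,1) : ZMod 2 × ZMod (2*n)) +
        {(1,0), (1,1)}).map (fun x => -x) = St12.M n (2*n-1) (2*n-1) 2 1 1 := by
    rw [hU2, hU1, St12.M_add]
    exact St12.M_congr (by omega) (by omega) (by omega) (by omega) (by omega)
  constructor
  · rw [hU1]; exact St12.isMin_Y1 hn
  · ext k
    simp only [LengthsSet, Set.mem_setOf_eq, Set.mem_insert_iff, Set.mem_singleton_iff]
    constructor
    · rintro ⟨f, hcard, hmins, hsum⟩
      rw [hA] at hsum
      have hAtoms : ∀ S ∈ f, S = St12.M n 1 1 0 0 0 ∨ S = St12.M n 0 0 2 0 0 ∨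
          S = St12.M n 0 0 0 1 1 ∨ S = St12.M n 0 1 1 1 0 ∨ S = St12.M n 1 0 1 0 1 ∨
          S = St12.M n (2*n-1) 0 1 1 0 ∨ S = St12.M n 0 (2*n-1) 1 0 1 :=
        fun S hS => St12.classify hn (hsum ▸ Multiset.le_sum_of_mem hS) (hmins S hS)
      obtain ⟨a,b,c,d,e,g,w,hc,hs2⟩ := St12.f_struct f hAtoms
      obtain ⟨e1,e2,e3,e4,e5⟩ := St12.M_inj hn (hs2.symm.trans hsum)
      have hg : g = 0 ∨ g = 1 := by clear e1 e2; omega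
      have hw : w = 0 ∨ w = 1 := by clear e1 e2; omega
      rcases hg with rfl|rfl <;> rcases hw with rfl|rfl <;> omega
    · rintro (rfl | rfl | rfl)
      · refine ⟨{St12.M n (2*n-1) 0 1 1 0, St12.M n 0 (2*n-1) 1 0 1}, by simp, ?_, ?_⟩
        · intro S hS
          rcases Multiset.mem_cons.mp hS with rfl | hS
          · exact St12.isMin_Y1 hn
          · rw [Multiset.mem_singleton.mp hS]; exact St12.isMin_Y2 hn
        · rw [hA]
          show St12.M n (2*n-1) 0 1 1 0 + (St12.M n 0 (2*n-1) 1 0 1 + 0) = _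
          rw [add_zero, St12.M_add]
          exact St12.M_congr (by omega) (by omega) (by omega) (by omega) (by omega)
      · refine ⟨St12.M n 0 1 1 1 0 ::ₘ St12.M n 1 0 1 0 1 ::ₘ
          Multiset.replicate (2*n-2) (St12.M n 1 1 0 0 0), ?_, ?_, ?_⟩
        · simp only [Multiset.card_cons, Multiset.card_replicate]; omega
        · intro S hS
          rcases Multiset.mem_cons.mp hS with rfl | hS
          · exact St12.isMin_X1 hn
          rcases Multiset.mem_cons.mp hS with rfl | hS
          · exact St12.isMin_X2 hn
          · rw [Multiset.eq_of_mem_replicate hS]; exact St12.isMin_P hn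
        · rw [hA, Multiset.sum_cons, Multiset.sum_cons, St12.rep_P_sum, St12.M_add, St12.M_add]
          exact St12.M_congr (by omega) (by omega) (by omega) (by omega) (by omega)
      · refine ⟨St12.M n 0 0 2 0 0 ::ₘ St12.M n 0 0 0 1 1 ::ₘ
          Multiset.replicate (2*n-1) (St12.M n 1 1 0 0 0), ?_, ?_, ?_⟩
        · simp only [Multiset.card_cons, Multiset.card_replicate]; omega
        · intro S hS
          rcases Multiset.mem_cons.mp hS with rfl | hS
          · exact St12.isMin_E hn
          rcases Multiset.mem_cons.mp hS with rfl | hS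
          · exact St12.isMin_AB hn
          · rw [Multiset.eq_of_mem_replicate hS]; exact St12.isMin_P hn
        · rw [hA, Multiset.sum_cons, Multiset.sum_cons, St12.rep_P_sum, St12.M_add, St12.M_add]
          exact St12.M_congr (by omega) (by omega) (by omega) (by omega) (by omega)
end

section
/- Let G be a finite abelian group with |G| ≥ 3 and let U, V be minimal zero-sum sequences over G with V = -U, |U| = |V| = D(G) - 1, and L(UV) = {2, D(G)-1}. Suppose S = g^{-k}·(-g)^k·U is zero-sum free for some g in supp(U) with v_g(U) = k. If T and T' are distinct subsequences of U with σ(T) = σ(T'), then supp(T) ∩ supp(T') = ∅, T·T' = U, and 2σ(T) = 0. -/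
open Multiset

section Aux
variable {G : Type*} [AddCommGroup G]

lemma aux_sum_sub [DecidableEq G] {N M : Multiset G} (h : N ≤ M) :
    (M - N).sum = M.sum - N.sum := by
  have h2 : (M - N) + N = M := tsub_add_cancel_of_le h
  have h3 := congrArg Multiset.sum h2
  rw [Multiset.sum_add] at h3
  exact eq_sub_of_add_eq h3

lemma aux_sum_map_neg (M : Multiset G) : (M.map (fun x => -x)).sum = -M.sum := by
  induction M using Multiset.induction_on with
  | empty => simp
  | cons a s ih => simp [ih]; abel

lemma aux_le_sum {z : Multiset (Multiset G)} {S : Multiset G} (h : S ∈ z) : S ≤ z.sum := by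
  obtain ⟨t, rfl⟩ := Multiset.exists_cons_of_mem h
  rw [Multiset.sum_cons]
  exact Multiset.le_add_right _ _

lemma aux_decomp {α : Type*} [DecidableEq α] {P X Y : Multiset α} (h : P ≤ X + Y) :
    ∃ P₁ P₂, P₁ ≤ X ∧ P₂ ≤ Y ∧ P = P₁ + P₂ := by
  refine ⟨P ∩ X, P - P ∩ X, Multiset.inter_le_right, ?_, ?_⟩
  · rw [Multiset.le_iff_count]
    intro a
    have hc := Multiset.count_le_of_le a h
    rw [Multiset.count_add] at hc
    rw [Multiset.count_sub, Multiset.count_inter]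
    omega
  · rw [add_comm]
    exact (tsub_add_cancel_of_le Multiset.inter_le_left).symm

lemma aux_exists_min [DecidableEq G] :
    ∀ (n : ℕ) (M : Multiset G), Multiset.card M ≤ n → M ≠ 0 → M.sum = 0 →
      ∃ N, N ≤ M ∧ IsMinZeroSum N := by
  intro n
  induction n with
  | zero =>
    intro M hc h0 _
    exact absurd (Multiset.card_eq_zero.mp (Nat.le_zero.mp hc)) h0
  | succ n ih =>
    intro M hc h0 hs
    by_cases hmin : IsMinZeroSum M
    · exact ⟨M, le_rfl, hmin⟩
    · have h1 : ¬ ∀ T : Multiset G, T ≤ M → T ≠ 0 → T ≠ M → T.sum ≠ 0 :=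
        fun h => hmin ⟨h0, hs, h⟩
      push_neg at h1
      obtain ⟨T, hTM, hT0, hTne, hTs⟩ := h1
      have hlt : Multiset.card T < Multiset.card M :=
        Multiset.card_lt_card (lt_of_le_of_ne hTM hTne)
      obtain ⟨N, hN, hNmin⟩ := ih T (by omega) hT0 hTs
      exact ⟨N, le_trans hN hTM, hNmin⟩

lemma aux_exists_fact [DecidableEq G] :
    ∀ (n : ℕ) (M : Multiset G), Multiset.card M ≤ n → M.sum = 0 →
      ∃ z : Multiset (Multiset G), (∀ S ∈ z, IsMinZeroSum S) ∧ z.sum = M := by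
  intro n
  induction n with
  | zero =>
    intro M hc _
    have h : M = 0 := Multiset.card_eq_zero.mp (Nat.le_zero.mp hc)
    exact ⟨0, by simp, by simp [h]⟩
  | succ n ih =>
    intro M hc hs
    by_cases h0 : M = 0
    · exact ⟨0, by simp, by simp [h0]⟩
    · obtain ⟨N, hNM, hNmin⟩ := aux_exists_min (n+1) M hc h0 hs
      have hN0 : N ≠ 0 := hNmin.1
      have hcard : Multiset.card (M - N) ≤ n := by
        have h1 : Multiset.card (M - N) + Multiset.card N = Multiset.card M := by
          rw [← Multiset.card_add, tsub_add_cancel_of_le hNM]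
        have h2 : 0 < Multiset.card N := Multiset.card_pos.mpr hN0
        omega
      have hsub : (M - N).sum = 0 := by
        rw [aux_sum_sub hNM, hs, hNmin.2.1, sub_zero]
      obtain ⟨z, hz1, hz2⟩ := ih (M - N) hcard hsub
      refine ⟨N ::ₘ z, ?_, ?_⟩
      · intro S hSm
        rcases Multiset.mem_cons.mp hSm with h | h
        · exact h ▸ hNmin
        · exact hz1 S h
      · rw [Multiset.sum_cons, hz2, add_comm, tsub_add_cancel_of_le hNM]

lemma aux_card_sum {α : Type*} :
    ∀ (w : Multiset (Multiset α)), Multiset.card w.sum = (w.map Multiset.card).sum := by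
  intro w
  induction w using Multiset.induction_on with
  | empty => simp
  | cons a s ih => simp [ih]

lemma aux_two_le_sum : ∀ (m : Multiset ℕ), (∀ x ∈ m, 2 ≤ x) → 2 * Multiset.card m ≤ m.sum := by
  intro m
  induction m using Multiset.induction_on with
  | empty => simp
  | cons a s ih =>
    intro h
    have ha := h a (Multiset.mem_cons_self a s)
    have hs := ih (fun x hx => h x (Multiset.mem_cons_of_mem hx))
    simp only [Multiset.sum_cons, Multiset.card_cons]
    omega

lemma aux_all_two :
    ∀ (m : Multiset ℕ), (∀ x ∈ m, 2 ≤ x) → m.sum = 2 * Multiset.card m → ∀ x ∈ m, x = 2 := by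
  intro m
  induction m using Multiset.induction_on with
  | empty => intro _ _ x hx; simp at hx
  | cons a s ih =>
    intro h h2 x hx
    have ha := h a (Multiset.mem_cons_self a s)
    have hs' : ∀ y ∈ s, 2 ≤ y := fun y hy => h y (Multiset.mem_cons_of_mem hy)
    have hle := aux_two_le_sum s hs'
    simp only [Multiset.sum_cons, Multiset.card_cons] at h2
    have ha2 : a = 2 ∧ s.sum = 2 * Multiset.card s := by omega
    rcases Multiset.mem_cons.mp hx with hh | hh
    · exact hh ▸ ha2.1
    · exact ih hs' ha2.2 x hh

end Aux

theorem statement15 {G : Type*} [AddCommGroup G] [Fintype G] [DecidableEq G]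
    (hG : 3 ≤ Fintype.card G)
    (U V : Multiset G) (hU : IsMinZeroSum U) (hV : IsMinZeroSum V)
    (hVU : V = U.map (fun x => -x))
    (hcU : Multiset.card U = DavenportConstant G - 1)
    (hcV : Multiset.card V = DavenportConstant G - 1)
    (hL : LengthsSet (U + V) = {2, DavenportConstant G - 1})
    (g : G) (hg : g ∈ U) (k : ℕ) (hk : U.count g = k)
    (hS : ∀ T ≤ (U - Multiset.replicate k g) + Multiset.replicate k (-g),
      T ≠ 0 → T.sum ≠ 0)
    (T T' : Multiset G) (hT : T ≤ U) (hT' : T' ≤ U) (hne : T ≠ T')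
    (hsum : T.sum = T'.sum) :
    T.toFinset ∩ T'.toFinset = ∅ ∧ T + T' = U ∧ 2 • T.sum = 0 := by
  classical
  obtain ⟨hU0, hUsum, hUmin⟩ := hU
  set C := T ∩ T' with hC
  set A := T - C with hA
  set B := T' - C with hB
  have hCT : C ≤ T := Multiset.inter_le_left
  have hCT' : C ≤ T' := Multiset.inter_le_right
  have hAU : A ≤ U := le_trans tsub_le_self hT
  have hBU : B ≤ U := le_trans tsub_le_self hT'
  have key : ∀ x : G, count x A + count x C = count x T ∧
      count x B + count x C = count x T' ∧
      count x C = min (count x T) (count x T') := by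
    intro x
    have h1 : count x C = min (count x T) (count x T') := by
      rw [hC, Multiset.count_inter]
    have h2 : count x A = count x T - count x C := by
      rw [hA, Multiset.count_sub]
    have h3 : count x B = count x T' - count x C := by
      rw [hB, Multiset.count_sub]
    omega
  have hABle : A + B ≤ U := by
    rw [Multiset.le_iff_count]
    intro x
    rw [Multiset.count_add]
    have h1 := Multiset.count_le_of_le x hT
    have h2 := Multiset.count_le_of_le x hT'
    have h3 := key x
    omega
  -- sums
  have hACsum : A.sum + C.sum = T.sum := by
    have hAC : A + C = T := by rw [hA]; exact tsub_add_cancel_of_le hCT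
    have := congrArg Multiset.sum hAC
    rwa [Multiset.sum_add] at this
  have hBCsum : B.sum + C.sum = T'.sum := by
    have hBC : B + C = T' := by rw [hB]; exact tsub_add_cancel_of_le hCT'
    have := congrArg Multiset.sum hBC
    rwa [Multiset.sum_add] at this
  have hsAB : A.sum = B.sum := by
    have h1 : A.sum + C.sum = B.sum + C.sum := by rw [hACsum, hBCsum, hsum]
    exact add_right_cancel h1
  by_cases hABU : A + B = U
  · -- good case
    have hmin0 : ∀ x : G, min (count x T) (count x T') = 0 ∧
        count x T + count x T' = count x U := by
      intro x
      have h1 := Multiset.count_le_of_le x hT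
      have h2 := Multiset.count_le_of_le x hT'
      have h3 := key x
      have h4 : count x A + count x B = count x U := by
        rw [← Multiset.count_add, hABU]
      omega
    have hTT' : T + T' = U := by
      ext x
      rw [Multiset.count_add]
      exact (hmin0 x).2
    refine ⟨?_, hTT', ?_⟩
    · apply Finset.eq_empty_iff_forall_notMem.mpr
      intro x hx
      rw [Finset.mem_inter, Multiset.mem_toFinset, Multiset.mem_toFinset] at hx
      have h1 : 0 < count x T := Multiset.count_pos.mpr hx.1
      have h2 : 0 < count x T' := Multiset.count_pos.mpr hx.2
      have := (hmin0 x).1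
      omega
    · calc 2 • T.sum = T.sum + T.sum := two_nsmul _
        _ = T.sum + T'.sum := by rw [hsum]
        _ = (T + T').sum := (Multiset.sum_add _ _).symm
        _ = 0 := by rw [hTT', hUsum]
  · -- bad case: derive a contradiction
    exfalso
    have hABlt : A + B < U := lt_of_le_of_ne hABle hABU
    have hA0 : A ≠ 0 := by
      intro h
      have hTC : T = C := by
        refine le_antisymm ?_ hCT
        rw [← tsub_eq_zero_iff_le, ← hA]; exact h
      have hB0' : B ≠ 0 := by
        intro hB'
        have hT'C : T' = C := by
          refine le_antisymm ?_ hCT'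
          rw [← tsub_eq_zero_iff_le, ← hB]; exact hB'
        exact hne (hTC.trans hT'C.symm)
      have hBneU : B ≠ U := fun hBu => hABU (by rw [h, hBu, zero_add])
      have hBsum : B.sum = 0 := by
        have h1 : B.sum + T.sum = T'.sum := by
          rw [← hBCsum, hTC]
        rw [hsum] at h1
        have := add_right_cancel (h1.trans (zero_add T'.sum).symm)
        exact this
      exact hUmin B hBU hB0' hBneU hBsum
    have hB0 : B ≠ 0 := by
      intro h
      have hT'C : T' = C := by
        refine le_antisymm ?_ hCT'
        rw [← tsub_eq_zero_iff_le, ← hB]; exact h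
      have hAneU : A ≠ U := fun hAu => hABU (by rw [h, hAu, add_zero])
      have hAsum : A.sum = 0 := by
        have h1 : A.sum + T'.sum = T.sum := by
          rw [← hACsum, hT'C]
        rw [hsum] at h1
        have := add_right_cancel (h1.trans (zero_add T'.sum).symm)
        exact this
      exact hUmin A hAU hA0 hAneU hAsum
    have hcardAB : Multiset.card A + Multiset.card B < Multiset.card U := by
      have := Multiset.card_lt_card hABlt
      rwa [Multiset.card_add] at this
    have hcA1 : 0 < Multiset.card A := Multiset.card_pos.mpr hA0
    have hcB1 : 0 < Multiset.card B := Multiset.card_pos.mpr hB0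
    have hU3 : 3 ≤ Multiset.card U := by omega
    have h0U : (0 : G) ∉ U := by
      intro h
      exact hUmin {0} (Multiset.singleton_le.mpr h) (by simp)
        (by
          intro hEq
          rw [← hEq] at hU3
          simp at hU3)
        (by simp)
    have h0V : (0 : G) ∉ V := by
      rw [hVU]
      intro h
      obtain ⟨x, hx, hx0⟩ := Multiset.mem_map.mp h
      have hx' : x = 0 := neg_eq_zero.mp hx0
      exact h0U (hx' ▸ hx)
    set Q := A + B.map (fun x => -x) with hQdef
    set R := (U - A) + (U - B).map (fun x => -x) with hRdef
    have hQR : Q + R = U + V := by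
      rw [hQdef, hRdef, add_add_add_comm, ← Multiset.map_add,
        add_tsub_cancel_of_le hAU, add_tsub_cancel_of_le hBU, ← hVU]
    have hQsum : Q.sum = 0 := by
      rw [hQdef, Multiset.sum_add, aux_sum_map_neg, hsAB]
      simp
    have hRsum : R.sum = 0 := by
      rw [hRdef, Multiset.sum_add, aux_sum_map_neg, aux_sum_sub hAU, aux_sum_sub hBU,
        hUsum, hsAB]
      abel
    obtain ⟨z₁, hz₁min, hz₁sum⟩ := aux_exists_fact (Multiset.card Q) Q le_rfl hQsum
    obtain ⟨z₂, hz₂min, hz₂sum⟩ := aux_exists_fact (Multiset.card R) R le_rfl hRsum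
    have hQ0 : Q ≠ 0 := by
      intro h
      apply hA0
      have hAQ : A ≤ Q := Multiset.le_add_right _ _
      rw [h] at hAQ
      exact Multiset.le_zero.mp hAQ
    have hUA0 : U - A ≠ 0 := by
      rw [Ne, tsub_eq_zero_iff_le]
      intro h
      have := Multiset.card_le_card h
      omega
    have hR0 : R ≠ 0 := by
      intro h
      apply hUA0
      have hle : U - A ≤ R := Multiset.le_add_right _ _
      rw [h] at hle
      exact Multiset.le_zero.mp hle
    have hz₁0 : z₁ ≠ 0 := by
      intro h
      rw [h, Multiset.sum_zero] at hz₁sum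
      exact hQ0 hz₁sum.symm
    have hz₂0 : z₂ ≠ 0 := by
      intro h
      rw [h, Multiset.sum_zero] at hz₂sum
      exact hR0 hz₂sum.symm
    have hallmin : ∀ S ∈ z₁ + z₂, IsMinZeroSum S := by
      intro S hSm
      rcases Multiset.mem_add.mp hSm with h | h
      exacts [hz₁min S h, hz₂min S h]
    have hzsum : (z₁ + z₂).sum = U + V := by
      rw [Multiset.sum_add, hz₁sum, hz₂sum, hQR]
    have hmemL : Multiset.card (z₁ + z₂) ∈ LengthsSet (U + V) :=
      ⟨z₁ + z₂, rfl, hallmin, hzsum⟩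
    rw [hL] at hmemL
    simp only [Set.mem_insert_iff, Set.mem_singleton_iff] at hmemL
    rcases hmemL with hlen | hlen
    · -- length 2 factorization : R is a minimal zero-sum sequence
      have hc1 : 0 < Multiset.card z₁ := Multiset.card_pos.mpr hz₁0
      have hc2 : 0 < Multiset.card z₂ := Multiset.card_pos.mpr hz₂0
      rw [Multiset.card_add] at hlen
      have hz₂1 : Multiset.card z₂ = 1 := by omega
      obtain ⟨R₀, hR₀⟩ := Multiset.card_eq_one.mp hz₂1
      have hRR₀ : R = R₀ := by rw [← hz₂sum, hR₀, Multiset.sum_singleton]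
      have hRmin : IsMinZeroSum R := by
        rw [hRR₀]
        exact hz₂min R₀ (hR₀ ▸ Multiset.mem_singleton_self R₀)
      have hBle : B ≤ U - A := by
        rw [Multiset.le_iff_count]
        intro x
        simp only [Multiset.count_sub]
        have hc := Multiset.count_le_of_le x hABle
        rw [Multiset.count_add] at hc
        have h3 := key x
        omega
      have hAle : A ≤ U - B := by
        rw [Multiset.le_iff_count]
        intro x
        simp only [Multiset.count_sub]
        have hc := Multiset.count_le_of_le x hABle
        rw [Multiset.count_add] at hc
        have h3 := key x
        omega
      have hQ'le : B + A.map (fun x => -x) ≤ R := by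
        rw [hRdef]
        exact add_le_add hBle (Multiset.map_le_map hAle)
      have hQ'sum : (B + A.map (fun x => -x)).sum = 0 := by
        rw [Multiset.sum_add, aux_sum_map_neg, hsAB]
        simp
      have hQ'0 : B + A.map (fun x => -x) ≠ 0 := by
        intro h
        apply hB0
        have hle : B ≤ B + A.map (fun x => -x) := Multiset.le_add_right _ _
        rw [h] at hle
        exact Multiset.le_zero.mp hle
      have hQ'ne : B + A.map (fun x => -x) ≠ R := by
        intro h
        have hcc := congrArg Multiset.card h
        rw [Multiset.card_add, Multiset.card_map, hRdef, Multiset.card_add,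
          Multiset.card_map] at hcc
        have c1 : Multiset.card (U - A) + Multiset.card A = Multiset.card U := by
          rw [← Multiset.card_add, tsub_add_cancel_of_le hAU]
        have c2 : Multiset.card (U - B) + Multiset.card B = Multiset.card U := by
          rw [← Multiset.card_add, tsub_add_cancel_of_le hBU]
        omega
      exact hRmin.2.2 _ hQ'le hQ'0 hQ'ne hQ'sum
    · -- length D-1 factorization : all factors are pairs {x, -x}
      have hcards : ∀ S ∈ z₁ + z₂, 2 ≤ Multiset.card S := by
        intro S hSm
        have hSmin := hallmin S hSm
        have h1 : 0 < Multiset.card S := Multiset.card_pos.mpr hSmin.1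
        by_contra hlt
        have hone : Multiset.card S = 1 := by omega
        obtain ⟨a, ha⟩ := Multiset.card_eq_one.mp hone
        have ha0 : a = 0 := by
          have := hSmin.2.1
          rw [ha, Multiset.sum_singleton] at this
          exact this
        have haU : a ∈ U + V := by
          have hSle : S ≤ (z₁ + z₂).sum := aux_le_sum hSm
          rw [hzsum] at hSle
          exact Multiset.mem_of_le hSle (ha ▸ Multiset.mem_singleton_self a)
        rcases Multiset.mem_add.mp haU with h | h
        · exact h0U (ha0 ▸ h)
        · exact h0V (ha0 ▸ h)
      have htot : ((z₁ + z₂).map Multiset.card).sum = 2 * Multiset.card (z₁ + z₂) := by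
        rw [← aux_card_sum, hzsum, Multiset.card_add, hcU, hcV, hlen]
        ring
      have hall2 : ∀ S ∈ z₁ + z₂, Multiset.card S = 2 := by
        intro S hSm
        have hmem2 : Multiset.card S ∈ (z₁ + z₂).map Multiset.card :=
          Multiset.mem_map_of_mem _ hSm
        refine aux_all_two _ ?_ (by rw [Multiset.card_map]; exact htot) _ hmem2
        intro x hx
        obtain ⟨S', hS', rfl⟩ := Multiset.mem_map.mp hx
        exact hcards S' hS'
      obtain ⟨S₁, hS₁mem⟩ := Multiset.exists_mem_of_ne_zero hz₁0
      have hS₁min := hz₁min S₁ hS₁mem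
      have hS₁c : Multiset.card S₁ = 2 :=
        hall2 S₁ (Multiset.mem_add.mpr (Or.inl hS₁mem))
      have hS₁Q : S₁ ≤ A + B.map (fun x => -x) := by
        have := aux_le_sum hS₁mem
        rw [hz₁sum, hQdef] at this
        exact this
      obtain ⟨P₁, P₂, hP₁, hP₂, hS₁dec⟩ := aux_decomp hS₁Q
      have hPc : Multiset.card P₁ + Multiset.card P₂ = 2 := by
        rw [← Multiset.card_add, ← hS₁dec, hS₁c]
      have h012 : Multiset.card P₁ = 0 ∨ Multiset.card P₁ = 1 ∨ Multiset.card P₁ = 2 := by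
        omega
      rcases h012 with h | h | h
      · -- S₁ ≤ B.map neg : map back to get a zero-sum inside B ≤ U
        have hP₁0 : P₁ = 0 := Multiset.card_eq_zero.mp h
        have hS₁P₂ : S₁ = P₂ := by rw [hS₁dec, hP₁0, zero_add]
        have hle : S₁.map (fun x => -x) ≤ B := by
          have h1 := Multiset.map_le_map (f := fun x : G => -x) (hS₁P₂ ▸ hP₂)
          simpa [Multiset.map_map, Function.comp] using h1
        refine hUmin (S₁.map (fun x => -x)) (le_trans hle hBU) ?_ ?_ ?_
        · intro hz
          have := congrArg Multiset.card hz
          rw [Multiset.card_map, hS₁c] at this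
          simp at this
        · intro hEq
          have := congrArg Multiset.card hEq
          rw [Multiset.card_map, hS₁c] at this
          omega
        · rw [aux_sum_map_neg, hS₁min.2.1, neg_zero]
      · -- one element in A, one in -B : contradicts A ∩ B = 0
        obtain ⟨u, hu⟩ := Multiset.card_eq_one.mp h
        have hP₂c : Multiset.card P₂ = 1 := by omega
        obtain ⟨v, hv⟩ := Multiset.card_eq_one.mp hP₂c
        have hsum0 : u + v = 0 := by
          have := hS₁min.2.1
          rw [hS₁dec, hu, hv] at this
          simpa using this
        have huA : u ∈ A := Multiset.mem_of_le hP₁ (hu ▸ Multiset.mem_singleton_self u)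
        have hvB : v ∈ B.map (fun x => -x) :=
          Multiset.mem_of_le hP₂ (hv ▸ Multiset.mem_singleton_self v)
        obtain ⟨b, hbB, hbv⟩ := Multiset.mem_map.mp hvB
        have hvu : v = -u := eq_neg_of_add_eq_zero_right hsum0
        have hbu : b = u := by
          apply neg_injective
          rw [hbv, hvu]
        have hmem : u ∈ A ∩ B := Multiset.mem_inter.mpr ⟨huA, hbu ▸ hbB⟩
        have hAB0 : A ∩ B = 0 := by
          ext x
          rw [Multiset.count_inter, Multiset.count_zero]
          have h3 := key x
          omega
        rw [hAB0] at hmem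
        exact Multiset.notMem_zero u hmem
      · -- S₁ ≤ A : zero-sum inside A ≤ U
        have hP₂0 : P₂ = 0 := Multiset.card_eq_zero.mp (by omega)
        have hS₁P₁ : S₁ = P₁ := by rw [hS₁dec, hP₂0, add_zero]
        refine hUmin S₁ (le_trans (hS₁P₁ ▸ hP₁) hAU) ?_ ?_ hS₁min.2.1
        · intro hz
          have := congrArg Multiset.card hz
          rw [hS₁c] at this
          simp at this
        · intro hEq
          have := congrArg Multiset.card hEq
          rw [hS₁c] at this
          omega
end

section
/- Let G be a finite abelian group with |G| ≥ 3. If S is a zero-sum free sequence over G of length |S| = D(G) - 1, then the set of subsequence sums Σ(S) equals G \ {0}. -/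
open Multiset

section Aux
variable {G : Type*} [AddCommGroup G]

/-- A minimal zero-sum sequence has length at most `|G|`. -/
lemma minZeroSum_card_le [Fintype G] (S : Multiset G) (h : IsMinZeroSum S) :
    Multiset.card S ≤ Fintype.card G := by
  classical
  obtain ⟨l, rfl⟩ : ∃ l : List G, (↑l : Multiset G) = S := ⟨S.toList, Multiset.coe_toList S⟩
  set n := l.length with hn
  set f : Fin n → G := fun i => (l.take ((i : ℕ) + 1)).sum with hf
  have key : ∀ i j : Fin n, i < j → f i ≠ f j := by
    intro i j hij heq
    set seg : List G := (l.drop ((i : ℕ) + 1)).take ((j : ℕ) - (i : ℕ)) with hseg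
    have hsplit : l.take ((j : ℕ) + 1) = l.take ((i : ℕ) + 1) ++ seg := by
      have hji : (j : ℕ) + 1 = ((i : ℕ) + 1) + ((j : ℕ) - (i : ℕ)) := by
        have : (i : ℕ) < (j : ℕ) := hij
        omega
      rw [hji, List.take_add]
    have hsum : seg.sum = 0 := by
      have h1 : f j = f i + seg.sum := by
        simp only [hf, hsplit, List.sum_append]
      rw [heq] at h1
      exact (left_eq_add.mp h1)
    have hlen : seg.length = (j : ℕ) - (i : ℕ) := by
      have hjn : (j : ℕ) < n := j.isLt
      simp only [hseg, List.length_take, List.length_drop]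
      omega
    have hij' : (i : ℕ) < (j : ℕ) := hij
    have hle : (↑seg : Multiset G) ≤ ↑l :=
      (((List.take_sublist _ _).trans (List.drop_sublist _ _)).subperm : _ ≤ _)
    have hne0 : (↑seg : Multiset G) ≠ 0 := by
      intro h0
      have : Multiset.card (↑seg : Multiset G) = 0 := by rw [h0]; simp
      rw [Multiset.coe_card, hlen] at this
      omega
    have hneS : (↑seg : Multiset G) ≠ ↑l := by
      intro hEq
      have : Multiset.card (↑seg : Multiset G) = Multiset.card (↑l : Multiset G) := by rw [hEq]
      rw [Multiset.coe_card, Multiset.coe_card, hlen] at this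
      have hjn : (j : ℕ) < n := j.isLt
      omega
    exact h.2.2 ↑seg hle hne0 hneS hsum
  have hinj : Function.Injective f := by
    intro i j hEq
    rcases lt_trichotomy i j with h' | h' | h'
    · exact absurd hEq (key i j h')
    · exact h'
    · exact absurd hEq.symm (key j i h')
  have := Fintype.card_le_of_injective f hinj
  simpa using this

/-- Appending the negative of the sum to a zero-sum free sequence gives a
minimal zero-sum sequence. -/
lemma cons_neg_sum_isMinZeroSum (T : Multiset G)
    (h : ∀ U ≤ T, U ≠ 0 → U.sum ≠ 0) : IsMinZeroSum ((-T.sum) ::ₘ T) := by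
  classical
  refine ⟨Multiset.cons_ne_zero, by simp, ?_⟩
  intro U hU hU0 hUne hsum0
  by_cases hmem : -T.sum ∈ U
  · have hU' : U.erase (-T.sum) ≤ T := Multiset.erase_le_iff_le_cons.mpr hU
    have hUeq : (-T.sum) ::ₘ U.erase (-T.sum) = U := Multiset.cons_erase hmem
    have hsum' : (U.erase (-T.sum)).sum = T.sum := by
      rw [← hUeq, Multiset.sum_cons] at hsum0
      have := neg_add_eq_zero.mp hsum0
      linear_combination (norm := abel) this.symm
    set V := T - U.erase (-T.sum) with hV
    have hTeq : U.erase (-T.sum) + V = T := add_tsub_cancel_of_le hU'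
    have hVsum : V.sum = 0 := by
      have := congrArg Multiset.sum hTeq
      rw [Multiset.sum_add, hsum'] at this
      exact (left_eq_add.mp this.symm)
    have hV0 : V ≠ 0 := by
      intro h0
      apply hUne
      rw [h0, add_zero] at hTeq
      rw [← hUeq, hTeq]
    exact h V (Multiset.sub_le_self _ _) hV0 hVsum
  · exact h U ((Multiset.le_cons_of_notMem hmem).mp hU) hU0 hsum0

lemma mem_davenportSet_le [Fintype G] {n : ℕ}
    (hn : n ∈ {n : ℕ | ∃ S : Multiset G, IsMinZeroSum S ∧ Multiset.card S = n}) :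
    n ≤ DavenportConstant G := by
  apply le_csSup
  · exact ⟨Fintype.card G, fun m ⟨S, hS, hc⟩ => hc ▸ minZeroSum_card_le S hS⟩
  · exact hn

lemma two_le_davenport [Fintype G] (hG : 3 ≤ Fintype.card G) :
    2 ≤ DavenportConstant G := by
  have : Nontrivial G := Fintype.one_lt_card_iff_nontrivial.mp (by omega)
  obtain ⟨a, ha⟩ := exists_ne (0 : G)
  apply mem_davenportSet_le
  refine ⟨a ::ₘ {-a}, ⟨Multiset.cons_ne_zero, by simp, ?_⟩, by simp⟩
  intro T hT hT0 hTne
  have hc2 : Multiset.card (a ::ₘ ({-a} : Multiset G)) = 2 := by simp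
  have hcle : Multiset.card T ≤ 2 := by
    have := Multiset.card_le_card hT
    omega
  have hc1 : Multiset.card T = 1 := by
    rcases Nat.lt_or_ge (Multiset.card T) 2 with h' | h'
    · have : Multiset.card T ≠ 0 := fun h0 => hT0 (Multiset.card_eq_zero.mp h0)
      omega
    · exfalso
      exact hTne (Multiset.eq_of_le_of_card_le hT (by omega))
  obtain ⟨x, rfl⟩ := Multiset.card_eq_one.mp hc1
  have hx : x ∈ (a ::ₘ ({-a} : Multiset G)) := Multiset.mem_of_le hT (by simp)
  simp only [Multiset.mem_cons, Multiset.mem_singleton] at hx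
  rcases hx with rfl | rfl
  · simpa using ha
  · simp only [Multiset.sum_singleton, ne_eq, neg_eq_zero]
    exact ha

end Aux

theorem statement16 {G : Type*} [AddCommGroup G] [Fintype G]
    (hG : 3 ≤ Fintype.card G)
    (S : Multiset G) (hS : ∀ T ≤ S, T ≠ 0 → T.sum ≠ 0)
    (hcard : Multiset.card S = DavenportConstant G - 1) :
    {g : G | ∃ T ≤ S, T ≠ 0 ∧ T.sum = g} = {g : G | g ≠ 0} := by
  classical
  have hD2 : 2 ≤ DavenportConstant G := two_le_davenport hG
  ext g
  simp only [Set.mem_setOf_eq]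
  constructor
  · rintro ⟨T, hT, hT0, rfl⟩
    exact hS T hT hT0
  · intro hg
    by_contra hc
    push_neg at hc
    -- S' = (-g) ::ₘ S is zero-sum free
    have hS' : ∀ U ≤ (-g) ::ₘ S, U ≠ 0 → U.sum ≠ 0 := by
      intro U hU hU0 hUsum
      by_cases hmem : -g ∈ U
      · have hUerase : U.erase (-g) ≤ S := Multiset.erase_le_iff_le_cons.mpr hU
        have hUeq : (-g) ::ₘ U.erase (-g) = U := Multiset.cons_erase hmem
        have hsum' : (U.erase (-g)).sum = g := by
          rw [← hUeq, Multiset.sum_cons] at hUsum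
          have := neg_add_eq_zero.mp hUsum
          linear_combination (norm := abel) this.symm
        have hne0 : U.erase (-g) ≠ 0 := by
          intro h0
          rw [h0, Multiset.sum_zero] at hsum'
          exact hg hsum'.symm
        exact hc (U.erase (-g)) hUerase hne0 hsum'
      · exact hS U ((Multiset.le_cons_of_notMem hmem).mp hU) hU0 hUsum
    -- then we get a minimal zero-sum sequence of length D + 1
    have hmin := cons_neg_sum_isMinZeroSum ((-g) ::ₘ S) hS'
    have hle := mem_davenportSet_le ⟨_, hmin, rfl⟩
    simp only [Multiset.card_cons, hcard] at hle
    omega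
end
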